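/- arXiv:1504.02811 — 8 statements merged into one kernel-verified Lean document; each statement's English description precedes it below -/
import Mathlib

section
/- Assume that neither a nor b is an eigenvalue of T(·), i.e., the matrices T(a) and T(b) are invertible. Then the interval J = (a,b) is of positive type if and only if T(a) is negative definite and T(b) is positive definite. -/
open Matrix Set
open scoped ComplexOrder

lemma herm_quadform_im_zero {n : ℕ} {M : Matrix (Fin n) (Fin n) ℂ}
    (hM : M.IsHermitian) (x : Fin n → ℂ) : (star x ⬝ᵥ M *ᵥ x).im = 0 := by
  have h1 : star x ⬝ᵥ M *ᵥ x = star (star (M *ᵥ x) ⬝ᵥ x) := star_dotProduct _ _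
  have h2 : star (M *ᵥ x) ⬝ᵥ x = star x ⬝ᵥ M *ᵥ x := by
    rw [star_mulVec, hM.eq]
    exact (dotProduct_mulVec _ _ _).symm
  have h3 : star x ⬝ᵥ M *ᵥ x = star (star x ⬝ᵥ M *ᵥ x) := by
    conv_lhs => rw [h1, h2]
  have := congrArg Complex.im h3
  simp only [Complex.star_def, Complex.conj_im] at this
  linarith

/-- Assuming neither `a` nor `b` is an eigenvalue of `T(·)`
(i.e. `T a`, `T b` are invertible), the interval `J = (a,b)` is of positive type
if and only if `T a` is negative definite and `T b` is positive definite. -/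
theorem interval_positive_type_iff_endpoints_definite
    (n : ℕ) (hn : 1 ≤ n) (a b : ℝ) (hab : a < b)
    (T : ℝ → Matrix (Fin n) (Fin n) ℂ)
    (hTcont : ContinuousOn T (Set.Icc a b))
    (hTherm : ∀ μ ∈ Set.Icc a b, (T μ).IsHermitian)
    (ρ : (Fin n → ℂ) → ℝ)
    (hρcont : ContinuousOn ρ {x : Fin n → ℂ | x ≠ 0})
    (hρmem : ∀ x : Fin n → ℂ, x ≠ 0 → ρ x ∈ Set.Ioo a b)
    (hρroot : ∀ x : Fin n → ℂ, x ≠ 0 → star x ⬝ᵥ (T (ρ x)) *ᵥ x = 0)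
    (hρuniq : ∀ x : Fin n → ℂ, x ≠ 0 → ∀ μ ∈ Set.Ioo a b,
      star x ⬝ᵥ (T μ) *ᵥ x = 0 → μ = ρ x)
    (hTa : IsUnit (T a)) (hTb : IsUnit (T b)) :
    (∀ x : Fin n → ℂ, x ≠ 0 → ∀ μ ∈ Set.Ioo a b, μ ≠ ρ x →
        0 < (μ - ρ x) * (star x ⬝ᵥ (T μ) *ᵥ x).re) ↔
      ((-(T a)).PosDef ∧ (T b).PosDef) := by
  have hamem : a ∈ Set.Icc a b := Set.left_mem_Icc.mpr hab.le
  have hbmem : b ∈ Set.Icc a b := Set.right_mem_Icc.mpr hab.le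
  have him : ∀ μ ∈ Set.Icc a b, ∀ x : Fin n → ℂ,
      (star x ⬝ᵥ T μ *ᵥ x).im = 0 := fun μ hμ x =>
    herm_quadform_im_zero (hTherm μ hμ) x
  have fcont : ∀ x : Fin n → ℂ,
      ContinuousOn (fun μ => (star x ⬝ᵥ T μ *ᵥ x).re) (Set.Icc a b) := by
    intro x
    have hg : Continuous fun M : Matrix (Fin n) (Fin n) ℂ => star x ⬝ᵥ M *ᵥ x :=
      continuous_const.dotProduct (continuous_id.matrix_mulVec continuous_const)
    exact Complex.continuous_re.comp_continuousOn (hg.comp_continuousOn hTcont)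
  -- characterization of zeros via real part
  have hroot_re : ∀ x : Fin n → ℂ, x ≠ 0 → ∀ ν ∈ Set.Ioo a b,
      (star x ⬝ᵥ T ν *ᵥ x).re = 0 → ν = ρ x := by
    intro x hx ν hν hre
    refine hρuniq x hx ν hν ?_
    have := him ν (Set.mem_Icc_of_Ioo hν) x
    exact Complex.ext (by simpa using hre) (by simpa using this)
  constructor
  · intro h
    -- f a ≤ 0 and f b ≥ 0 for every nonzero x
    have hfa : ∀ x : Fin n → ℂ, x ≠ 0 → (star x ⬝ᵥ T a *ᵥ x).re ≤ 0 := by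
      intro x hx
      have hr := hρmem x hx
      have hclos : a ∈ closure (Set.Ioo a (ρ x)) := by
        rw [closure_Ioo (ne_of_lt hr.1)]
        exact Set.left_mem_Icc.mpr hr.1.le
      have hne : (nhdsWithin a (Set.Ioo a (ρ x))).NeBot :=
        mem_closure_iff_nhdsWithin_neBot.mp hclos
      have htend : Filter.Tendsto (fun μ => (star x ⬝ᵥ T μ *ᵥ x).re)
          (nhdsWithin a (Set.Ioo a (ρ x))) (nhds ((star x ⬝ᵥ T a *ᵥ x).re)) :=
        ((fcont x a hamem).mono (fun μ hμ =>
          ⟨hμ.1.le, hμ.2.le.trans hr.2.le⟩)).tendsto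
      refine le_of_tendsto htend (Filter.eventually_of_mem self_mem_nhdsWithin ?_)
      intro μ hμ
      have hμab : μ ∈ Set.Ioo a b := ⟨hμ.1, hμ.2.trans hr.2⟩
      have hprod := h x hx μ hμab (ne_of_lt hμ.2)
      nlinarith [hprod, hμ.2]
    have hfb : ∀ x : Fin n → ℂ, x ≠ 0 → 0 ≤ (star x ⬝ᵥ T b *ᵥ x).re := by
      intro x hx
      have hr := hρmem x hx
      have hclos : b ∈ closure (Set.Ioo (ρ x) b) := by
        rw [closure_Ioo (ne_of_lt hr.2)]
        exact Set.right_mem_Icc.mpr hr.2.le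
      have hne : (nhdsWithin b (Set.Ioo (ρ x) b)).NeBot :=
        mem_closure_iff_nhdsWithin_neBot.mp hclos
      have htend : Filter.Tendsto (fun μ => (star x ⬝ᵥ T μ *ᵥ x).re)
          (nhdsWithin b (Set.Ioo (ρ x) b)) (nhds ((star x ⬝ᵥ T b *ᵥ x).re)) :=
        ((fcont x b hbmem).mono (fun μ hμ =>
          ⟨hr.1.le.trans hμ.1.le, hμ.2.le⟩)).tendsto
      refine ge_of_tendsto htend (Filter.eventually_of_mem self_mem_nhdsWithin ?_)
      intro μ hμ
      have hμab : μ ∈ Set.Ioo a b := ⟨hr.1.trans hμ.1, hμ.2⟩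
      have hprod := h x hx μ hμab (ne_of_gt hμ.1)
      nlinarith [hprod, hμ.1]
    -- negative semidefiniteness at a
    have hsemiA : (-(T a)).PosSemidef := by
      refine posSemidef_iff_dotProduct_mulVec.mpr ⟨(hTherm a hamem).neg, fun x => ?_⟩
      by_cases hx : x = 0
      · simp [hx]
      · rw [Complex.le_def]
        constructor
        · have := hfa x hx
          simp only [neg_mulVec, dotProduct_neg, Complex.neg_re, Complex.zero_re]
          linarith
        · have := him a hamem x
          simp only [neg_mulVec, dotProduct_neg, Complex.neg_im, Complex.zero_im]
          linarith
    have hsemiB : (T b).PosSemidef := by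
      refine posSemidef_iff_dotProduct_mulVec.mpr ⟨hTherm b hbmem, fun x => ?_⟩
      by_cases hx : x = 0
      · simp [hx]
      · rw [Complex.le_def]
        exact ⟨by simpa using hfb x hx, by simpa using (him b hbmem x).symm⟩
    constructor
    · refine posDef_iff_dotProduct_mulVec.mpr ⟨hsemiA.1, fun x hx => ?_⟩
      refine lt_of_le_of_ne ((posSemidef_iff_dotProduct_mulVec.mp hsemiA).2 x) fun hzero => ?_
      have hker := (hsemiA.dotProduct_mulVec_zero_iff x).mp hzero.symm
      have hinj := Matrix.mulVec_injective_iff_isUnit.mpr hTa.neg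
      exact hx (by simpa using hinj (show (-(T a)) *ᵥ x = (-(T a)) *ᵥ 0 by
        simpa using hker))
    · refine posDef_iff_dotProduct_mulVec.mpr ⟨hsemiB.1, fun x hx => ?_⟩
      refine lt_of_le_of_ne ((posSemidef_iff_dotProduct_mulVec.mp hsemiB).2 x) fun hzero => ?_
      have hker := (hsemiB.dotProduct_mulVec_zero_iff x).mp hzero.symm
      have hinj := Matrix.mulVec_injective_iff_isUnit.mpr hTb
      exact hx (by simpa using hinj (show (T b) *ᵥ x = (T b) *ᵥ 0 by
        simpa using hker))
  · rintro ⟨hA, hB⟩ x hx μ hμ hμne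
    have hr := hρmem x hx
    have hfa : (star x ⬝ᵥ T a *ᵥ x).re < 0 := by
      have := (posDef_iff_dotProduct_mulVec.mp hA).2 hx
      rw [Complex.lt_def] at this
      have hre := this.1
      simp only [neg_mulVec, dotProduct_neg, Complex.neg_re, Complex.zero_re] at hre
      linarith
    have hfb : 0 < (star x ⬝ᵥ T b *ᵥ x).re := by
      have := (posDef_iff_dotProduct_mulVec.mp hB).2 hx
      rw [Complex.lt_def] at this
      simpa using this.1
    have hfμne : (star x ⬝ᵥ T μ *ᵥ x).re ≠ 0 := fun h0 => hμne (hroot_re x hx μ hμ h0)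
    rcases lt_or_gt_of_ne hμne with hlt | hgt
    · -- μ < ρ x : show f μ < 0
      have hneg : (star x ⬝ᵥ T μ *ᵥ x).re < 0 := by
        rcases lt_or_gt_of_ne hfμne with h' | h'
        · exact h'
        · exfalso
          have hsub : Set.Icc a μ ⊆ Set.Icc a b := Set.Icc_subset_Icc le_rfl hμ.2.le
          have hiv := intermediate_value_Ioo (le_of_lt hμ.1) ((fcont x).mono hsub)
          have h0mem : (0 : ℝ) ∈ Set.Ioo ((star x ⬝ᵥ T a *ᵥ x).re)
              ((star x ⬝ᵥ T μ *ᵥ x).re) := ⟨hfa, h'⟩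
          obtain ⟨ν, hν, hν0⟩ := hiv h0mem
          have hνab : ν ∈ Set.Ioo a b := ⟨hν.1, hν.2.trans hμ.2⟩
          have := hroot_re x hx ν hνab hν0
          exact absurd this (by linarith [hν.2, hlt])
      have : μ - ρ x < 0 := by linarith
      exact mul_pos_of_neg_of_neg this hneg
    · -- μ > ρ x : show f μ > 0
      have hpos : 0 < (star x ⬝ᵥ T μ *ᵥ x).re := by
        rcases lt_or_gt_of_ne hfμne with h' | h'
        · exfalso
          have hsub : Set.Icc μ b ⊆ Set.Icc a b := Set.Icc_subset_Icc hμ.1.le le_rfl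
          have hiv := intermediate_value_Ioo (le_of_lt hμ.2) ((fcont x).mono hsub)
          have h0mem : (0 : ℝ) ∈ Set.Ioo ((star x ⬝ᵥ T μ *ᵥ x).re)
              ((star x ⬝ᵥ T b *ᵥ x).re) := ⟨h', hfb⟩
          obtain ⟨ν, hν, hν0⟩ := hiv h0mem
          have hνab : ν ∈ Set.Ioo a b := ⟨hμ.1.trans hν.1, hν.2⟩
          have := hroot_re x hx ν hνab hν0
          exact absurd this (by linarith [hν.1, hgt])
        · exact h'
      have : 0 < μ - ρ x := by linarith
      exact mul_pos this hpos
end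

section
/- Assume that neither a nor b is an eigenvalue of T(·), i.e., the matrices T(a) and T(b) are invertible. Then the interval J = (a,b) is of negative type if and only if T(a) is positive definite and T(b) is negative definite. -/
open Matrix Set
open scoped ComplexOrder

private lemma herm_star_eq {n : ℕ} {M : Matrix (Fin n) (Fin n) ℂ} (h : M.IsHermitian)
    (x : Fin n → ℂ) : star (star x ⬝ᵥ M *ᵥ x) = star x ⬝ᵥ M *ᵥ x := by
  calc star (star x ⬝ᵥ M *ᵥ x) = star (M *ᵥ x) ⬝ᵥ x := (star_dotProduct _ _).symm
    _ = star x ᵥ* Mᴴ ⬝ᵥ x := by rw [star_mulVec]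
    _ = star x ⬝ᵥ Mᴴ *ᵥ x := (dotProduct_mulVec _ _ _).symm
    _ = star x ⬝ᵥ M *ᵥ x := by rw [h.eq]

private lemma herm_im_zero {n : ℕ} {M : Matrix (Fin n) (Fin n) ℂ} (h : M.IsHermitian)
    (x : Fin n → ℂ) : (star x ⬝ᵥ M *ᵥ x).im = 0 :=
  Complex.conj_eq_iff_im.mp (herm_star_eq h x)

private lemma quad_cont {n : ℕ} (x : Fin n → ℂ) :
    Continuous fun M : Matrix (Fin n) (Fin n) ℂ => star x ⬝ᵥ M *ᵥ x := by
  simp only [dotProduct, mulVec]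
  exact continuous_finset_sum _ fun i _ => continuous_const.mul
    (continuous_finset_sum _ fun j _ =>
      (continuous_apply_apply i j).mul continuous_const)

private lemma posDef_of_posSemidef_isUnit {n : ℕ} {M : Matrix (Fin n) (Fin n) ℂ}
    (h : M.PosSemidef) (hu : IsUnit M) : M.PosDef := by
  refine posDef_iff_dotProduct_mulVec.mpr
    ⟨h.1, fun x hx => lt_of_le_of_ne ((posSemidef_iff_dotProduct_mulVec.mp h).2 x) fun heq => hx ?_⟩
  have hdet : M.det ≠ 0 := by
    have := (Matrix.isUnit_iff_isUnit_det M).mp hu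
    exact isUnit_iff_ne_zero.mp this
  exact Matrix.eq_zero_of_mulVec_eq_zero hdet
    ((h.dotProduct_mulVec_zero_iff x).mp heq.symm)

/-- Assuming neither `a` nor `b` is an eigenvalue of `T(·)`
(i.e. `T a`, `T b` are invertible), the interval `J = (a,b)` is of negative type
if and only if `T a` is positive definite and `T b` is negative definite. -/
theorem interval_negative_type_iff_endpoints_definite
    (n : ℕ) (hn : 1 ≤ n) (a b : ℝ) (hab : a < b)
    (T : ℝ → Matrix (Fin n) (Fin n) ℂ)
    (hTcont : ContinuousOn T (Set.Icc a b))
    (hTherm : ∀ μ ∈ Set.Icc a b, (T μ).IsHermitian)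
    (ρ : (Fin n → ℂ) → ℝ)
    (hρcont : ContinuousOn ρ {x : Fin n → ℂ | x ≠ 0})
    (hρmem : ∀ x : Fin n → ℂ, x ≠ 0 → ρ x ∈ Set.Ioo a b)
    (hρroot : ∀ x : Fin n → ℂ, x ≠ 0 → star x ⬝ᵥ (T (ρ x)) *ᵥ x = 0)
    (hρuniq : ∀ x : Fin n → ℂ, x ≠ 0 → ∀ μ ∈ Set.Ioo a b,
      star x ⬝ᵥ (T μ) *ᵥ x = 0 → μ = ρ x)
    (hTa : IsUnit (T a)) (hTb : IsUnit (T b)) :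
    (∀ x : Fin n → ℂ, x ≠ 0 → ∀ μ ∈ Set.Ioo a b, μ ≠ ρ x →
        (μ - ρ x) * (star x ⬝ᵥ (T μ) *ᵥ x).re < 0) ↔
      ((T a).PosDef ∧ (-(T b)).PosDef) := by
  have haI : a ∈ Set.Icc a b := ⟨le_refl a, hab.le⟩
  have hbI : b ∈ Set.Icc a b := ⟨hab.le, le_refl b⟩
  -- the real quadratic form and its continuity
  have hfc : ∀ x : Fin n → ℂ,
      ContinuousOn (fun μ => (star x ⬝ᵥ (T μ) *ᵥ x).re) (Set.Icc a b) := fun x =>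
    (Complex.continuous_re.comp (quad_cont x)).comp_continuousOn hTcont
  constructor
  · intro H
    constructor
    · -- T a is positive definite
      apply posDef_of_posSemidef_isUnit _ hTa
      refine posSemidef_iff_dotProduct_mulVec.mpr ⟨hTherm a haI, fun x => ?_⟩
      rcases eq_or_ne x 0 with rfl | hx
      · simp
      set f : ℝ → ℝ := fun μ => (star x ⬝ᵥ (T μ) *ᵥ x).re with hf
      have hr := hρmem x hx
      have hpos : ∀ μ ∈ Set.Ioo a (ρ x), 0 < f μ := by
        intro μ hμ
        have hμI : μ ∈ Set.Ioo a b := ⟨hμ.1, hμ.2.trans hr.2⟩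
        have := H x hx μ hμI (ne_of_lt hμ.2)
        nlinarith [this, sub_neg.mpr hμ.2]
      have htend : Filter.Tendsto f (nhdsWithin a (Set.Ioi a)) (nhds (f a)) := by
        have h1 : ContinuousWithinAt f (Set.Ioc a b) a :=
          ((hfc x).continuousWithinAt haI).mono Set.Ioc_subset_Icc_self
        have := h1.tendsto
        rwa [nhdsWithin_Ioc_eq_nhdsGT hab] at this
      have hge : 0 ≤ f a := by
        refine ge_of_tendsto htend ?_
        filter_upwards [Ioo_mem_nhdsGT_of_mem ⟨le_refl a, hr.1⟩] with μ hμ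
        exact (hpos μ hμ).le
      have him : (star x ⬝ᵥ (T a) *ᵥ x).im = 0 := herm_im_zero (hTherm a haI) x
      rw [Complex.le_def]
      simpa [him] using hge
    · -- -(T b) is positive definite
      apply posDef_of_posSemidef_isUnit _ hTb.neg
      refine posSemidef_iff_dotProduct_mulVec.mpr ⟨(hTherm b hbI).neg, fun x => ?_⟩
      rcases eq_or_ne x 0 with rfl | hx
      · simp
      set f : ℝ → ℝ := fun μ => (star x ⬝ᵥ (T μ) *ᵥ x).re with hf
      have hr := hρmem x hx
      have hneg : ∀ μ ∈ Set.Ioo (ρ x) b, f μ < 0 := by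
        intro μ hμ
        have hμI : μ ∈ Set.Ioo a b := ⟨hr.1.trans hμ.1, hμ.2⟩
        have := H x hx μ hμI (ne_of_gt hμ.1)
        nlinarith [this, sub_pos.mpr hμ.1]
      have htend : Filter.Tendsto f (nhdsWithin b (Set.Iio b)) (nhds (f b)) := by
        have h1 : ContinuousWithinAt f (Set.Ico a b) b :=
          ((hfc x).continuousWithinAt hbI).mono Set.Ico_subset_Icc_self
        have := h1.tendsto
        rwa [nhdsWithin_Ico_eq_nhdsLT hab] at this
      have hle : f b ≤ 0 := by
        refine le_of_tendsto htend ?_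
        filter_upwards [Ioo_mem_nhdsLT_of_mem ⟨hr.2, le_refl b⟩] with μ hμ
          using (hneg μ hμ).le
      have him : (star x ⬝ᵥ (T b) *ᵥ x).im = 0 := herm_im_zero (hTherm b hbI) x
      have : star x ⬝ᵥ (-(T b)) *ᵥ x = -(star x ⬝ᵥ (T b) *ᵥ x) := by
        rw [Matrix.neg_mulVec, dotProduct_neg]
      rw [this, Complex.le_def]
      constructor
      · simpa using hle
      · simp [him]
  · rintro ⟨hPa, hPb⟩ x hx μ hμ hne
    set f : ℝ → ℝ := fun ν => (star x ⬝ᵥ (T ν) *ᵥ x).re with hf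
    have hr := hρmem x hx
    have hzero : ∀ c ∈ Set.Ioo a b, f c = 0 → c = ρ x := by
      intro c hc hfc0
      apply hρuniq x hx c hc
      have him : (star x ⬝ᵥ (T c) *ᵥ x).im = 0 :=
        herm_im_zero (hTherm c ⟨hc.1.le, hc.2.le⟩) x
      exact Complex.ext hfc0 him
    rcases lt_or_gt_of_ne hne with hlt | hgt
    · -- μ < ρ x : f μ > 0
      have hfa : 0 < f a := by
        have := hPa.dotProduct_mulVec_pos hx
        exact (Complex.lt_def.mp this).1
      have hfμ : 0 < f μ := by
        by_contra hle
        push_neg at hle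
        have hcont : ContinuousOn f (Set.Icc a μ) :=
          (hfc x).mono (Set.Icc_subset_Icc le_rfl hμ.2.le)
        have hiv := intermediate_value_Icc' hμ.1.le hcont
        have h0 : (0:ℝ) ∈ Set.Icc (f μ) (f a) := ⟨hle, hfa.le⟩
        obtain ⟨c, hc, hfc0⟩ := hiv h0
        have hca : c ≠ a := fun h => by rw [h] at hfc0; exact hfa.ne' hfc0
        have hcI : c ∈ Set.Ioo a b :=
          ⟨lt_of_le_of_ne hc.1 (Ne.symm hca), lt_of_le_of_lt hc.2 hμ.2⟩
        have := hzero c hcI hfc0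
        rw [this] at hc
        exact absurd hc.2 (not_le.mpr hlt)
      exact mul_neg_of_neg_of_pos (sub_neg.mpr hlt) hfμ
    · -- μ > ρ x : f μ < 0
      have hfb : f b < 0 := by
        have := hPb.dotProduct_mulVec_pos hx
        have h1 := (Complex.lt_def.mp this).1
        have : star x ⬝ᵥ (-(T b)) *ᵥ x = -(star x ⬝ᵥ (T b) *ᵥ x) := by
          rw [Matrix.neg_mulVec, dotProduct_neg]
        rw [this] at h1
        simpa using h1
      have hfμ : f μ < 0 := by
        by_contra hle
        push_neg at hle
        have hcont : ContinuousOn f (Set.Icc μ b) :=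
          (hfc x).mono (Set.Icc_subset_Icc hμ.1.le le_rfl)
        have hiv := intermediate_value_Icc' hμ.2.le hcont
        have h0 : (0:ℝ) ∈ Set.Icc (f b) (f μ) := ⟨hfb.le, hle⟩
        obtain ⟨c, hc, hfc0⟩ := hiv h0
        have hcb : c ≠ b := fun h => by rw [h] at hfc0; exact hfb.ne hfc0
        have hcI : c ∈ Set.Ioo a b :=
          ⟨lt_of_lt_of_le hμ.1 hc.1, lt_of_le_of_ne hc.2 hcb⟩
        have := hzero c hcI hfc0
        rw [this] at hc
        exact absurd hc.1 (not_le.mpr hgt)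
      exact mul_neg_of_pos_of_neg (sub_pos.mpr hgt) hfμ
end

section
/- Assume that neither a nor b is an eigenvalue of T(·) (T(a) and T(b) are invertible) and that T is continuously differentiable on (a,b). If x*T'(ρ(x))x > 0 for every nonzero x ∈ ℂ^n, then the interval J = (a,b) is of positive type. -/
open Matrix Set
open scoped ComplexOrder

private theorem herm_quad_real {n : ℕ} (A : Matrix (Fin n) (Fin n) ℂ) (hA : A.IsHermitian)
    (x : Fin n → ℂ) : (star x ⬝ᵥ A *ᵥ x).im = 0 := by
  have h : star (star x ⬝ᵥ A *ᵥ x) = star x ⬝ᵥ A *ᵥ x := by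
    calc star (star x ⬝ᵥ A *ᵥ x) = star (star (star (A *ᵥ x) ⬝ᵥ x)) := by rw [star_dotProduct]
      _ = star (A *ᵥ x) ⬝ᵥ x := star_star _
      _ = star x ᵥ* Aᴴ ⬝ᵥ x := by rw [star_mulVec]
      _ = star x ⬝ᵥ Aᴴ *ᵥ x := (dotProduct_mulVec _ _ _).symm
      _ = star x ⬝ᵥ A *ᵥ x := by rw [hA.eq]
  have := congrArg Complex.im h
  simp at this
  linarith

private theorem sign_lemma (f : ℝ → ℝ) (a b r : ℝ) (hr : r ∈ Ioo a b)
    (hf : ContinuousOn f (Ioo a b))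
    (hfr : f r = 0) (d : ℝ) (hd : HasDerivAt f d r) (hdpos : 0 < d)
    (hne : ∀ t ∈ Ioo a b, t ≠ r → f t ≠ 0) :
    ∀ μ ∈ Ioo a b, μ ≠ r → 0 < (μ - r) * f μ := by
  have hslope : Filter.Tendsto (slope f r) (nhdsWithin r {r}ᶜ) (nhds d) :=
    hasDerivAt_iff_tendsto_slope.mp hd
  have hev : ∀ᶠ t in nhdsWithin r {r}ᶜ, 0 < slope f r t :=
    hslope.eventually (eventually_gt_nhds hdpos)
  intro μ hμ hμr
  rcases lt_or_gt_of_ne hμr with hlt | hgt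
  · have hevl : ∀ᶠ t in nhdsWithin r (Iio r), 0 < slope f r t :=
      hev.filter_mono (nhdsWithin_mono r fun t ht => Set.mem_compl_singleton_iff.mpr (ne_of_lt ht))
    have hio : Ioo μ r ∈ nhdsWithin r (Iio r) := Ioo_mem_nhdsLT_of_mem ⟨hlt, le_refl r⟩
    obtain ⟨t, hts, htio⟩ := (hevl.and (Filter.eventually_of_mem hio fun t ht => ht)).exists
    have htr : t < r := htio.2
    have hft : f t < 0 := by
      have := hts
      rw [slope_def_field, hfr] at this
      have h2 : f t / (t - r) > 0 := by simpa using this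
      rcases div_pos_iff.mp h2 with ⟨h4, h5⟩ | ⟨h4, h5⟩ <;> linarith
    have hfμneg : f μ < 0 := by
      rcases (hne μ hμ hμr).lt_or_gt with hneg | hpos
      · exact hneg
      · exfalso
        have hcont : ContinuousOn f (Icc μ t) := hf.mono fun s hs =>
          ⟨lt_of_lt_of_le hμ.1 hs.1, lt_trans (lt_of_le_of_lt hs.2 htr) hr.2⟩
        have h0 : (0:ℝ) ∈ Icc (f t) (f μ) := ⟨le_of_lt hft, le_of_lt hpos⟩
        obtain ⟨c, hc, hfc⟩ := intermediate_value_Icc' (le_of_lt htio.1) hcont h0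
        exact hne c ⟨lt_of_lt_of_le hμ.1 hc.1, lt_trans (lt_of_le_of_lt hc.2 htr) hr.2⟩
          (ne_of_lt (lt_of_le_of_lt hc.2 htr)) hfc
    have h5 : μ - r < 0 := by linarith
    exact mul_pos_of_neg_of_neg h5 hfμneg
  · have hevl : ∀ᶠ t in nhdsWithin r (Ioi r), 0 < slope f r t :=
      hev.filter_mono (nhdsWithin_mono r fun t ht => Set.mem_compl_singleton_iff.mpr (ne_of_gt ht))
    have hio : Ioo r μ ∈ nhdsWithin r (Ioi r) := Ioo_mem_nhdsGT_of_mem ⟨le_refl r, hgt⟩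
    obtain ⟨t, hts, htio⟩ := (hevl.and (Filter.eventually_of_mem hio fun t ht => ht)).exists
    have htr : r < t := htio.1
    have hft : 0 < f t := by
      have := hts
      rw [slope_def_field, hfr] at this
      have h2 : f t / (t - r) > 0 := by simpa using this
      rcases div_pos_iff.mp h2 with ⟨h4, h5⟩ | ⟨h4, h5⟩ <;> linarith
    have hfμpos : 0 < f μ := by
      rcases (hne μ hμ hμr).lt_or_gt with hneg | hpos
      · exfalso
        have hcont : ContinuousOn f (Icc t μ) := hf.mono fun s hs =>
          ⟨lt_trans hr.1 (lt_of_lt_of_le htr hs.1), lt_of_le_of_lt hs.2 hμ.2⟩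
        have h0 : (0:ℝ) ∈ Icc (f μ) (f t) := ⟨le_of_lt hneg, le_of_lt hft⟩
        obtain ⟨c, hc, hfc⟩ := intermediate_value_Icc' (le_of_lt htio.2) hcont h0
        exact hne c ⟨lt_trans hr.1 (lt_of_lt_of_le htr hc.1), lt_of_le_of_lt hc.2 hμ.2⟩
          (ne_of_gt (lt_of_lt_of_le htr hc.1)) hfc
      · exact hpos
    have h5 : 0 < μ - r := by linarith
    exact mul_pos h5 hfμpos

/-- If `T a`, `T b` are invertible, `T` is continuously differentiable on
`(a,b)` with derivative `T'`, and `x* T'(ρ(x)) x > 0` for every nonzero `x`, then the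
interval `(a,b)` is of positive type. -/
theorem interval_positive_type_of_deriv_pos
    (n : ℕ) (hn : 1 ≤ n) (a b : ℝ) (hab : a < b)
    (T T' : ℝ → Matrix (Fin n) (Fin n) ℂ)
    (hTcont : ContinuousOn T (Set.Icc a b))
    (hTherm : ∀ μ ∈ Set.Icc a b, (T μ).IsHermitian)
    (hT'deriv : ∀ μ ∈ Set.Ioo a b, ∀ i j : Fin n,
      HasDerivAt (fun t : ℝ => T t i j) (T' μ i j) μ)
    (hT'cont : ContinuousOn T' (Set.Ioo a b))
    (ρ : (Fin n → ℂ) → ℝ)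
    (hρcont : ContinuousOn ρ {x : Fin n → ℂ | x ≠ 0})
    (hρmem : ∀ x : Fin n → ℂ, x ≠ 0 → ρ x ∈ Set.Ioo a b)
    (hρroot : ∀ x : Fin n → ℂ, x ≠ 0 → star x ⬝ᵥ (T (ρ x)) *ᵥ x = 0)
    (hρuniq : ∀ x : Fin n → ℂ, x ≠ 0 → ∀ μ ∈ Set.Ioo a b,
      star x ⬝ᵥ (T μ) *ᵥ x = 0 → μ = ρ x)
    (hTa : IsUnit (T a)) (hTb : IsUnit (T b))
    (hderiv_pos : ∀ x : Fin n → ℂ, x ≠ 0 → 0 < (star x ⬝ᵥ (T' (ρ x)) *ᵥ x).re) :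
    ∀ x : Fin n → ℂ, x ≠ 0 → ∀ μ ∈ Set.Ioo a b, μ ≠ ρ x →
      0 < (μ - ρ x) * (star x ⬝ᵥ (T μ) *ᵥ x).re := by
  intro x hx
  set r := ρ x with hr
  have hrmem := hρmem x hx
  set g : ℝ → ℂ := fun t => star x ⬝ᵥ (T t) *ᵥ x with hg
  set f : ℝ → ℝ := fun t => (g t).re with hf
  -- derivative of g
  have hg_deriv : ∀ t ∈ Set.Ioo a b, HasDerivAt g (star x ⬝ᵥ (T' t) *ᵥ x) t := by
    intro t ht
    have : ∀ s : ℝ, g s = ∑ i, star x i * ∑ j, T s i j * x j := by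
      intro s; simp [hg, dotProduct, mulVec]
    have hd : HasDerivAt (fun s => ∑ i, star x i * ∑ j, T s i j * x j)
        (∑ i, star x i * ∑ j, T' t i j * x j) t := by
      apply HasDerivAt.fun_sum
      intro i _
      exact ((HasDerivAt.fun_sum fun j _ => (hT'deriv t ht i j).mul_const (x j)).const_mul
        (star x i))
    have heq : (star x ⬝ᵥ (T' t) *ᵥ x) = ∑ i, star x i * ∑ j, T' t i j * x j := by
      simp [dotProduct, mulVec]
    rw [heq]
    exact hd.congr_deriv rfl |>.congr_of_eventuallyEq (Filter.Eventually.of_forall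
      fun s => (this s).symm)
  -- derivative of f
  have hf_deriv : ∀ t ∈ Set.Ioo a b, HasDerivAt f (star x ⬝ᵥ (T' t) *ᵥ x).re t := by
    intro t ht
    exact Complex.reCLM.hasFDerivAt.comp_hasDerivAt t (hg_deriv t ht)
  have hf_cont : ContinuousOn f (Set.Ioo a b) := fun t ht =>
    ((hf_deriv t ht).continuousAt).continuousWithinAt
  have hfr : f r = 0 := by
    have := hρroot x hx
    simp [hf, hg, hr, this]
  have hne : ∀ t ∈ Set.Ioo a b, t ≠ r → f t ≠ 0 := by
    intro t ht htr hft
    apply htr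
    apply hρuniq x hx t ht
    have him : (g t).im = 0 := herm_quad_real (T t) (hTherm t (Set.mem_Icc_of_Ioo ht)) x
    have : g t = 0 := Complex.ext hft him
    exact this
  exact sign_lemma f a b r hrmem hf_cont hfr _ (hf_deriv r hrmem) (hderiv_pos x hx) hne
end

section
/- Assume that neither a nor b is an eigenvalue of T(·) (T(a) and T(b) are invertible), that T is twice continuously differentiable on (a,b), and that x*T''(ρ(x))x ≠ 0 for every nonzero x ∈ ℂ^n. Then the interval J = (a,b) is of positive type if and only if x*T'(ρ(x))x > 0 for every nonzero x ∈ ℂ^n. -/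
open Matrix Set
open scoped ComplexOrder

namespace IntervalPosAux

lemma herm_quad_real {n : ℕ} {A : Matrix (Fin n) (Fin n) ℂ} (hA : A.IsHermitian)
    (x : Fin n → ℂ) : (star x ⬝ᵥ A *ᵥ x : ℂ) = ((star x ⬝ᵥ A *ᵥ x).re : ℂ) := by
  have h : (starRingEnd ℂ) (star x ⬝ᵥ A *ᵥ x) = star x ⬝ᵥ A *ᵥ x := by
    have h1 : star (star x ⬝ᵥ A *ᵥ x) = star (A *ᵥ x) ⬝ᵥ x := (Matrix.star_dotProduct _ _).symm
    have h2 : star (A *ᵥ x) = star x ᵥ* A := by rw [Matrix.star_mulVec, hA.eq]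
    calc (starRingEnd ℂ) (star x ⬝ᵥ A *ᵥ x) = star (star x ⬝ᵥ A *ᵥ x) := rfl
      _ = star (A *ᵥ x) ⬝ᵥ x := h1
      _ = (star x ᵥ* A) ⬝ᵥ x := by rw [h2]
      _ = star x ⬝ᵥ A *ᵥ x := (Matrix.dotProduct_mulVec _ _ _).symm
  exact (Complex.conj_eq_iff_re.mp h).symm

lemma quad_hasDerivAt {n : ℕ} (x : Fin n → ℂ) {A : ℝ → Matrix (Fin n) (Fin n) ℂ}
    {B : Matrix (Fin n) (Fin n) ℂ} {μ : ℝ}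
    (h : ∀ i j, HasDerivAt (fun t : ℝ => A t i j) (B i j) μ) :
    HasDerivAt (fun t => star x ⬝ᵥ A t *ᵥ x) (star x ⬝ᵥ B *ᵥ x) μ := by
  simp only [Matrix.mulVec, dotProduct, Pi.star_apply]
  exact HasDerivAt.fun_sum fun i _ =>
    ((HasDerivAt.fun_sum fun j _ => (h i j).mul_const (x j)).const_mul _)

lemma quad_continuous {n : ℕ} (x : Fin n → ℂ) :
    Continuous fun M : Matrix (Fin n) (Fin n) ℂ => star x ⬝ᵥ M *ᵥ x := by
  simp only [Matrix.mulVec, dotProduct]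
  fun_prop

lemma pos_of_div_pos_of_pos {u v : ℝ} (hu : 0 < u) (h : 0 < v / u) : 0 < v := by
  have hv : v / u * u = v := div_mul_cancel₀ v hu.ne'
  rw [← hv]; exact mul_pos h hu

lemma neg_of_div_pos_of_neg {u v : ℝ} (hu : u < 0) (h : 0 < v / u) : v < 0 := by
  have hv : v / u * u = v := div_mul_cancel₀ v hu.ne
  rw [← hv]; exact mul_neg_of_pos_of_neg h hu

lemma neg_of_div_neg_of_pos {u v : ℝ} (hu : 0 < u) (h : v / u < 0) : v < 0 := by
  have hv : v / u * u = v := div_mul_cancel₀ v hu.ne'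
  rw [← hv]; exact mul_neg_of_neg_of_pos h hu

lemma div_pos_of_mul_pos {u v : ℝ} (hu : u ≠ 0) (h : 0 < u * v) : 0 < v / u := by
  have : v / u = (u * v) / u ^ 2 := by field_simp
  rw [this]; positivity

end IntervalPosAux

open IntervalPosAux

/-- If `T a`, `T b` are invertible, `T` is twice continuously
differentiable on `(a,b)` with derivatives `T'` and `T''`, and
`x* T''(ρ(x)) x ≠ 0` for every nonzero `x`, then the interval `(a,b)` is of
positive type if and only if `x* T'(ρ(x)) x > 0` for every nonzero `x`. -/
theorem interval_positive_type_iff_deriv_pos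
    (n : ℕ) (hn : 1 ≤ n) (a b : ℝ) (hab : a < b)
    (T T' T'' : ℝ → Matrix (Fin n) (Fin n) ℂ)
    (hTcont : ContinuousOn T (Set.Icc a b))
    (hTherm : ∀ μ ∈ Set.Icc a b, (T μ).IsHermitian)
    (hT'deriv : ∀ μ ∈ Set.Ioo a b, ∀ i j : Fin n,
      HasDerivAt (fun t : ℝ => T t i j) (T' μ i j) μ)
    (hT'cont : ContinuousOn T' (Set.Ioo a b))
    (hT''deriv : ∀ μ ∈ Set.Ioo a b, ∀ i j : Fin n,
      HasDerivAt (fun t : ℝ => T' t i j) (T'' μ i j) μ)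
    (hT''cont : ContinuousOn T'' (Set.Ioo a b))
    (ρ : (Fin n → ℂ) → ℝ)
    (hρcont : ContinuousOn ρ {x : Fin n → ℂ | x ≠ 0})
    (hρmem : ∀ x : Fin n → ℂ, x ≠ 0 → ρ x ∈ Set.Ioo a b)
    (hρroot : ∀ x : Fin n → ℂ, x ≠ 0 → star x ⬝ᵥ (T (ρ x)) *ᵥ x = 0)
    (hρuniq : ∀ x : Fin n → ℂ, x ≠ 0 → ∀ μ ∈ Set.Ioo a b,
      star x ⬝ᵥ (T μ) *ᵥ x = 0 → μ = ρ x)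
    (hTa : IsUnit (T a)) (hTb : IsUnit (T b))
    (hT''ne : ∀ x : Fin n → ℂ, x ≠ 0 → (star x ⬝ᵥ (T'' (ρ x)) *ᵥ x).re ≠ 0) :
    (∀ x : Fin n → ℂ, x ≠ 0 → ∀ μ ∈ Set.Ioo a b, μ ≠ ρ x →
        0 < (μ - ρ x) * (star x ⬝ᵥ (T μ) *ᵥ x).re) ↔
      (∀ x : Fin n → ℂ, x ≠ 0 → 0 < (star x ⬝ᵥ (T' (ρ x)) *ᵥ x).re) := by
  constructor
  · -- positive type → derivative positive
    intro hpos x hx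
    set r := ρ x with hrdef
    have hr : r ∈ Set.Ioo a b := hρmem x hx
    set f : ℝ → ℝ := fun μ => (star x ⬝ᵥ T μ *ᵥ x).re with hfdef
    set g : ℝ → ℝ := fun μ => (star x ⬝ᵥ T' μ *ᵥ x).re with hgdef
    have hfr : f r = 0 := by simp [hfdef, hrdef, hρroot x hx]
    have hfd : ∀ μ ∈ Set.Ioo a b, HasDerivAt f (g μ) μ := fun μ hμ =>
      (Complex.reCLM.hasFDerivAt.comp_hasDerivAt μ (quad_hasDerivAt x (hT'deriv μ hμ)))
    have hgd : ∀ μ ∈ Set.Ioo a b,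
        HasDerivAt g ((star x ⬝ᵥ T'' μ *ᵥ x).re) μ := fun μ hμ =>
      (Complex.reCLM.hasFDerivAt.comp_hasDerivAt μ (quad_hasDerivAt x (hT''deriv μ hμ)))
    have hfcont : ContinuousOn f (Set.Icc a b) :=
      (Complex.continuous_re.comp (quad_continuous x)).comp_continuousOn hTcont
    -- g r ≥ 0
    have hslope : Filter.Tendsto (slope f r) (nhdsWithin r {r}ᶜ) (nhds (g r)) :=
      hasDerivAt_iff_tendsto_slope.mp (hfd r hr)
    have hev : ∀ᶠ t in nhdsWithin r {r}ᶜ, 0 ≤ slope f r t := by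
      have hIoo : Set.Ioo a b ∈ nhdsWithin r {r}ᶜ :=
        mem_nhdsWithin_of_mem_nhds (Ioo_mem_nhds hr.1 hr.2)
      filter_upwards [hIoo, self_mem_nhdsWithin] with t ht htne
      have htne' : t ≠ r := htne
      have h1 : 0 < (t - r) * f t := hpos x hx t ht htne'
      rw [slope_def_field, hfr, sub_zero]
      exact le_of_lt (div_pos_of_mul_pos (sub_ne_zero.mpr htne') h1)
    have hge : 0 ≤ g r := ge_of_tendsto hslope hev
    rcases hge.lt_or_eq with hlt | heq
    · exact hlt
    · -- g r = 0 : contradiction with second derivative nonzero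
      exfalso
      have hgr : g r = 0 := heq.symm
      set d : ℝ := (star x ⬝ᵥ T'' r *ᵥ x).re with hddef
      have hdne : d ≠ 0 := hT''ne x hx
      have hslope2 : Filter.Tendsto (slope g r) (nhdsWithin r {r}ᶜ) (nhds d) :=
        hasDerivAt_iff_tendsto_slope.mp (hgd r hr)
      rcases hdne.lt_or_gt with hdneg | hdpos
      · -- d < 0 : g < 0 just right of r, f decreasing there, so f μ < 0 for μ > r near
        have hev2 : ∀ᶠ t in nhdsWithin r (Set.Ioi r), g t < 0 := by
          have h1 : ∀ᶠ t in nhdsWithin r {r}ᶜ, slope g r t < 0 :=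
            hslope2.eventually (eventually_lt_nhds hdneg)
          have h2 := h1.filter_mono (nhdsWithin_mono r (fun t (ht : t ∈ Set.Ioi r) => ne_of_gt ht))
          filter_upwards [h2, self_mem_nhdsWithin] with t ht htmem
          rw [slope_def_field, hgr, sub_zero] at ht
          exact neg_of_div_neg_of_pos (sub_pos.mpr htmem) ht
        obtain ⟨u, hu, hsub⟩ := mem_nhdsGT_iff_exists_Ioo_subset.mp hev2
        set u' : ℝ := min u b with hu'def
        have hru' : r < u' := lt_min hu hr.2
        set μ : ℝ := (r + u') / 2 with hμdef
        have hμ1 : r < μ := by simp [hμdef]; linarith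
        have hμ2 : μ < u' := by simp [hμdef]; linarith
        have hμIoo : μ ∈ Set.Ioo a b := ⟨lt_trans hr.1 hμ1, lt_of_lt_of_le hμ2 (min_le_right _ _)⟩
        have hsubIoo : Set.Ioo r μ ⊆ Set.Ioo a b := fun t ht =>
          ⟨lt_trans hr.1 ht.1, lt_trans ht.2 hμIoo.2⟩
        obtain ⟨ξ, hξ, hξeq⟩ := exists_hasDerivAt_eq_slope f g hμ1
          (hfcont.mono (fun t ht => ⟨le_trans hr.1.le ht.1, le_trans ht.2 hμIoo.2.le⟩))
          (fun t ht => hfd t (hsubIoo ht))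
        have hgξ : g ξ < 0 := hsub ⟨hξ.1, lt_of_lt_of_le hξ.2 (le_trans hμ2.le (min_le_left _ _))⟩
        have hfμ : f μ - f r < 0 := by
          have h3 : (f μ - f r) / (μ - r) < 0 := hξeq ▸ hgξ
          exact neg_of_div_neg_of_pos (sub_pos.mpr hμ1) h3
        have h4 : 0 < (μ - r) * f μ := hpos x hx μ hμIoo (ne_of_gt hμ1)
        nlinarith
      · -- d > 0 : g < 0 just left of r, so f μ > 0 for μ < r near, contra
        have hev2 : ∀ᶠ t in nhdsWithin r (Set.Iio r), g t < 0 := by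
          have h1 : ∀ᶠ t in nhdsWithin r {r}ᶜ, 0 < slope g r t :=
            hslope2.eventually (eventually_gt_nhds hdpos)
          have h2 := h1.filter_mono (nhdsWithin_mono r (fun t (ht : t ∈ Set.Iio r) => ne_of_lt ht))
          filter_upwards [h2, self_mem_nhdsWithin] with t ht htmem
          rw [slope_def_field, hgr, sub_zero] at ht
          exact neg_of_div_pos_of_neg (sub_neg.mpr htmem) ht
        obtain ⟨l, hl, hsub⟩ := mem_nhdsLT_iff_exists_Ioo_subset.mp hev2
        set l' : ℝ := max l a with hl'def
        have hl'r : l' < r := max_lt hl hr.1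
        set μ : ℝ := (l' + r) / 2 with hμdef
        have hμ1 : l' < μ := by simp [hμdef]; linarith
        have hμ2 : μ < r := by simp [hμdef]; linarith
        have hμIoo : μ ∈ Set.Ioo a b :=
          ⟨lt_of_le_of_lt (le_max_right _ _) hμ1, lt_trans hμ2 hr.2⟩
        have hsubIoo : Set.Ioo μ r ⊆ Set.Ioo a b := fun t ht =>
          ⟨lt_trans hμIoo.1 ht.1, lt_trans ht.2 hr.2⟩
        obtain ⟨ξ, hξ, hξeq⟩ := exists_hasDerivAt_eq_slope f g hμ2
          (hfcont.mono (fun t ht => ⟨le_trans hμIoo.1.le ht.1, le_trans ht.2 hr.2.le⟩))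
          (fun t ht => hfd t (hsubIoo ht))
        have hgξ : g ξ < 0 := hsub ⟨lt_of_le_of_lt (le_max_left _ _) (lt_trans hμ1 hξ.1), hξ.2⟩
        have hfμ : f r - f μ < 0 := by
          have h3 : (f r - f μ) / (r - μ) < 0 := hξeq ▸ hgξ
          exact neg_of_div_neg_of_pos (sub_pos.mpr hμ2) h3
        have h4 : 0 < (μ - r) * f μ := hpos x hx μ hμIoo (ne_of_lt hμ2)
        nlinarith
  · -- derivative positive → positive type
    intro hpos x hx μ hμ hne
    set r := ρ x with hrdef
    have hr : r ∈ Set.Ioo a b := hρmem x hx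
    set f : ℝ → ℝ := fun ν => (star x ⬝ᵥ T ν *ᵥ x).re with hfdef
    set g : ℝ → ℝ := fun ν => (star x ⬝ᵥ T' ν *ᵥ x).re with hgdef
    have hfr : f r = 0 := by simp [hfdef, hrdef, hρroot x hx]
    have hfd : ∀ ν ∈ Set.Ioo a b, HasDerivAt f (g ν) ν := fun ν hν =>
      (Complex.reCLM.hasFDerivAt.comp_hasDerivAt ν (quad_hasDerivAt x (hT'deriv ν hν)))
    have hfcont : ContinuousOn f (Set.Icc a b) :=
      (Complex.continuous_re.comp (quad_continuous x)).comp_continuousOn hTcont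
    have hzero : ∀ ν ∈ Set.Ioo a b, f ν = 0 → ν = r := by
      intro ν hν hfν
      apply hρuniq x hx ν hν
      have := herm_quad_real (hTherm ν (Set.Ioo_subset_Icc_self hν)) x
      have h5 : (star x ⬝ᵥ T ν *ᵥ x).re = 0 := hfν
      rw [this, h5]; simp
    have hc : 0 < g r := hpos x hx
    have hslope : Filter.Tendsto (slope f r) (nhdsWithin r {r}ᶜ) (nhds (g r)) :=
      hasDerivAt_iff_tendsto_slope.mp (hfd r hr)
    rcases hne.lt_or_gt with hlt | hgt
    · -- μ < r : show f μ < 0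
      have hfμneg : f μ < 0 := by
        by_contra hcon
        push_neg at hcon
        have hfμpos : 0 < f μ := by
          rcases hcon.lt_or_eq with h | h
          · exact h
          · exact absurd (hzero μ hμ h.symm) hne
        -- find t ∈ (μ, r) with f t < 0
        have hev : ∀ᶠ t in nhdsWithin r (Set.Iio r), f t < 0 ∧ t ∈ Set.Ioo μ r := by
          have h1 : ∀ᶠ t in nhdsWithin r {r}ᶜ, 0 < slope f r t :=
            hslope.eventually (eventually_gt_nhds hc)
          have h2 := h1.filter_mono (nhdsWithin_mono r (fun t (ht : t ∈ Set.Iio r) => ne_of_lt ht))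
          have h3 : Set.Ioo μ r ∈ nhdsWithin r (Set.Iio r) :=
            Ioo_mem_nhdsLT_of_mem ⟨hlt, le_refl r⟩
          filter_upwards [h2, h3] with t ht htmem
          rw [slope_def_field, hfr, sub_zero] at ht
          exact ⟨neg_of_div_pos_of_neg (sub_neg.mpr htmem.2) ht, htmem⟩
        obtain ⟨t, htneg, htmem⟩ := hev.exists
        -- IVT on [μ, t]
        have hμt : μ ≤ t := htmem.1.le
        have hIcc : Set.Icc μ t ⊆ Set.Icc a b := fun s hs =>
          ⟨le_trans hμ.1.le hs.1, le_trans hs.2 (le_trans htmem.2.le hr.2.le)⟩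
        have hivt := intermediate_value_Ioo' hμt (hfcont.mono hIcc)
        have h0 : (0 : ℝ) ∈ Set.Ioo (f t) (f μ) := ⟨htneg, hfμpos⟩
        obtain ⟨ν, hν, hfν⟩ := hivt h0
        have hνIoo : ν ∈ Set.Ioo a b :=
          ⟨lt_of_lt_of_le hμ.1 hν.1.le, lt_trans (lt_trans hν.2 htmem.2) hr.2⟩
        have := hzero ν hνIoo hfν
        rw [this] at hν
        exact absurd (lt_trans hν.2 htmem.2) (lt_irrefl r)
      exact mul_pos_of_neg_of_neg (sub_neg.mpr hlt) hfμneg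
    · -- r < μ : show f μ > 0
      have hfμpos : 0 < f μ := by
        by_contra hcon
        push_neg at hcon
        have hfμneg : f μ < 0 := by
          rcases hcon.lt_or_eq with h | h
          · exact h
          · exact absurd (hzero μ hμ h) hne
        have hev : ∀ᶠ t in nhdsWithin r (Set.Ioi r), 0 < f t ∧ t ∈ Set.Ioo r μ := by
          have h1 : ∀ᶠ t in nhdsWithin r {r}ᶜ, 0 < slope f r t :=
            hslope.eventually (eventually_gt_nhds hc)
          have h2 := h1.filter_mono (nhdsWithin_mono r (fun t (ht : t ∈ Set.Ioi r) => ne_of_gt ht))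
          have h3 : Set.Ioo r μ ∈ nhdsWithin r (Set.Ioi r) :=
            Ioo_mem_nhdsGT_of_mem ⟨le_refl r, hgt⟩
          filter_upwards [h2, h3] with t ht htmem
          rw [slope_def_field, hfr, sub_zero] at ht
          exact ⟨pos_of_div_pos_of_pos (sub_pos.mpr htmem.1) ht, htmem⟩
        obtain ⟨t, htpos, htmem⟩ := hev.exists
        have htμ : t ≤ μ := htmem.2.le
        have hIcc : Set.Icc t μ ⊆ Set.Icc a b := fun s hs =>
          ⟨le_trans (le_trans hr.1.le htmem.1.le) hs.1, le_trans hs.2 hμ.2.le⟩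
        have hivt := intermediate_value_Ioo' htμ (hfcont.mono hIcc)
        have h0 : (0 : ℝ) ∈ Set.Ioo (f μ) (f t) := ⟨hfμneg, htpos⟩
        obtain ⟨ν, hν, hfν⟩ := hivt h0
        have hνIoo : ν ∈ Set.Ioo a b :=
          ⟨lt_trans hr.1 (lt_trans htmem.1 hν.1), lt_trans hν.2 hμ.2⟩
        have := hzero ν hνIoo hfν
        rw [this] at hν
        exact absurd (lt_trans htmem.1 hν.1) (lt_irrefl r)
      exact mul_pos (sub_pos.mpr hgt) hfμpos
end

section
/- Assume the interval J = (a,b) is of positive type and T is continuously differentiable on (a,b). Then for every k ∈ {1,…,n} there exists λ_k ∈ (a,b) that is the k-th eigenvalue of T(·) (zero is the k-th largest eigenvalue, counted with multiplicity, of the Hermitian matrix T(λ_k)), and λ_k satisfies the min-max characterizations: λ_k equals the minimum over all ℂ-subspaces S ⊆ ℂ^n with dim S = k of the maximum of ρ(x) over nonzero x ∈ S, and λ_k also equals the maximum over all ℂ-subspaces S ⊆ ℂ^n with dim S = n−k+1 of the minimum of ρ(x) over nonzero x ∈ S (all the indicated extrema are attained). -/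
open Matrix Set
open scoped ComplexOrder

section NVPAux

open Polynomial

theorem NVP_charpoly_diag (n : ℕ) (d : Fin n → ℂ) :
    (Matrix.diagonal d).charpoly = ∏ i, (X - C (d i)) := by
  rw [Matrix.charpoly]
  have : charmatrix (Matrix.diagonal d) = Matrix.diagonal (fun i => X - C (d i)) := by
    ext i j
    by_cases h : i = j <;> simp [charmatrix_apply, Matrix.diagonal_apply, h]
  rw [this, Matrix.det_diagonal]

theorem NVP_charpoly_conj (n : ℕ) (U D : Matrix (Fin n) (Fin n) ℂ)
    (h1 : U * star U = 1) :
    (U * D * star U).charpoly = D.charpoly := by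
  let φ : Matrix (Fin n) (Fin n) ℂ →+* Matrix (Fin n) (Fin n) ℂ[X] :=
    (C : ℂ →+* ℂ[X]).mapMatrix
  have key : charmatrix (U * D * star U) = φ U * charmatrix D * φ (star U) := by
    show _ = φ U * (Matrix.scalar (Fin n) (X : ℂ[X]) - φ D) * φ (star U)
    rw [Matrix.mul_sub, Matrix.sub_mul, charmatrix]
    congr 1
    · rw [← (Matrix.scalar_commute (X:ℂ[X]) (Commute.all X) (φ U)).eq, mul_assoc,
        ← map_mul φ, h1, RingHom.map_one φ, mul_one]
    · rw [← map_mul φ, ← map_mul φ]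
  have hdet1 : (φ U).det * (φ (star U)).det = 1 := by
    rw [← Matrix.det_mul, ← map_mul φ, h1, RingHom.map_one φ, Matrix.det_one]
  rw [Matrix.charpoly, Matrix.charpoly, key, Matrix.det_mul, Matrix.det_mul]
  calc (φ U).det * (charmatrix D).det * (φ (star U)).det
      = ((φ U).det * (φ (star U)).det) * (charmatrix D).det := by ring
    _ = (charmatrix D).det := by rw [hdet1, one_mul]

theorem NVP_exists_spectral (n : ℕ) (A : Matrix (Fin n) (Fin n) ℂ) (hA : A.IsHermitian) :
    ∃ (μ : Fin n → ℝ) (w : Fin n → (Fin n → ℂ)),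
      Antitone μ ∧
      (∀ i, A *ᵥ w i = (μ i : ℂ) • w i) ∧
      (∀ i j, star (w i) ⬝ᵥ w j = if i = j then 1 else 0) ∧
      A.charpoly = ∏ i, (X - C ((μ i : ℂ))) := by
  classical
  let σ : Equiv.Perm (Fin n) := (Fin.revPerm).trans (Tuple.sort hA.eigenvalues)
  refine ⟨hA.eigenvalues ∘ σ, fun i => ⇑(hA.eigenvectorBasis (σ i)), ?_, ?_, ?_, ?_⟩
  · intro i j hij
    exact Tuple.monotone_sort hA.eigenvalues (Fin.rev_le_rev.mpr hij)
  · intro i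
    have := hA.mulVec_eigenvectorBasis (σ i)
    rw [this]
    ext j
    simp [Complex.real_smul]
  · intro i j
    have := orthonormal_iff_ite.mp hA.eigenvectorBasis.orthonormal (σ i) (σ j)
    rw [EuclideanSpace.inner_eq_star_dotProduct, dotProduct_comm] at this
    simpa [EquivLike.apply_eq_iff_eq] using this
  · have h1 : (hA.eigenvectorUnitary : Matrix (Fin n) (Fin n) ℂ) *
        star (hA.eigenvectorUnitary : Matrix (Fin n) (Fin n) ℂ) = 1 :=
      Matrix.mem_unitaryGroup_iff.mp (hA.eigenvectorUnitary).2
    calc A.charpoly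
        = ((hA.eigenvectorUnitary : Matrix (Fin n) (Fin n) ℂ) *
            Matrix.diagonal (RCLike.ofReal ∘ hA.eigenvalues) *
            star (hA.eigenvectorUnitary : Matrix (Fin n) (Fin n) ℂ)).charpoly := by
          conv_lhs => rw [hA.spectral_theorem]
          rw [Unitary.conjStarAlgAut_apply]
      _ = (Matrix.diagonal (RCLike.ofReal ∘ hA.eigenvalues)).charpoly :=
          NVP_charpoly_conj n _ _ h1
      _ = ∏ i, (X - C ((hA.eigenvalues i : ℂ))) := NVP_charpoly_diag n _
      _ = ∏ i, (X - C ((hA.eigenvalues (σ i) : ℂ))) :=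
          (Equiv.prod_comp σ (fun i => X - C ((hA.eigenvalues i : ℂ)))).symm
      _ = ∏ i, (X - C (((hA.eigenvalues ∘ σ) i : ℂ))) := rfl

theorem NVP_mulVec_sum {n : ℕ} {ι : Type*} [Fintype ι] (A : Matrix (Fin n) (Fin n) ℂ)
    (f : ι → Fin n → ℂ) : A *ᵥ (∑ i, f i) = ∑ i, A *ᵥ f i :=
  map_sum A.mulVecLin f Finset.univ

theorem NVP_dotProduct_sum {n : ℕ} {ι : Type*} [Fintype ι] (u : Fin n → ℂ)
    (f : ι → Fin n → ℂ) : u ⬝ᵥ (∑ i, f i) = ∑ i, u ⬝ᵥ f i := by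
  simp only [dotProduct, Finset.sum_apply, Finset.mul_sum]
  exact Finset.sum_comm

theorem NVP_sum_dotProduct {n : ℕ} {ι : Type*} [Fintype ι] (f : ι → Fin n → ℂ)
    (u : Fin n → ℂ) : (∑ i, f i) ⬝ᵥ u = ∑ i, f i ⬝ᵥ u := by
  simp only [dotProduct, Finset.sum_apply, Finset.sum_mul]
  exact Finset.sum_comm

theorem NVP_quad_eval {n : ℕ} {ι : Type*} [Fintype ι] [DecidableEq ι]
    (A : Matrix (Fin n) (Fin n) ℂ) (ν : ι → ℝ) (v : ι → Fin n → ℂ)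
    (heig : ∀ i, A *ᵥ v i = (ν i : ℂ) • v i)
    (horth : ∀ i j, star (v i) ⬝ᵥ v j = if i = j then 1 else 0)
    (c : ι → ℂ) :
    (star (∑ i, c i • v i) ⬝ᵥ A *ᵥ (∑ i, c i • v i)).re
      = ∑ i, ν i * Complex.normSq (c i) := by
  have hAx : A *ᵥ (∑ i, c i • v i) = ∑ i, (c i * (ν i : ℂ)) • v i := by
    rw [NVP_mulVec_sum A (fun i => c i • v i)]
    congr 1; ext i
    rw [Matrix.mulVec_smul, heig i, smul_smul]
  have hstar : star (∑ i, c i • v i) = ∑ i, (starRingEnd ℂ (c i)) • star (v i) := by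
    rw [star_sum]
    congr 1; ext i
    rw [star_smul]
    rfl
  rw [hAx, hstar, NVP_sum_dotProduct _ _]
  have : ∀ i, (starRingEnd ℂ (c i)) • star (v i) ⬝ᵥ (∑ j, (c j * (ν j : ℂ)) • v j)
      = (starRingEnd ℂ (c i)) * (c i * (ν i : ℂ)) := by
    intro i
    rw [smul_dotProduct, NVP_dotProduct_sum _ _]
    have : ∀ j, star (v i) ⬝ᵥ (c j * (ν j : ℂ)) • v j
        = (c j * (ν j : ℂ)) * (if i = j then 1 else 0) := by
      intro j
      rw [dotProduct_smul, horth i j]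
      simp
    rw [Finset.sum_congr rfl (fun j _ => this j)]
    simp [Finset.sum_ite_eq]
  rw [Finset.sum_congr rfl (fun i _ => this i), Complex.re_sum]
  congr 1; ext i
  have : starRingEnd ℂ (c i) * (c i * (ν i : ℂ)) = ((Complex.normSq (c i) * ν i : ℝ) : ℂ) := by
    rw [← mul_assoc, ← Complex.normSq_eq_conj_mul_self]
    push_cast; ring
  rw [this, Complex.ofReal_re]; ring

theorem NVP_li_of_orth {n : ℕ} {ι : Type*} [Fintype ι] [DecidableEq ι]
    (v : ι → Fin n → ℂ)
    (horth : ∀ i j, star (v i) ⬝ᵥ v j = if i = j then 1 else 0) :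
    LinearIndependent ℂ v := by
  rw [Fintype.linearIndependent_iff]
  intro c hc j
  have h := congrArg (fun y => star (v j) ⬝ᵥ y) hc
  simp only [dotProduct_zero] at h
  rw [NVP_dotProduct_sum _ _] at h
  have : ∀ i, star (v j) ⬝ᵥ c i • v i = c i * (if j = i then 1 else 0) := by
    intro i
    rw [dotProduct_smul, horth j i]
    simp
  rw [Finset.sum_congr rfl (fun i _ => this i)] at h
  simpa [Finset.sum_ite_eq] using h

theorem NVP_rho_attains {n : ℕ} (ρ : (Fin n → ℂ) → ℝ)
    (hρcont : ContinuousOn ρ {x : Fin n → ℂ | x ≠ 0})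
    (hscale : ∀ (x : Fin n → ℂ), x ≠ 0 → ρ (((‖x‖⁻¹ : ℝ) : ℂ) • x) = ρ x)
    (S : Submodule ℂ (Fin n → ℂ)) (x : Fin n → ℂ) (hxS : x ∈ S) (hx : x ≠ 0) :
    (∃ x₀, x₀ ∈ S ∧ x₀ ≠ 0 ∧ IsGreatest (ρ '' {y | y ∈ S ∧ y ≠ 0}) (ρ x₀)) ∧
    (∃ x₁, x₁ ∈ S ∧ x₁ ≠ 0 ∧ IsLeast (ρ '' {y | y ∈ S ∧ y ≠ 0}) (ρ x₁)) := by
  classical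
  set K : Set (Fin n → ℂ) := (S : Set (Fin n → ℂ)) ∩ Metric.sphere 0 1 with hK
  have hnorm : ∀ y : Fin n → ℂ, y ≠ 0 → ‖(((‖y‖⁻¹ : ℝ) : ℂ) • y)‖ = 1 := by
    intro y hy
    rw [norm_smul, Complex.norm_real, Real.norm_eq_abs,
      abs_of_nonneg (inv_nonneg.mpr (norm_nonneg y)), inv_mul_cancel₀ (norm_ne_zero_iff.mpr hy)]
  have hmemK : ∀ y : Fin n → ℂ, y ∈ S → y ≠ 0 → (((‖y‖⁻¹ : ℝ) : ℂ) • y) ∈ K := by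
    intro y hyS hy
    exact ⟨S.smul_mem _ hyS, by rw [mem_sphere_zero_iff_norm]; exact hnorm y hy⟩
  have hKsub : K ⊆ {x : Fin n → ℂ | x ≠ 0} := by
    rintro y ⟨-, hy⟩
    rw [mem_sphere_zero_iff_norm] at hy
    intro h0; rw [h0] at hy; simp at hy
  have hKcl : IsClosed K := (Submodule.closed_of_finiteDimensional S).inter Metric.isClosed_sphere
  have hKbd : Bornology.IsBounded K :=
    (Metric.isBounded_sphere (x := (0 : Fin n → ℂ)) (r := 1)).subset (inter_subset_right)
  have hKcp : IsCompact K := Metric.isCompact_of_isClosed_isBounded hKcl hKbd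
  have hKne : K.Nonempty := ⟨_, hmemK x hxS hx⟩
  have hcont : ContinuousOn ρ K := hρcont.mono hKsub
  obtain ⟨x₀, hx₀K, hmax⟩ := hKcp.exists_isMaxOn hKne hcont
  obtain ⟨x₁, hx₁K, hmin⟩ := hKcp.exists_isMinOn hKne hcont
  have hbound : ∀ y, y ∈ S → y ≠ 0 → ρ y ≤ ρ x₀ ∧ ρ x₁ ≤ ρ y := by
    intro y hyS hy
    have := hmemK y hyS hy
    constructor
    · calc ρ y = ρ (((‖y‖⁻¹ : ℝ) : ℂ) • y) := (hscale y hy).symm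
        _ ≤ ρ x₀ := hmax this
    · calc ρ x₁ ≤ ρ (((‖y‖⁻¹ : ℝ) : ℂ) • y) := hmin this
        _ = ρ y := hscale y hy
  refine ⟨⟨x₀, hx₀K.1, hKsub hx₀K, ⟨x₀, ⟨hx₀K.1, hKsub hx₀K⟩, rfl⟩, ?_⟩,
          ⟨x₁, hx₁K.1, hKsub hx₁K, ⟨x₁, ⟨hx₁K.1, hKsub hx₁K⟩, rfl⟩, ?_⟩⟩
  · rintro r ⟨y, ⟨hyS, hy0⟩, rfl⟩
    exact (hbound y hyS hy0).1
  · rintro r ⟨y, ⟨hyS, hy0⟩, rfl⟩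
    exact (hbound y hyS hy0).2

theorem NVP_exists_mem_inf {n : ℕ} (S W : Submodule ℂ (Fin n → ℂ))
    (h : n + 1 ≤ Module.finrank ℂ S + Module.finrank ℂ W) :
    ∃ x : Fin n → ℂ, x ∈ S ∧ x ∈ W ∧ x ≠ 0 := by
  have h1 : Module.finrank ℂ (Fin n → ℂ) = n := by simp
  have hsup : Module.finrank ℂ ↥(S ⊔ W) ≤ n := by
    have := Submodule.finrank_le (S ⊔ W)
    omega
  have heq := Submodule.finrank_sup_add_finrank_inf_eq S W
  have hpos : 0 < Module.finrank ℂ ↥(S ⊓ W) := by omega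
  have hne : S ⊓ W ≠ ⊥ := by
    intro hbot
    rw [hbot, finrank_bot] at hpos
    exact lt_irrefl 0 hpos
  obtain ⟨y, hy, hy0⟩ := Submodule.exists_mem_ne_zero_of_ne_bot hne
  exact ⟨y, (Submodule.mem_inf.mp hy).1, (Submodule.mem_inf.mp hy).2, hy0⟩

end NVPAux

/-- `0` is the `k`-th largest eigenvalue (counted with multiplicity, `k` zero-based)
of the matrix `A`: the eigenvalues of `A` can be listed in decreasing order with
multiplicity (as the roots of the characteristic polynomial) so that the `k`-th
entry is `0`. -/
def ZeroIsKthLargestEigenvalue {m : ℕ} (A : Matrix (Fin m) (Fin m) ℂ) (k : Fin m) : Prop :=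
  ∃ μ : Fin m → ℝ, Antitone μ ∧
    A.charpoly = ∏ i : Fin m, (Polynomial.X - Polynomial.C ((μ i : ℂ))) ∧ μ k = 0

/-- nonlinear variational principle (min-max form) on an interval of
positive type: for each `k` there is a `k`-th eigenvalue `λₖ ∈ (a,b)` of `T(·)`
satisfying the min-max and max-min characterizations of the Rayleigh functional,
with all extrema attained.  (`k : Fin n` is zero-based: dimension `k+1` subspaces
for the min-max, dimension `n-k` for the max-min.) -/
theorem nonlinear_variational_principle_positive_type
    (n : ℕ) (hn : 1 ≤ n) (a b : ℝ) (hab : a < b)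
    (T T' : ℝ → Matrix (Fin n) (Fin n) ℂ)
    (hTcont : ContinuousOn T (Set.Icc a b))
    (hTherm : ∀ μ ∈ Set.Icc a b, (T μ).IsHermitian)
    (hT'deriv : ∀ μ ∈ Set.Ioo a b, ∀ i j : Fin n,
      HasDerivAt (fun t : ℝ => T t i j) (T' μ i j) μ)
    (hT'cont : ContinuousOn T' (Set.Ioo a b))
    (ρ : (Fin n → ℂ) → ℝ)
    (hρcont : ContinuousOn ρ {x : Fin n → ℂ | x ≠ 0})
    (hρmem : ∀ x : Fin n → ℂ, x ≠ 0 → ρ x ∈ Set.Ioo a b)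
    (hρroot : ∀ x : Fin n → ℂ, x ≠ 0 → star x ⬝ᵥ (T (ρ x)) *ᵥ x = 0)
    (hρuniq : ∀ x : Fin n → ℂ, x ≠ 0 → ∀ μ ∈ Set.Ioo a b,
      star x ⬝ᵥ (T μ) *ᵥ x = 0 → μ = ρ x)
    (hpos : ∀ x : Fin n → ℂ, x ≠ 0 → ∀ μ ∈ Set.Ioo a b, μ ≠ ρ x →
      0 < (μ - ρ x) * (star x ⬝ᵥ (T μ) *ᵥ x).re) :
    ∀ k : Fin n, ∃ lam ∈ Set.Ioo a b,
      ZeroIsKthLargestEigenvalue (T lam) k ∧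
      IsLeast {r : ℝ | ∃ S : Submodule ℂ (Fin n → ℂ), Module.finrank ℂ S = (k : ℕ) + 1 ∧
        IsGreatest (ρ '' {x : Fin n → ℂ | x ∈ S ∧ x ≠ 0}) r} lam ∧
      IsGreatest {r : ℝ | ∃ S : Submodule ℂ (Fin n → ℂ), Module.finrank ℂ S = n - (k : ℕ) ∧
        IsLeast (ρ '' {x : Fin n → ℂ | x ∈ S ∧ x ≠ 0}) r} lam := by
  classical
  intro k
  -- scale invariance of ρ
  have hscale : ∀ (x : Fin n → ℂ) (c : ℂ), x ≠ 0 → c ≠ 0 → ρ (c • x) = ρ x := by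
    intro x c hx hc
    have hcx : c • x ≠ 0 := smul_ne_zero hc hx
    have hq : star (c • x) ⬝ᵥ (T (ρ x)) *ᵥ (c • x)
        = (star c * c) * (star x ⬝ᵥ (T (ρ x)) *ᵥ x) := by
      rw [Matrix.mulVec_smul, star_smul, smul_dotProduct, dotProduct_smul]
      simp [smul_eq_mul]; ring
    rw [hρroot x hx, mul_zero] at hq
    exact (hρuniq (c • x) hcx (ρ x) (hρmem x hx) hq).symm
  have hscale' : ∀ x : Fin n → ℂ, x ≠ 0 → ρ (((‖x‖⁻¹ : ℝ) : ℂ) • x) = ρ x := by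
    intro x hx
    refine hscale x _ hx ?_
    simp [Complex.ofReal_ne_zero, inv_ne_zero, norm_ne_zero_iff.mpr hx]
  -- sign lemmas
  have sign_lt : ∀ x : Fin n → ℂ, x ≠ 0 → ∀ μ ∈ Set.Ioo a b,
      0 < (star x ⬝ᵥ T μ *ᵥ x).re → ρ x < μ := by
    intro x hx μ hμ hq
    rcases lt_trichotomy (ρ x) μ with h | h | h
    · exact h
    · exfalso; rw [← h, hρroot x hx] at hq; simp at hq
    · exfalso
      have := hpos x hx μ hμ (ne_of_lt h)
      nlinarith
  have sign_gt : ∀ x : Fin n → ℂ, x ≠ 0 → ∀ μ ∈ Set.Ioo a b,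
      (star x ⬝ᵥ T μ *ᵥ x).re < 0 → μ < ρ x := by
    intro x hx μ hμ hq
    rcases lt_trichotomy μ (ρ x) with h | h | h
    · exact h
    · exfalso; rw [h, hρroot x hx] at hq; simp at hq
    · exfalso
      have := hpos x hx μ hμ (ne_of_gt h)
      nlinarith
  have sign_le : ∀ x : Fin n → ℂ, x ≠ 0 → ∀ μ ∈ Set.Ioo a b,
      0 ≤ (star x ⬝ᵥ T μ *ᵥ x).re → ρ x ≤ μ := by
    intro x hx μ hμ hq
    by_contra h
    push_neg at h
    have := hpos x hx μ hμ (ne_of_lt h)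
    nlinarith
  have sign_ge : ∀ x : Fin n → ℂ, x ≠ 0 → ∀ μ ∈ Set.Ioo a b,
      (star x ⬝ᵥ T μ *ᵥ x).re ≤ 0 → μ ≤ ρ x := by
    intro x hx μ hμ hq
    by_contra h
    push_neg at h
    have := hpos x hx μ hμ (ne_of_gt h)
    nlinarith
  set P : Set ℝ := {r : ℝ | ∃ S : Submodule ℂ (Fin n → ℂ),
    Module.finrank ℂ S = (k : ℕ) + 1 ∧
    IsGreatest (ρ '' {x : Fin n → ℂ | x ∈ S ∧ x ≠ 0}) r} with hPdef
  -- a global minimizer of ρ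
  have h10 : (0 : ℂ) ≠ 1 := by norm_num
  have hsingle : (Pi.single (⟨0, by omega⟩ : Fin n) (1:ℂ) : Fin n → ℂ) ≠ 0 := by
    intro h
    have := congrFun h ⟨0, by omega⟩
    simp at this
  obtain ⟨-, x₁, -, hx₁0, hgmin⟩ :=
    NVP_rho_attains ρ hρcont hscale' ⊤ _ Submodule.mem_top hsingle
  have hgmin' : ∀ y : Fin n → ℂ, y ≠ 0 → ρ x₁ ≤ ρ y := by
    intro y hy
    exact hgmin.2 ⟨y, ⟨Submodule.mem_top, hy⟩, rfl⟩
  -- P is nonempty: take the span of k+1 standard basis vectors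
  have hk1n : (k : ℕ) + 1 ≤ n := k.isLt
  have horthsingle : ∀ i j : Fin ((k:ℕ)+1),
      star ((fun i : Fin ((k:ℕ)+1) => (Pi.single (Fin.castLE hk1n i) (1:ℂ) : Fin n → ℂ)) i) ⬝ᵥ
        (fun i : Fin ((k:ℕ)+1) => (Pi.single (Fin.castLE hk1n i) (1:ℂ) : Fin n → ℂ)) j
        = if i = j then 1 else 0 := by
    intro i j
    simp only [dotProduct, Pi.star_apply, Pi.single_apply]
    by_cases h : i = j
    · subst h
      simp [Finset.sum_ite_eq']
    · have hne : Fin.castLE hk1n i ≠ Fin.castLE hk1n j := by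
        intro hc
        exact h (Fin.castLE_injective hk1n hc)
      rw [if_neg h]
      apply Finset.sum_eq_zero
      intro m _
      by_cases h1 : m = Fin.castLE hk1n i
      · rw [if_neg (show ¬ m = Fin.castLE hk1n j from fun hc => hne (h1.symm.trans hc)),
          mul_zero]
      · rw [if_neg h1]
        simp
  -- the subspace spanned by the first k+1 standard basis vectors
  have hli1 : LinearIndependent ℂ
      (fun i : Fin ((k:ℕ)+1) => (Pi.single (Fin.castLE hk1n i) (1:ℂ) : Fin n → ℂ)) :=
    NVP_li_of_orth _ horthsingle
  have hS0rank : Module.finrank ℂ (Submodule.span ℂ (Set.range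
      (fun i : Fin ((k:ℕ)+1) => (Pi.single (Fin.castLE hk1n i) (1:ℂ) : Fin n → ℂ))))
      = (k:ℕ)+1 := by
    rw [finrank_span_eq_card hli1]
    simp
  have hPmaker : ∀ S : Submodule ℂ (Fin n → ℂ), Module.finrank ℂ S = (k:ℕ)+1 →
      ∃ x₀, x₀ ∈ S ∧ x₀ ≠ 0 ∧ ρ x₀ ∈ P ∧
        IsGreatest (ρ '' {x : Fin n → ℂ | x ∈ S ∧ x ≠ 0}) (ρ x₀) := by
    intro S hS
    have hSbot : S ≠ ⊥ := by
      intro hbot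
      rw [hbot, finrank_bot] at hS
      omega
    obtain ⟨y, hyS, hy0⟩ := Submodule.exists_mem_ne_zero_of_ne_bot hSbot
    obtain ⟨⟨x₀, hx₀S, hx₀0, hgr⟩, -⟩ := NVP_rho_attains ρ hρcont hscale' S y hyS hy0
    exact ⟨x₀, hx₀S, hx₀0, ⟨S, hS, hgr⟩, hgr⟩
  obtain ⟨z0, -, hz00, hz0P, -⟩ := hPmaker _ hS0rank
  have hPne : P.Nonempty := ⟨_, hz0P⟩
  have hPsub : ∀ r ∈ P, r ∈ Set.Ioo a b := by
    rintro r ⟨S, hS, hgr⟩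
    obtain ⟨x, ⟨hxS, hx0⟩, rfl⟩ := hgr.1
    exact hρmem x hx0
  have hPlb : ∀ r ∈ P, ρ x₁ ≤ r := by
    rintro r ⟨S, hS, hgr⟩
    obtain ⟨x, ⟨hxS, hx0⟩, rfl⟩ := hgr.1
    exact hgmin' x hx0
  have hbddP : BddBelow P := ⟨ρ x₁, hPlb⟩
  set lam : ℝ := sInf P with hlam
  have hlamIoo : lam ∈ Set.Ioo a b := by
    constructor
    · have h1 : ρ x₁ ≤ lam := le_csInf hPne hPlb
      have := (hρmem x₁ hx₁0).1
      linarith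
    · have h2 := (hPsub _ hz0P).2
      have h3 := csInf_le hbddP hz0P
      linarith
  have hlamIcc : lam ∈ Set.Icc a b := Set.Ioo_subset_Icc_self hlamIoo
  have hA := hTherm lam hlamIcc
  obtain ⟨μ, w, hanti, heig, horth, hchar⟩ := NVP_exists_spectral n (T lam) hA
  have hwne : ∀ i, w i ≠ 0 := by
    intro i h
    have h2 := horth i i
    rw [h] at h2
    simp at h2
  have hkn : (k:ℕ) < n := k.isLt
  -- two families of eigenvectors
  set v1 : Fin ((k:ℕ)+1) → (Fin n → ℂ) := fun i => w (Fin.castLE hk1n i) with hv1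
  set emb2 : Fin (n - (k:ℕ)) → Fin n :=
    fun i => ⟨(k:ℕ) + (i:ℕ), by have := i.isLt; omega⟩ with hemb2
  set v2 : Fin (n - (k:ℕ)) → (Fin n → ℂ) := fun i => w (emb2 i) with hv2
  have horth1 : ∀ i j, star (v1 i) ⬝ᵥ v1 j = if i = j then 1 else 0 := by
    intro i j
    rw [hv1]
    rw [horth]
    by_cases h : i = j
    · simp [h]
    · rw [if_neg (fun hc => h (Fin.castLE_injective hk1n hc)), if_neg h]
  have hemb2inj : Function.Injective emb2 := by
    intro i j hij
    have h2 := congrArg Fin.val hij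
    rw [hemb2] at h2
    simp only at h2
    apply Fin.ext
    omega
  have horth2 : ∀ i j, star (v2 i) ⬝ᵥ v2 j = if i = j then 1 else 0 := by
    intro i j
    rw [hv2]
    rw [horth]
    by_cases h : i = j
    · simp [h]
    · rw [if_neg (fun hc => h (hemb2inj hc)), if_neg h]
  have hS1rank : Module.finrank ℂ (Submodule.span ℂ (Set.range v1)) = (k:ℕ)+1 := by
    rw [finrank_span_eq_card (NVP_li_of_orth v1 horth1)]
    simp
  have hS2rank : Module.finrank ℂ (Submodule.span ℂ (Set.range v2)) = n - (k:ℕ) := by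
    rw [finrank_span_eq_card (NVP_li_of_orth v2 horth2)]
    simp
  -- quadratic form evaluation on the two spans
  have hquad1 : ∀ x : Fin n → ℂ, x ∈ Submodule.span ℂ (Set.range v1) →
      ∃ c : Fin ((k:ℕ)+1) → ℂ, (∑ i, c i • v1 i = x) ∧
        (star x ⬝ᵥ T lam *ᵥ x).re
          = ∑ i, μ (Fin.castLE hk1n i) * Complex.normSq (c i) := by
    intro x hx
    obtain ⟨c, hc⟩ := (Submodule.mem_span_range_iff_exists_fun ℂ).mp hx
    refine ⟨c, hc, ?_⟩
    rw [← hc]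
    exact NVP_quad_eval (T lam) (fun i => μ (Fin.castLE hk1n i)) v1
      (fun i => heig (Fin.castLE hk1n i)) horth1 c
  have hquad2 : ∀ x : Fin n → ℂ, x ∈ Submodule.span ℂ (Set.range v2) →
      ∃ c : Fin (n - (k:ℕ)) → ℂ, (∑ i, c i • v2 i = x) ∧
        (star x ⬝ᵥ T lam *ᵥ x).re
          = ∑ i, μ (emb2 i) * Complex.normSq (c i) := by
    intro x hx
    obtain ⟨c, hc⟩ := (Submodule.mem_span_range_iff_exists_fun ℂ).mp hx
    refine ⟨c, hc, ?_⟩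
    rw [← hc]
    exact NVP_quad_eval (T lam) (fun i => μ (emb2 i)) v2
      (fun i => heig (emb2 i)) horth2 c
  -- eigenvalue comparisons
  have hmu1 : ∀ i : Fin ((k:ℕ)+1), μ k ≤ μ (Fin.castLE hk1n i) := by
    intro i
    apply hanti
    rw [Fin.le_def]
    simpa using Nat.lt_succ_iff.mp i.isLt
  have hmu2 : ∀ i : Fin (n - (k:ℕ)), μ (emb2 i) ≤ μ k := by
    intro i
    apply hanti
    rw [Fin.le_def, hemb2]
    simp
  -- nonzero coefficient existence
  have hcex : ∀ {ι : Type} [Fintype ι] (c : ι → ℂ) (u : ι → Fin n → ℂ) (x : Fin n → ℂ),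
      (∑ i, c i • u i = x) → x ≠ 0 → ∃ i, c i ≠ 0 := by
    intro ι _ c u x hc hx
    by_contra hcc
    push_neg at hcc
    apply hx
    rw [← hc]
    apply Finset.sum_eq_zero
    intro i _
    rw [hcc i, zero_smul]
  -- Claim B : μ k ≤ 0
  have hclaimB : μ k ≤ 0 := by
    by_contra hB
    push_neg at hB
    obtain ⟨x₀, hx₀S, hx₀0, hx₀P, -⟩ := hPmaker _ hS1rank
    obtain ⟨c, hc, hq⟩ := hquad1 x₀ hx₀S
    obtain ⟨i0, hi0⟩ := hcex c v1 x₀ hc hx₀0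
    have hq0 : 0 < (star x₀ ⬝ᵥ T lam *ᵥ x₀).re := by
      rw [hq]
      apply Finset.sum_pos'
      · intro i _
        exact mul_nonneg (le_of_lt (lt_of_lt_of_le hB (hmu1 i))) (Complex.normSq_nonneg _)
      · exact ⟨i0, Finset.mem_univ _,
          mul_pos (lt_of_lt_of_le hB (hmu1 i0)) (Complex.normSq_pos.mpr hi0)⟩
    have h1 := sign_lt x₀ hx₀0 lam hlamIoo hq0
    have h2 := csInf_le hbddP hx₀P
    linarith
  -- Claim A : 0 ≤ μ k
  have hclaimA : 0 ≤ μ k := by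
    by_contra hAneg
    push_neg at hAneg
    have hneg : ∀ x ∈ Submodule.span ℂ (Set.range v2), x ≠ 0 →
        (star x ⬝ᵥ T lam *ᵥ x).re < 0 := by
      intro x hxS hx0
      obtain ⟨c, hc, hq⟩ := hquad2 x hxS
      obtain ⟨i0, hi0⟩ := hcex c v2 x hc hx0
      rw [hq]
      have hpos' : 0 < ∑ i, -(μ (emb2 i) * Complex.normSq (c i)) := by
        apply Finset.sum_pos'
        · intro i _
          simp only [neg_nonneg]
          exact mul_nonpos_of_nonpos_of_nonneg (le_of_lt (lt_of_le_of_lt (hmu2 i) hAneg))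
            (Complex.normSq_nonneg _)
        · refine ⟨i0, Finset.mem_univ _, ?_⟩
          simp only [neg_pos]
          exact mul_neg_of_neg_of_pos (lt_of_le_of_lt (hmu2 i0) hAneg)
            (Complex.normSq_pos.mpr hi0)
      rw [Finset.sum_neg_distrib] at hpos'
      linarith
    have h0nk : 0 < n - (k:ℕ) := by omega
    have hv20 : v2 ⟨0, h0nk⟩ ∈ Submodule.span ℂ (Set.range v2) :=
      Submodule.subset_span (Set.mem_range_self _)
    obtain ⟨-, y₁, hy₁S, hy₁0, hleast⟩ :=
      NVP_rho_attains ρ hρcont hscale' (Submodule.span ℂ (Set.range v2)) _ hv20 (hwne _)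
    have hlamlt : lam < ρ y₁ := sign_gt y₁ hy₁0 lam hlamIoo (hneg y₁ hy₁S hy₁0)
    have hlb : ∀ r ∈ P, ρ y₁ ≤ r := by
      rintro r ⟨S, hS, hgr⟩
      obtain ⟨y, hyS, hyS2, hy0⟩ := NVP_exists_mem_inf S (Submodule.span ℂ (Set.range v2))
        (by rw [hS, hS2rank]; omega)
      have h1 : ρ y ≤ r := hgr.2 ⟨y, ⟨hyS, hy0⟩, rfl⟩
      have h2 : ρ y₁ ≤ ρ y := hleast.2 ⟨y, ⟨hyS2, hy0⟩, rfl⟩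
      linarith
    have := le_csInf hPne hlb
    linarith
  have hμk : μ k = 0 := le_antisymm hclaimB hclaimA
  -- ρ is bounded by lam on the two spans
  have hub1 : ∀ x ∈ Submodule.span ℂ (Set.range v1), x ≠ 0 → ρ x ≤ lam := by
    intro x hxS hx0
    obtain ⟨c, hc, hq⟩ := hquad1 x hxS
    apply sign_le x hx0 lam hlamIoo
    rw [hq]
    apply Finset.sum_nonneg
    intro i _
    have := hmu1 i
    exact mul_nonneg (by linarith [hμk ▸ hmu1 i]) (Complex.normSq_nonneg _)
  have hlb2 : ∀ x ∈ Submodule.span ℂ (Set.range v2), x ≠ 0 → lam ≤ ρ x := by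
    intro x hxS hx0
    obtain ⟨c, hc, hq⟩ := hquad2 x hxS
    apply sign_ge x hx0 lam hlamIoo
    rw [hq]
    apply Finset.sum_nonpos
    intro i _
    exact mul_nonpos_of_nonpos_of_nonneg (by linarith [hμk ▸ hmu2 i]) (Complex.normSq_nonneg _)
  -- w k belongs to both spans
  have hwkS1 : w k ∈ Submodule.span ℂ (Set.range v1) := by
    have h1 : v1 ⟨(k:ℕ), Nat.lt_succ_self _⟩ = w k := by
      rw [hv1]
      congr 1
    rw [← h1]
    exact Submodule.subset_span (Set.mem_range_self _)
  have hwkS2 : w k ∈ Submodule.span ℂ (Set.range v2) := by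
    have h0nk : 0 < n - (k:ℕ) := by omega
    have h1 : v2 ⟨0, h0nk⟩ = w k := by
      rw [hv2]
      congr 1
    rw [← h1]
    exact Submodule.subset_span (Set.mem_range_self _)
  -- ρ (w k) = lam
  have hqwk : star (w k) ⬝ᵥ T lam *ᵥ (w k) = 0 := by
    rw [heig k, dotProduct_smul, horth k k]
    simp [hμk]
  have hρwk : ρ (w k) = lam := (hρuniq (w k) (hwne k) lam hlamIoo hqwk).symm
  -- assemble everything
  refine ⟨lam, hlamIoo, ⟨μ, hanti, hchar, hμk⟩, ⟨?_, fun r hr => csInf_le hbddP hr⟩, ?_, ?_⟩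
  · -- lam ∈ P
    refine ⟨Submodule.span ℂ (Set.range v1), hS1rank,
      ⟨⟨w k, ⟨hwkS1, hwne k⟩, hρwk⟩, ?_⟩⟩
    rintro r ⟨x, ⟨hxS, hx0⟩, rfl⟩
    exact hub1 x hxS hx0
  · -- lam ∈ Q
    refine ⟨Submodule.span ℂ (Set.range v2), hS2rank,
      ⟨⟨w k, ⟨hwkS2, hwne k⟩, hρwk⟩, ?_⟩⟩
    rintro r ⟨x, ⟨hxS, hx0⟩, rfl⟩
    exact hlb2 x hxS hx0
  · -- lam is an upper bound for Q
    rintro r ⟨S, hS, hle⟩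
    obtain ⟨y, hyS, hyS1, hy0⟩ := NVP_exists_mem_inf S (Submodule.span ℂ (Set.range v1))
      (by rw [hS, hS1rank]; omega)
    have h1 : r ≤ ρ y := hle.2 ⟨y, ⟨hyS, hy0⟩, rfl⟩
    have h2 : ρ y ≤ lam := hub1 y hyS1 hy0
    linarith
end

section
/- Assume the interval J = (a,b) is of negative type and T is continuously differentiable on (a,b). Then for every k ∈ {1,…,n} there exists λ_k ∈ (a,b) that is the k-th eigenvalue of T(·) (zero is the k-th largest eigenvalue, counted with multiplicity, of the Hermitian matrix T(λ_k)), and λ_k satisfies the max-min characterizations: λ_k equals the maximum over all ℂ-subspaces S ⊆ ℂ^n with dim S = k of the minimum of ρ(x) over nonzero x ∈ S, and λ_k also equals the minimum over all ℂ-subspaces S ⊆ ℂ^n with dim S = n−k+1 of the maximum of ρ(x) over nonzero x ∈ S (all the indicated extrema are attained). -/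
open Matrix Set
open scoped ComplexOrder

private lemma charpoly_similar {n : ℕ} (P Q D : Matrix (Fin n) (Fin n) ℂ)
    (h1 : P * Q = 1) : (P * D * Q).charpoly = D.charpoly := by
  have hch : ∀ M : Matrix (Fin n) (Fin n) ℂ,
      charmatrix M = (Polynomial.X : Polynomial ℂ) • (1 : Matrix (Fin n) (Fin n) (Polynomial ℂ))
        - M.map Polynomial.C := by
    intro M
    ext i j
    by_cases h : i = j
    · subst h; simp [charmatrix_apply_eq, Matrix.one_apply, Matrix.map_apply]
    · simp [charmatrix_apply_ne _ _ _ h, Matrix.one_apply_ne h, Matrix.map_apply]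
  have hmap : ∀ M N : Matrix (Fin n) (Fin n) ℂ,
      (M * N).map (Polynomial.C : ℂ →+* Polynomial ℂ) =
        M.map Polynomial.C * N.map Polynomial.C := fun M N =>
    Matrix.map_mul
  have key : charmatrix (P * D * Q) =
      (P.map Polynomial.C) * charmatrix D * (Q.map Polynomial.C) := by
    rw [hch, hch]
    rw [Matrix.mul_sub, Matrix.sub_mul]
    congr 1
    · rw [mul_smul_comm, mul_one, Matrix.smul_mul, ← hmap, h1, Matrix.map_one _ (map_zero _) (map_one _)]
    · rw [← hmap, ← hmap]
  unfold Matrix.charpoly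
  rw [key, Matrix.det_mul, Matrix.det_mul]
  have : (P.map (Polynomial.C : ℂ →+* Polynomial ℂ)).det * (Q.map Polynomial.C).det = 1 := by
    rw [← Matrix.det_mul, ← hmap, h1, Matrix.map_one _ (map_zero _) (map_one _), Matrix.det_one]
  calc (P.map Polynomial.C).det * (charmatrix D).det * (Q.map Polynomial.C).det
      = (charmatrix D).det * ((P.map Polynomial.C).det * (Q.map Polynomial.C).det) := by ring
    _ = (charmatrix D).det := by rw [this, mul_one]

private lemma charpoly_diag {n : ℕ} (d : Fin n → ℂ) :
    (Matrix.diagonal d).charpoly = ∏ i, (Polynomial.X - Polynomial.C (d i)) := by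
  rw [Matrix.charpoly_of_upperTriangular _ (Matrix.blockTriangular_diagonal d)]
  simp

private lemma form_apply_sum {n : ℕ} {ι : Type*} [Fintype ι] [DecidableEq ι]
    (A : Matrix (Fin n) (Fin n) ℂ)
    (w : ι → (Fin n → ℂ)) (μ : ι → ℝ)
    (horth : ∀ i j, star (w i) ⬝ᵥ w j = if i = j then 1 else 0)
    (heig : ∀ i, A *ᵥ w i = (μ i : ℂ) • w i) (c : ι → ℂ) :
    star (∑ i, c i • w i) ⬝ᵥ A *ᵥ (∑ i, c i • w i)
      = ((∑ i, μ i * Complex.normSq (c i) : ℝ) : ℂ) := by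
  have hAx : A *ᵥ (∑ i, c i • w i) = ∑ i, ((μ i : ℂ) * c i) • w i := by
    rw [← A.mulVecLin_apply, map_sum]
    refine Finset.sum_congr rfl fun i _ => ?_
    rw [LinearMap.map_smul, A.mulVecLin_apply, heig i, smul_smul, mul_comm]
  have sum_dot : ∀ (f : ι → (Fin n → ℂ)) (v : Fin n → ℂ),
      (∑ i, f i) ⬝ᵥ v = ∑ i, f i ⬝ᵥ v := by
    intro f v
    simp only [dotProduct, Finset.sum_apply, Finset.sum_mul]
    rw [Finset.sum_comm]
  have dot_sum : ∀ (v : Fin n → ℂ) (f : ι → (Fin n → ℂ)),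
      v ⬝ᵥ (∑ i, f i) = ∑ i, v ⬝ᵥ f i := by
    intro v f
    simp only [dotProduct, Finset.sum_apply, Finset.mul_sum]
    rw [Finset.sum_comm]
  rw [hAx, star_sum, sum_dot]
  have hterm : ∀ j : ι, star (c j • w j) ⬝ᵥ (∑ i, ((μ i : ℂ) * c i) • w i)
      = (starRingEnd ℂ (c j)) * ((μ j : ℂ) * c j) := by
    intro j
    rw [star_smul, smul_dotProduct, dot_sum]
    have : ∀ i : ι, star (w j) ⬝ᵥ (((μ i : ℂ) * c i) • w i)
        = ((μ i : ℂ) * c i) * (if j = i then 1 else 0) := by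
      intro i
      rw [dotProduct_smul, horth j i, smul_eq_mul]
    simp only [this, mul_ite, mul_one, mul_zero]
    rw [Finset.sum_ite_eq Finset.univ j (fun i => (μ i : ℂ) * c i)]
    simp [smul_eq_mul]
  simp only [hterm]
  push_cast
  refine Finset.sum_congr rfl fun j _ => ?_
  rw [Complex.normSq_eq_conj_mul_self]
  ring

private lemma dot_single_coeff {n : ℕ} {ι : Type*} [Fintype ι] [DecidableEq ι]
    (w : ι → (Fin n → ℂ))
    (horth : ∀ i j, star (w i) ⬝ᵥ w j = if i = j then 1 else 0)
    (c : ι → ℂ) (j : ι) :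
    star (w j) ⬝ᵥ (∑ i, c i • w i) = c j := by
  have dot_sum : ∀ (v : Fin n → ℂ) (f : ι → (Fin n → ℂ)),
      v ⬝ᵥ (∑ i, f i) = ∑ i, v ⬝ᵥ f i := by
    intro v f
    simp only [dotProduct, Finset.sum_apply, Finset.mul_sum]
    rw [Finset.sum_comm]
  rw [dot_sum]
  have : ∀ i : ι, star (w j) ⬝ᵥ (c i • w i) = c i * (if j = i then 1 else 0) := by
    intro i
    rw [dotProduct_smul, horth j i, smul_eq_mul]
  simp only [this, mul_ite, mul_one, mul_zero]
  rw [Finset.sum_ite_eq Finset.univ j c]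
  simp

private lemma orth_linearIndependent {n : ℕ} {ι : Type*} [Fintype ι] [DecidableEq ι]
    (w : ι → (Fin n → ℂ))
    (horth : ∀ i j, star (w i) ⬝ᵥ w j = if i = j then 1 else 0) :
    LinearIndependent ℂ w := by
  rw [Fintype.linearIndependent_iff]
  intro c hc j
  have := dot_single_coeff w horth c j
  rw [hc] at this
  simpa using this.symm

private lemma finrank_span_orth {n : ℕ} {ι : Type*} [Fintype ι] [DecidableEq ι]
    (w : ι → (Fin n → ℂ))
    (horth : ∀ i j, star (w i) ⬝ᵥ w j = if i = j then 1 else 0) :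
    Module.finrank ℂ (Submodule.span ℂ (Set.range w)) = Fintype.card ι :=
  finrank_span_eq_card (orth_linearIndependent w horth)

private lemma orth_ne_zero {n : ℕ} {ι : Type*} [Fintype ι] [DecidableEq ι]
    (w : ι → (Fin n → ℂ))
    (horth : ∀ i j, star (w i) ⬝ᵥ w j = if i = j then 1 else 0) (j : ι) :
    w j ≠ 0 := by
  intro h
  have := horth j j
  rw [h] at this
  simp at this

private lemma sum_mul_normSq_pos {ι : Type*} [Fintype ι] (μ : ι → ℝ) (c : ι → ℂ)
    (h : ∀ i, 0 < μ i) (hc : ∃ i, c i ≠ 0) :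
    0 < ∑ i, μ i * Complex.normSq (c i) := by
  obtain ⟨i0, hi0⟩ := hc
  refine Finset.sum_pos' (fun i _ => mul_nonneg (h i).le (Complex.normSq_nonneg _)) ⟨i0,
    Finset.mem_univ _, mul_pos (h i0) (by simpa [Complex.normSq_pos] using hi0)⟩

private lemma sum_mul_normSq_nonpos {ι : Type*} [Fintype ι] (μ : ι → ℝ) (c : ι → ℂ)
    (h : ∀ i, μ i ≤ 0) :
    ∑ i, μ i * Complex.normSq (c i) ≤ 0 :=
  Finset.sum_nonpos fun i _ => mul_nonpos_iff.mpr (Or.inr ⟨h i, Complex.normSq_nonneg _⟩)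

private lemma sum_mul_normSq_nonneg {ι : Type*} [Fintype ι] (μ : ι → ℝ) (c : ι → ℂ)
    (h : ∀ i, 0 ≤ μ i) :
    0 ≤ ∑ i, μ i * Complex.normSq (c i) :=
  Finset.sum_nonneg fun i _ => mul_nonneg (h i) (Complex.normSq_nonneg _)

/-- nonlinear variational principle (max-min form) on an interval of
negative type: for each `k` there is a `k`-th eigenvalue `λₖ ∈ (a,b)` of `T(·)`
satisfying the max-min and min-max characterizations of the Rayleigh functional,
with all extrema attained.  (`k : Fin n` is zero-based: dimension `k+1` subspaces
for the max-min, dimension `n-k` for the min-max.) -/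
theorem nonlinear_variational_principle_negative_type
    (n : ℕ) (hn : 1 ≤ n) (a b : ℝ) (hab : a < b)
    (T T' : ℝ → Matrix (Fin n) (Fin n) ℂ)
    (hTcont : ContinuousOn T (Set.Icc a b))
    (hTherm : ∀ μ ∈ Set.Icc a b, (T μ).IsHermitian)
    (hT'deriv : ∀ μ ∈ Set.Ioo a b, ∀ i j : Fin n,
      HasDerivAt (fun t : ℝ => T t i j) (T' μ i j) μ)
    (hT'cont : ContinuousOn T' (Set.Ioo a b))
    (ρ : (Fin n → ℂ) → ℝ)
    (hρcont : ContinuousOn ρ {x : Fin n → ℂ | x ≠ 0})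
    (hρmem : ∀ x : Fin n → ℂ, x ≠ 0 → ρ x ∈ Set.Ioo a b)
    (hρroot : ∀ x : Fin n → ℂ, x ≠ 0 → star x ⬝ᵥ (T (ρ x)) *ᵥ x = 0)
    (hρuniq : ∀ x : Fin n → ℂ, x ≠ 0 → ∀ μ ∈ Set.Ioo a b,
      star x ⬝ᵥ (T μ) *ᵥ x = 0 → μ = ρ x)
    (hneg : ∀ x : Fin n → ℂ, x ≠ 0 → ∀ μ ∈ Set.Ioo a b, μ ≠ ρ x →
      (μ - ρ x) * (star x ⬝ᵥ (T μ) *ᵥ x).re < 0) :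
    ∀ k : Fin n, ∃ lam ∈ Set.Ioo a b,
      ZeroIsKthLargestEigenvalue (T lam) k ∧
      IsGreatest {r : ℝ | ∃ S : Submodule ℂ (Fin n → ℂ), Module.finrank ℂ S = (k : ℕ) + 1 ∧
        IsLeast (ρ '' {x : Fin n → ℂ | x ∈ S ∧ x ≠ 0}) r} lam ∧
      IsLeast {r : ℝ | ∃ S : Submodule ℂ (Fin n → ℂ), Module.finrank ℂ S = n - (k : ℕ) ∧
        IsGreatest (ρ '' {x : Fin n → ℂ | x ∈ S ∧ x ≠ 0}) r} lam := by
  intro k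
  classical
  have hkn : (k : ℕ) < n := k.isLt
  have hIcc : Set.Ioo a b ⊆ Set.Icc a b := Set.Ioo_subset_Icc_self
  -- sign lemmas
  have heq0 : ∀ x : Fin n → ℂ, x ≠ 0 → (star x ⬝ᵥ T (ρ x) *ᵥ x).re = 0 := by
    intro x hx; rw [hρroot x hx]; simp
  have hlt : ∀ (x : Fin n → ℂ), x ≠ 0 → ∀ μ ∈ Set.Ioo a b, μ < ρ x →
      0 < (star x ⬝ᵥ T μ *ᵥ x).re := by
    intro x hx μ hμ h
    have h1 := hneg x hx μ hμ (ne_of_lt h)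
    nlinarith
  have hgt : ∀ (x : Fin n → ℂ), x ≠ 0 → ∀ μ ∈ Set.Ioo a b, ρ x < μ →
      (star x ⬝ᵥ T μ *ᵥ x).re < 0 := by
    intro x hx μ hμ h
    have h1 := hneg x hx μ hμ (ne_of_gt h)
    nlinarith
  have hge_ρ : ∀ (x : Fin n → ℂ), x ≠ 0 → ∀ μ ∈ Set.Ioo a b,
      0 ≤ (star x ⬝ᵥ T μ *ᵥ x).re → μ ≤ ρ x := by
    intro x hx μ hμ h
    by_contra hc
    push_neg at hc
    have := hgt x hx μ hμ hc
    linarith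
  have hle_ρ : ∀ (x : Fin n → ℂ), x ≠ 0 → ∀ μ ∈ Set.Ioo a b,
      (star x ⬝ᵥ T μ *ᵥ x).re ≤ 0 → ρ x ≤ μ := by
    intro x hx μ hμ h
    by_contra hc
    push_neg at hc
    have := hlt x hx μ hμ hc
    linarith
  have hgt_ρ : ∀ (x : Fin n → ℂ), x ≠ 0 → ∀ μ ∈ Set.Ioo a b,
      0 < (star x ⬝ᵥ T μ *ᵥ x).re → μ < ρ x := by
    intro x hx μ hμ h
    rcases lt_trichotomy μ (ρ x) with h1 | h1 | h1
    · exact h1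
    · subst h1; rw [heq0 x hx] at h; linarith
    · have := hgt x hx μ hμ h1; linarith
  have hlt_ρ : ∀ (x : Fin n → ℂ), x ≠ 0 → ∀ μ ∈ Set.Ioo a b,
      (star x ⬝ᵥ T μ *ᵥ x).re < 0 → ρ x < μ := by
    intro x hx μ hμ h
    rcases lt_trichotomy μ (ρ x) with h1 | h1 | h1
    · have := hlt x hx μ hμ h1; linarith
    · subst h1; rw [heq0 x hx] at h; linarith
    · exact h1
  -- scaling invariance of ρ
  have hρs : ∀ (x : Fin n → ℂ), x ≠ 0 → ∀ c : ℂ, c ≠ 0 → ρ (c • x) = ρ x := by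
    intro x hx c hc
    have hcx : c • x ≠ 0 := smul_ne_zero hc hx
    refine (hρuniq (c • x) hcx (ρ x) (hρmem x hx) ?_).symm
    have h2 : star (c • x) ⬝ᵥ T (ρ x) *ᵥ (c • x)
        = (starRingEnd ℂ c * c) * (star x ⬝ᵥ T (ρ x) *ᵥ x) := by
      rw [Matrix.mulVec_smul, star_smul, smul_dotProduct, dotProduct_smul,
        smul_eq_mul, smul_eq_mul]
      rw [RCLike.star_def]
      ring
    rw [h2, hρroot x hx, mul_zero]
  -- normalization
  have hnorm1 : ∀ x : Fin n → ℂ, x ≠ 0 → ∃ c : ℂ, c ≠ 0 ∧ ‖c • x‖ = 1 := by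
    intro x hx
    have hxn : ‖x‖ ≠ 0 := norm_ne_zero_iff.mpr hx
    refine ⟨((‖x‖⁻¹ : ℝ) : ℂ), by exact_mod_cast inv_ne_zero hxn, ?_⟩
    rw [norm_smul]
    simp [norm_inv, inv_mul_cancel₀ hxn]
  -- existence of extrema of ρ on subspaces
  have hminmax : ∀ S : Submodule ℂ (Fin n → ℂ), (∃ x, x ∈ S ∧ x ≠ 0) →
      (∃ x0, x0 ∈ S ∧ x0 ≠ 0 ∧ ∀ x, x ∈ S → x ≠ 0 → ρ x0 ≤ ρ x) ∧
      (∃ x1, x1 ∈ S ∧ x1 ≠ 0 ∧ ∀ x, x ∈ S → x ≠ 0 → ρ x ≤ ρ x1) := by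
    intro S hS
    obtain ⟨z, hzS, hz⟩ := hS
    set K : Set (Fin n → ℂ) := (S : Set (Fin n → ℂ)) ∩ Metric.sphere 0 1 with hK
    have hKne0 : ∀ x ∈ K, x ≠ 0 := by
      intro x hx
      have : ‖x‖ = 1 := by
        have := hx.2
        simpa [mem_sphere_iff_norm] using this
      intro h0
      rw [h0] at this
      simp at this
    have hKsub : K ⊆ {x : Fin n → ℂ | x ≠ 0} := fun x hx => hKne0 x hx
    have hKc : IsCompact K := ((isCompact_sphere (0 : Fin n → ℂ) 1).inter_left
      S.closed_of_finiteDimensional)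
    have hKne : K.Nonempty := by
      obtain ⟨c, hc, hcn⟩ := hnorm1 z hz
      exact ⟨c • z, ⟨S.smul_mem c hzS, by simpa [mem_sphere_iff_norm] using hcn⟩⟩
    have hρK : ContinuousOn ρ K := hρcont.mono hKsub
    have hgen : ∀ x, x ∈ S → x ≠ 0 → ∃ y ∈ K, ρ y = ρ x := by
      intro x hxS hx
      obtain ⟨c, hc, hcn⟩ := hnorm1 x hx
      exact ⟨c • x, ⟨S.smul_mem c hxS, by simpa [mem_sphere_iff_norm] using hcn⟩, hρs x hx c hc⟩
    constructor
    · obtain ⟨x0, hx0K, hx0min⟩ := hKc.exists_isMinOn hKne hρK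
      refine ⟨x0, hx0K.1, hKne0 x0 hx0K, ?_⟩
      intro x hxS hx
      obtain ⟨y, hyK, hy⟩ := hgen x hxS hx
      rw [← hy]
      exact hx0min hyK
    · obtain ⟨x1, hx1K, hx1max⟩ := hKc.exists_isMaxOn hKne hρK
      refine ⟨x1, hx1K.1, hKne0 x1 hx1K, ?_⟩
      intro x hxS hx
      obtain ⟨y, hyK, hy⟩ := hgen x hxS hx
      rw [← hy]
      exact hx1max hyK
  -- nonzero element of positive-finrank submodule
  have hSnz : ∀ S : Submodule ℂ (Fin n → ℂ), 0 < Module.finrank ℂ S →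
      ∃ x, x ∈ S ∧ x ≠ 0 := by
    intro S hS
    have : Nontrivial S := Module.finrank_pos_iff.mp hS
    obtain ⟨y, hy⟩ := exists_ne (0 : S)
    exact ⟨(y : Fin n → ℂ), y.2, by simpa [Submodule.coe_eq_zero] using hy⟩
  have hfrtop : Module.finrank ℂ (Fin n → ℂ) = n := by
    simp
  have hinter : ∀ S1 S2 : Submodule ℂ (Fin n → ℂ),
      n < Module.finrank ℂ S1 + Module.finrank ℂ S2 →
      ∃ x, x ∈ S1 ∧ x ∈ S2 ∧ x ≠ 0 := by
    intro S1 S2 h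
    have h1 : Module.finrank ℂ (S1 ⊔ S2 : Submodule ℂ (Fin n → ℂ)) ≤ n := by
      exact (Submodule.finrank_le _).trans_eq hfrtop
    have h2 := Submodule.finrank_sup_add_finrank_inf_eq S1 S2
    have h3 : 0 < Module.finrank ℂ (S1 ⊓ S2 : Submodule ℂ (Fin n → ℂ)) := by omega
    obtain ⟨x, hx, hxne⟩ := hSnz _ h3
    exact ⟨x, (Submodule.mem_inf.mp hx).1, (Submodule.mem_inf.mp hx).2, hxne⟩
  -- a first subspace of dimension k+1 (from the standard basis)
  have hsb : ∃ S : Submodule ℂ (Fin n → ℂ), Module.finrank ℂ S = (k : ℕ) + 1 := by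
    set w0 : Fin ((k : ℕ) + 1) → (Fin n → ℂ) := fun j => Pi.single (Fin.castLE hkn j) 1 with hw0
    have horth0 : ∀ i j, star (w0 i) ⬝ᵥ w0 j = if i = j then 1 else 0 := by
      intro i j
      rw [hw0]
      simp only []
      rw [dotProduct_single, mul_one, Pi.star_apply, Pi.single_apply]
      by_cases h : i = j
      · subst h; simp
      · rw [if_neg (fun hc => h (Fin.castLE_injective hkn hc).symm), if_neg h]
        simp
    exact ⟨Submodule.span ℂ (Set.range w0), by
      rw [finrank_span_orth w0 horth0]; simp⟩
  obtain ⟨S0, hS0rank⟩ := hsb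
  obtain ⟨⟨x1, hx1S, hx1ne, hx1min⟩, -⟩ := hminmax S0 (hSnz S0 (by omega))
  -- global maximum of ρ
  obtain ⟨-, ⟨xM, -, hxMne, hxMmax⟩⟩ := hminmax ⊤ (hSnz ⊤ (by rw [finrank_top, hfrtop]; omega))
  -- the admissible set A and its supremum lam
  set A : Set ℝ := {μ | μ ∈ Set.Ioo a b ∧ ∃ S : Submodule ℂ (Fin n → ℂ),
      Module.finrank ℂ S = (k : ℕ) + 1 ∧ ∀ x, x ∈ S → x ≠ 0 → μ ≤ ρ x} with hA
  have hAx1 : ρ x1 ∈ A := ⟨hρmem x1 hx1ne, S0, hS0rank, fun x hxS hx => hx1min x hxS hx⟩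
  have hAne : A.Nonempty := ⟨ρ x1, hAx1⟩
  have hAbdd' : ∀ μ ∈ A, μ ≤ ρ xM := by
    rintro μ ⟨hμIoo, S, hSr, hSmin⟩
    obtain ⟨x, hxS, hx⟩ := hSnz S (by omega)
    exact le_trans (hSmin x hxS hx) (hxMmax x trivial hx)
  have hAbdd : BddAbove A := ⟨ρ xM, fun μ hμ => hAbdd' μ hμ⟩
  set lam := sSup A with hlam
  have hlam_ge : ρ x1 ≤ lam := le_csSup hAbdd hAx1
  have hlam_le : lam ≤ ρ xM := csSup_le hAne hAbdd'
  have hlamIoo : lam ∈ Set.Ioo a b :=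
    ⟨lt_of_lt_of_le (hρmem x1 hx1ne).1 hlam_ge, lt_of_le_of_lt hlam_le (hρmem xM hxMne).2⟩
  -- eigen-decomposition of T lam
  have hH : (T lam).IsHermitian := hTherm lam (hIcc hlamIoo)
  set w : Fin n → (Fin n → ℂ) := fun i => ⇑(hH.eigenvectorBasis i) with hwdef
  set ev : Fin n → ℝ := hH.eigenvalues with hev
  have horthw : ∀ i j, star (w i) ⬝ᵥ w j = if i = j then 1 else 0 := by
    intro i j
    have h1 := orthonormal_iff_ite.mp hH.eigenvectorBasis.orthonormal i j
    rw [EuclideanSpace.inner_eq_star_dotProduct] at h1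
    rw [dotProduct_comm] at h1
    exact h1
  have heigw : ∀ i, T lam *ᵥ w i = ((ev i : ℝ) : ℂ) • w i := by
    intro i
    rw [hwdef]
    simp only []
    rw [hH.mulVec_eigenvectorBasis i]
    ext t
    simp [Complex.real_smul, hev]
  have hwne : ∀ i, w i ≠ 0 := fun i => orth_ne_zero w horthw i
  -- spans of eigenvector families
  set SpanF : Finset (Fin n) → Submodule ℂ (Fin n → ℂ) :=
    fun I => Submodule.span ℂ (Set.range (fun i : I => w i)) with hSpanF
  have horthI : ∀ I : Finset (Fin n), ∀ i j : I,
      star (w (i : Fin n)) ⬝ᵥ w (j : Fin n) = if i = j then 1 else 0 := by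
    intro I i j
    rw [horthw]
    by_cases h : i = j
    · subst h; simp
    · rw [if_neg h, if_neg (fun hc => h (Subtype.ext hc))]
  have hrankI : ∀ I : Finset (Fin n), Module.finrank ℂ (SpanF I) = I.card := by
    intro I
    rw [hSpanF]
    rw [finrank_span_orth _ (horthI I), Fintype.card_coe]
  have hmemI : ∀ (I : Finset (Fin n)) (i : Fin n), i ∈ I → w i ∈ SpanF I :=
    fun I i hi => Submodule.subset_span ⟨⟨i, hi⟩, rfl⟩
  have hformI : ∀ (I : Finset (Fin n)) (x : Fin n → ℂ), x ∈ SpanF I → ∃ c : I → ℂ,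
      x = ∑ i : I, c i • w (i : Fin n) ∧
      (star x ⬝ᵥ T lam *ᵥ x).re = ∑ i : I, ev (i : Fin n) * Complex.normSq (c i) := by
    intro I x hx
    rw [hSpanF] at hx
    obtain ⟨c, hc⟩ := Submodule.mem_span_range_iff_exists_fun ℂ |>.mp hx
    refine ⟨c, hc.symm, ?_⟩
    rw [← hc, form_apply_sum (T lam) (fun i : I => w (i : Fin n)) (fun i : I => ev (i : Fin n))
      (horthI I) (fun i => heigw (i : Fin n)) c]
    simp
  have hcne : ∀ (I : Finset (Fin n)) (c : I → ℂ), (∑ i : I, c i • w (i : Fin n)) ≠ 0 →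
      ∃ i, c i ≠ 0 := by
    intro I c h
    by_contra hc
    push_neg at hc
    exact h (by simp [hc])
  -- eigenvalue sign counts
  set Pos : Finset (Fin n) := Finset.univ.filter (fun i => ¬ ev i ≤ 0) with hPosdef
  set Nonpos : Finset (Fin n) := Finset.univ.filter (fun i => ev i ≤ 0) with hNonposdef
  set Neg : Finset (Fin n) := Finset.univ.filter (fun i => ¬ 0 ≤ ev i) with hNegdef
  set Nonneg : Finset (Fin n) := Finset.univ.filter (fun i => 0 ≤ ev i) with hNonnegdef
  have hcard1 : Nonpos.card + Pos.card = n := by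
    rw [hNonposdef, hPosdef]
    rw [Finset.card_filter_add_card_filter_not (fun i => ev i ≤ 0)]
    simp
  have hcard2 : Nonneg.card + Neg.card = n := by
    rw [hNonnegdef, hNegdef]
    rw [Finset.card_filter_add_card_filter_not (fun i => 0 ≤ ev i)]
    simp
  have hPos_prop : ∀ j ∈ Pos, 0 < ev j := by
    intro j hj
    rw [hPosdef] at hj
    exact not_le.mp (Finset.mem_filter.mp hj).2
  have hNeg_prop : ∀ j ∈ Neg, ev j < 0 := by
    intro j hj
    rw [hNegdef] at hj
    exact not_le.mp (Finset.mem_filter.mp hj).2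
  have hNonneg_prop : ∀ j ∈ Nonneg, 0 ≤ ev j := by
    intro j hj
    rw [hNonnegdef] at hj
    exact (Finset.mem_filter.mp hj).2
  have hNonpos_prop : ∀ j ∈ Nonpos, ev j ≤ 0 := by
    intro j hj
    rw [hNonposdef] at hj
    exact (Finset.mem_filter.mp hj).2
  have hmem_Nonneg : ∀ j, 0 ≤ ev j → j ∈ Nonneg := by
    intro j hj
    rw [hNonnegdef]
    exact Finset.mem_filter.mpr ⟨Finset.mem_univ _, hj⟩
  have hmem_Nonpos : ∀ j, ev j ≤ 0 → j ∈ Nonpos := by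
    intro j hj
    rw [hNonposdef]
    exact Finset.mem_filter.mpr ⟨Finset.mem_univ _, hj⟩
  -- Fact P : at most k positive eigenvalues
  have hPos_le : Pos.card ≤ (k : ℕ) := by
    by_contra hP
    push_neg at hP
    obtain ⟨I, hIP, hIcard⟩ := Finset.exists_subset_card_eq (n := (k : ℕ) + 1) (by omega : (k : ℕ) + 1 ≤ Pos.card)
    obtain ⟨⟨x0, hx0S, hx0ne, hx0min⟩, -⟩ := hminmax (SpanF I) (hSnz _ (by rw [hrankI]; omega))
    obtain ⟨c, hcx, hcform⟩ := hformI I x0 hx0S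
    have hrepos : 0 < (star x0 ⬝ᵥ T lam *ᵥ x0).re := by
      rw [hcform]
      exact sum_mul_normSq_pos _ _ (fun i => hPos_prop _ (hIP i.2)) (hcne I c (hcx ▸ hx0ne))
    have hlam_lt : lam < ρ x0 := hgt_ρ x0 hx0ne lam hlamIoo hrepos
    have hx0A : ρ x0 ∈ A := ⟨hρmem x0 hx0ne, SpanF I, by rw [hrankI, hIcard],
      fun x hxS hx => hx0min x hxS hx⟩
    have := le_csSup hAbdd hx0A
    rw [← hlam] at this
    linarith
  -- Fact N : at most n - k - 1 negative eigenvalues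
  have hNeg_le : Neg.card + (k : ℕ) + 1 ≤ n := by
    by_contra hN
    push_neg at hN
    obtain ⟨-, ⟨xN, hxNS, hxNne, hxNmax⟩⟩ := hminmax (SpanF Neg) (hSnz _ (by rw [hrankI]; omega))
    obtain ⟨c, hcx, hcform⟩ := hformI Neg xN hxNS
    have hreneg : (star xN ⬝ᵥ T lam *ᵥ xN).re < 0 := by
      rw [hcform]
      have hpos := sum_mul_normSq_pos (fun i : Neg => -ev (i : Fin n)) c
        (fun i => by have := hNeg_prop _ i.2; show (0:ℝ) < -ev (i : Fin n); linarith) (hcne Neg c (hcx ▸ hxNne))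
      have heq2 : ∑ i : Neg, ev (i : Fin n) * Complex.normSq (c i)
          = -∑ i : Neg, (-ev (i : Fin n)) * Complex.normSq (c i) := by
        rw [← Finset.sum_neg_distrib]
        refine Finset.sum_congr rfl fun i _ => by ring
      rw [heq2]
      linarith
    have hρxN : ρ xN < lam := hlt_ρ xN hxNne lam hlamIoo hreneg
    obtain ⟨μ, hμA, hμgt⟩ := exists_lt_of_lt_csSup hAne (by rw [← hlam]; exact hρxN)
    obtain ⟨hμIoo, S, hSr, hSmin⟩ := hμA
    obtain ⟨x, hxS, hxN2, hxne⟩ := hinter S (SpanF Neg) (by rw [hSr, hrankI]; omega)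
    have h1 : μ ≤ ρ x := hSmin x hxS hxne
    have h2 : ρ x ≤ ρ xN := hxNmax x hxN2 hxne
    linarith
  -- sorted eigenvalues
  set σ : Equiv.Perm (Fin n) := Tuple.sort (fun i => -ev i) with hσ
  have hmono := Tuple.monotone_sort (fun i => -ev i)
  set μs : Fin n → ℝ := fun i => ev (σ i) with hμs
  have hanti : Antitone μs := by
    intro i j hij
    have h := hmono hij
    simp only [Function.comp_apply] at h
    rw [hμs]
    simp only []
    linarith
  have hcard_eq : ∀ (q : Fin n → Prop) (inst : DecidablePred q),
      (Finset.univ.filter (fun j => q (σ j))).card = (Finset.univ.filter q).card := by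
    intro q _
    refine Finset.card_bij (fun j _ => σ j) ?_ ?_ ?_
    · intro j hj
      simp only [Finset.mem_filter, Finset.mem_univ, true_and] at hj ⊢
      exact hj
    · intro j1 _ j2 _ h
      exact σ.injective h
    · intro i hi
      refine ⟨σ.symm i, ?_, by simp⟩
      simp only [Finset.mem_filter, Finset.mem_univ, true_and] at hi ⊢
      simpa using hi
  have hμs_nonneg : 0 ≤ μs k := by
    by_contra hcon
    push_neg at hcon
    have hsub : (Finset.univ.filter (fun j => 0 ≤ μs j)) ⊆ Finset.Iio k := by
      intro j hj
      rw [Finset.mem_filter] at hj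
      rw [Finset.mem_Iio]
      by_contra hj2
      push_neg at hj2
      have := hanti hj2
      have := hj.2
      linarith
    have hc1 := Finset.card_le_card hsub
    rw [Fin.card_Iio] at hc1
    have hc2 : (Finset.univ.filter (fun j => 0 ≤ μs j)).card = Nonneg.card := by
      rw [hNonnegdef]
      exact hcard_eq (fun i => 0 ≤ ev i) _
    omega
  have hμs_nonpos : μs k ≤ 0 := by
    by_contra hcon
    push_neg at hcon
    have hsub : Finset.Iic k ⊆ Finset.univ.filter (fun j => ¬ μs j ≤ 0) := by
      intro j hj
      rw [Finset.mem_Iic] at hj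
      rw [Finset.mem_filter]
      refine ⟨Finset.mem_univ _, ?_⟩
      push_neg
      exact lt_of_lt_of_le hcon (hanti hj)
    have hc1 := Finset.card_le_card hsub
    rw [Fin.card_Iic] at hc1
    have hside := Finset.card_filter_add_card_filter_not
      (s := (Finset.univ : Finset (Fin n))) (fun j => μs j ≤ 0)
    rw [Finset.card_univ, Fintype.card_fin] at hside
    have hc2 : (Finset.univ.filter (fun j => μs j ≤ 0)).card = Nonpos.card := by
      rw [hNonposdef]
      exact hcard_eq (fun i => ev i ≤ 0) _
    omega
  have hzero : ev (σ k) = 0 := le_antisymm hμs_nonpos hμs_nonneg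
  -- characteristic polynomial
  have hUmul : (hH.eigenvectorUnitary : Matrix (Fin n) (Fin n) ℂ) *
      star (hH.eigenvectorUnitary : Matrix (Fin n) (Fin n) ℂ) = 1 :=
    (Matrix.mem_unitaryGroup_iff).mp hH.eigenvectorUnitary.2
  have hcp : (T lam).charpoly = ∏ i, (Polynomial.X - Polynomial.C ((ev i : ℂ))) := by
    have hst := hH.spectral_theorem
    calc (T lam).charpoly
        = ((hH.eigenvectorUnitary : Matrix (Fin n) (Fin n) ℂ) *
            Matrix.diagonal (RCLike.ofReal ∘ hH.eigenvalues) *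
            star (hH.eigenvectorUnitary : Matrix (Fin n) (Fin n) ℂ)).charpoly := by conv_lhs => rw [hst, Unitary.conjStarAlgAut_apply]
      _ = (Matrix.diagonal (RCLike.ofReal ∘ hH.eigenvalues)).charpoly :=
          charpoly_similar _ _ _ hUmul
      _ = ∏ i, (Polynomial.X - Polynomial.C ((ev i : ℂ))) := by
          rw [charpoly_diag]
          rfl
  have hZK : ZeroIsKthLargestEigenvalue (T lam) k := by
    refine ⟨μs, hanti, ?_, hzero⟩
    rw [hcp]
    exact (Equiv.prod_comp σ (fun i => Polynomial.X - Polynomial.C ((ev i : ℂ)))).symm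
  -- the distinguished eigenvector
  set v : Fin n → ℂ := w (σ k) with hvdef
  have hvne : v ≠ 0 := hwne (σ k)
  have hform_v : star v ⬝ᵥ T lam *ᵥ v = 0 := by
    rw [hvdef, heigw (σ k), hzero]
    simp
  have hρv : ρ v = lam := (hρuniq v hvne lam hlamIoo hform_v).symm
  -- semidefiniteness of the form on eigen-spans
  have hpsd : ∀ I : Finset (Fin n), (∀ j ∈ I, 0 ≤ ev j) → ∀ x, x ∈ SpanF I →
      0 ≤ (star x ⬝ᵥ T lam *ᵥ x).re := by
    intro I hI x hxS
    obtain ⟨c, -, hcform⟩ := hformI I x hxS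
    rw [hcform]
    exact sum_mul_normSq_nonneg _ _ (fun i => hI _ i.2)
  have hnsd : ∀ I : Finset (Fin n), (∀ j ∈ I, ev j ≤ 0) → ∀ x, x ∈ SpanF I →
      (star x ⬝ᵥ T lam *ᵥ x).re ≤ 0 := by
    intro I hI x hxS
    obtain ⟨c, -, hcform⟩ := hformI I x hxS
    rw [hcform]
    exact sum_mul_normSq_nonpos _ _ (fun i => hI _ i.2)
  -- choice of the two canonical subspaces
  have hNonneg_card : (k : ℕ) + 1 ≤ Nonneg.card := by omega
  have hNonpos_card : n - (k : ℕ) ≤ Nonpos.card := by omega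
  have hσk_Nonneg : σ k ∈ Nonneg := hmem_Nonneg _ (le_of_eq hzero.symm)
  have hσk_Nonpos : σ k ∈ Nonpos := hmem_Nonpos _ (le_of_eq hzero)
  obtain ⟨Itop, hItop_sub1, hItop_sub2, hItop_card⟩ :=
    Finset.exists_subsuperset_card_eq (s := {σ k}) (t := Nonneg) (n := (k : ℕ) + 1)
      (Finset.singleton_subset_iff.mpr hσk_Nonneg)
      (by rw [Finset.card_singleton]; omega) hNonneg_card
  obtain ⟨Ibot, hIbot_sub1, hIbot_sub2, hIbot_card⟩ :=
    Finset.exists_subsuperset_card_eq (s := {σ k}) (t := Nonpos) (n := n - (k : ℕ))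
      (Finset.singleton_subset_iff.mpr hσk_Nonpos)
      (by rw [Finset.card_singleton]; omega) hNonpos_card
  have hin_top : v ∈ SpanF Itop := hmemI _ _ (hItop_sub1 (Finset.mem_singleton_self _))
  have hin_bot : v ∈ SpanF Ibot := hmemI _ _ (hIbot_sub1 (Finset.mem_singleton_self _))
  -- conclusion
  refine ⟨lam, hlamIoo, hZK, ⟨⟨SpanF Itop, by rw [hrankI, hItop_card], ⟨v, ⟨hin_top, hvne⟩, hρv⟩,
    ?_⟩, ?_⟩, ⟨⟨SpanF Ibot, by rw [hrankI, hIbot_card], ⟨v, ⟨hin_bot, hvne⟩, hρv⟩, ?_⟩, ?_⟩⟩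
  · -- lam is the least value of ρ on SpanF Itop
    rintro r ⟨x, ⟨hxS, hxne⟩, rfl⟩
    exact hge_ρ x hxne lam hlamIoo (hpsd Itop (fun j hj => hNonneg_prop _ (hItop_sub2 hj)) x hxS)
  · -- lam is an upper bound for the max-min set
    rintro r ⟨S, hSr, hrleast⟩
    by_contra hcon
    push_neg at hcon
    obtain ⟨x, hxS, hxS2, hxne⟩ := hinter S (SpanF Nonpos) (by rw [hSr, hrankI]; omega)
    have h1 : r ≤ ρ x := hrleast.2 ⟨x, ⟨hxS, hxne⟩, rfl⟩
    have h2 : 0 < (star x ⬝ᵥ T lam *ᵥ x).re := hlt x hxne lam hlamIoo (by linarith)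
    have h3 := hnsd Nonpos hNonpos_prop x hxS2
    linarith
  · -- lam is the greatest value of ρ on SpanF Ibot
    rintro r ⟨x, ⟨hxS, hxne⟩, rfl⟩
    exact hle_ρ x hxne lam hlamIoo (hnsd Ibot (fun j hj => hNonpos_prop _ (hIbot_sub2 hj)) x hxS)
  · -- lam is a lower bound for the min-max set
    rintro r ⟨S, hSr, hrgreat⟩
    by_contra hcon
    push_neg at hcon
    obtain ⟨x, hxS, hxS2, hxne⟩ := hinter S (SpanF Nonneg) (by rw [hSr, hrankI]; omega)
    have h1 : ρ x ≤ r := hrgreat.2 ⟨x, ⟨hxS, hxne⟩, rfl⟩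
    have h2 : (star x ⬝ᵥ T lam *ᵥ x).re < 0 := hgt x hxne lam hlamIoo (by linarith)
    have h3 := hpsd Nonneg hNonneg_prop x hxS2
    linarith
end

section
/- Assume the interval J = (a,b) is of positive type and T is continuously differentiable on (a,b); for k ∈ {1,…,n} let λ_k denote the minimum over all ℂ-subspaces S ⊆ ℂ^n with dim S = k of the maximum of ρ(x) over nonzero x ∈ S. Then T(·) has exactly n eigenvalues in (a,b) counted with multiplicity: every eigenvalue λ ∈ (a,b) of T(·) equals λ_k for some k ∈ {1,…,n}, and for each eigenvalue λ ∈ (a,b) the number of indices k ∈ {1,…,n} with λ_k = λ equals the dimension of the kernel of T(λ). -/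
open Matrix Set
open scoped ComplexOrder

namespace NEP7

variable {n : ℕ}

lemma qform_smul (M : Matrix (Fin n) (Fin n) ℂ) (c : ℂ) (x : Fin n → ℂ) :
    star (c • x) ⬝ᵥ M *ᵥ (c • x) = (starRingEnd ℂ c * c) * (star x ⬝ᵥ M *ᵥ x) := by
  rw [star_smul, mulVec_smul, smul_dotProduct, dotProduct_smul]
  simp only [smul_eq_mul, Complex.star_def]
  ring

lemma sum_dot {ι : Type*} (s : Finset ι) (f : ι → (Fin n → ℂ)) (v : Fin n → ℂ) :
    (∑ i ∈ s, f i) ⬝ᵥ v = ∑ i ∈ s, f i ⬝ᵥ v := by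
  simp only [dotProduct, Finset.sum_apply, Finset.sum_mul]
  rw [Finset.sum_comm]

lemma dot_sum {ι : Type*} (s : Finset ι) (v : Fin n → ℂ) (f : ι → (Fin n → ℂ)) :
    v ⬝ᵥ (∑ i ∈ s, f i) = ∑ i ∈ s, v ⬝ᵥ f i := by
  simp only [dotProduct, Finset.sum_apply, Finset.mul_sum]
  rw [Finset.sum_comm]

lemma qform_repr (M : Matrix (Fin n) (Fin n) ℂ) (w : Fin n → (Fin n → ℂ)) (V : Fin n → ℝ)
    (horth : ∀ i j, star (w i) ⬝ᵥ w j = if i = j then (1 : ℂ) else 0)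
    (heig : ∀ i, M *ᵥ w i = (V i : ℂ) • w i)
    (c : Fin n → ℂ) :
    star (∑ i, c i • w i) ⬝ᵥ M *ᵥ (∑ i, c i • w i)
      = ((∑ i, V i * Complex.normSq (c i) : ℝ) : ℂ) := by
  have h1 : M *ᵥ (∑ i, c i • w i) = ∑ j, (c j * (V j : ℂ)) • w j := by
    have e : M *ᵥ (∑ i, c i • w i) = M.mulVecLin (∑ i, c i • w i) := rfl
    rw [e, map_sum]
    refine Finset.sum_congr rfl fun j _ => ?_
    rw [LinearMap.map_smul, mulVecLin_apply, heig, smul_smul]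
  rw [h1, star_sum]
  have h2 : ∀ i, star (c i • w i) = starRingEnd ℂ (c i) • star (w i) := by
    intro i; rw [star_smul]; rfl
  simp only [h2]
  rw [sum_dot]
  have h3 : ∀ i, (starRingEnd ℂ (c i) • star (w i)) ⬝ᵥ (∑ j, (c j * (V j : ℂ)) • w j)
      = starRingEnd ℂ (c i) * c i * (V i : ℂ) := by
    intro i
    rw [smul_dotProduct, dot_sum]
    have h4 : ∀ j, star (w i) ⬝ᵥ ((c j * (V j : ℂ)) • w j)
        = if i = j then c j * (V j : ℂ) else 0 := by
      intro j
      rw [dotProduct_smul, horth]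
      simp [mul_ite]
    simp only [h4]
    rw [Finset.sum_ite_eq (Finset.univ) i (fun j => c j * (V j : ℂ))]
    simp only [Finset.mem_univ, if_true, smul_eq_mul]
    ring
  simp only [h3]
  rw [Complex.ofReal_sum]
  refine Finset.sum_congr rfl fun i _ => ?_
  rw [Complex.ofReal_mul, Complex.normSq_eq_conj_mul_self]
  ring

lemma exists_greatest_on_subspace (ρ : (Fin n → ℂ) → ℝ)
    (hρcont : ContinuousOn ρ {x : Fin n → ℂ | x ≠ 0})
    (hscale : ∀ (x : Fin n → ℂ), x ≠ 0 → ∀ c : ℂ, c ≠ 0 → ρ (c • x) = ρ x)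
    (S : Submodule ℂ (Fin n → ℂ)) (hS : S ≠ ⊥) :
    ∃ x₀, x₀ ∈ S ∧ x₀ ≠ 0 ∧ IsGreatest (ρ '' {x : Fin n → ℂ | x ∈ S ∧ x ≠ 0}) (ρ x₀) := by
  classical
  set K : Set (Fin n → ℂ) := (S : Set (Fin n → ℂ)) ∩ Metric.sphere 0 1 with hK
  have hKsub : K ⊆ {x : Fin n → ℂ | x ≠ 0} := by
    rintro x ⟨-, hx⟩
    have : ‖x‖ = 1 := by simpa using hx
    simp only [Set.mem_setOf_eq]
    intro h; rw [h] at this; simp at this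
  have hKc : IsCompact K := by
    have : IsCompact (Metric.sphere (0 : Fin n → ℂ) 1) := isCompact_sphere 0 1
    exact this.inter_left (Submodule.closed_of_finiteDimensional S)
  -- nonempty
  obtain ⟨b, hbS, hb0⟩ := Submodule.exists_mem_ne_zero_of_ne_bot hS
  have hnb : ‖b‖ ≠ 0 := norm_ne_zero_iff.mpr hb0
  have hcne : ((‖b‖⁻¹ : ℝ) : ℂ) ≠ 0 := by
    simp [inv_eq_zero, hnb]
  set u : Fin n → ℂ := ((‖b‖⁻¹ : ℝ) : ℂ) • b with hu
  have huS : u ∈ S := S.smul_mem _ hbS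
  have hun : ‖u‖ = 1 := by
    rw [hu, norm_smul]
    simp [norm_inv, inv_mul_cancel₀ hnb]
  have huK : u ∈ K := ⟨huS, by simpa using hun⟩
  obtain ⟨x₀, hx₀K, hmax⟩ := hKc.exists_isMaxOn ⟨u, huK⟩ (hρcont.mono hKsub)
  refine ⟨x₀, hx₀K.1, hKsub hx₀K, ?_, ?_⟩
  · exact ⟨x₀, ⟨hx₀K.1, hKsub hx₀K⟩, rfl⟩
  · rintro r ⟨y, ⟨hyS, hy0⟩, rfl⟩
    have hny : ‖y‖ ≠ 0 := norm_ne_zero_iff.mpr hy0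
    have hcne' : ((‖y‖⁻¹ : ℝ) : ℂ) ≠ 0 := by simp [inv_eq_zero, hny]
    set y' : Fin n → ℂ := ((‖y‖⁻¹ : ℝ) : ℂ) • y with hy'
    have hy'K : y' ∈ K := by
      refine ⟨S.smul_mem _ hyS, ?_⟩
      have : ‖y'‖ = 1 := by
        rw [hy', norm_smul]; simp [norm_inv, inv_mul_cancel₀ hny]
      simpa using this
    have := hmax hy'K
    calc ρ y = ρ y' := (hscale y hy0 _ hcne').symm
    _ ≤ ρ x₀ := this

lemma finrank_span_image (w : Fin n → (Fin n → ℂ)) (li : LinearIndependent ℂ w)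
    (I : Finset (Fin n)) :
    Module.finrank ℂ (Submodule.span ℂ (w '' (I : Set (Fin n)))) = I.card := by
  classical
  have h1 : w '' (I : Set (Fin n))
      = Set.range (w ∘ (Subtype.val : ↥(I : Set (Fin n)) → Fin n)) := by
    ext y; simp [Function.comp]
  rw [h1, finrank_span_eq_card (li.comp _ Subtype.val_injective)]
  simp

end NEP7


/-- on an interval `(a,b)` of positive type (with `T` continuously
differentiable there), letting `lam k` be the minimum over `(k+1)`-dimensional
subspaces `S` of the maximum of `ρ` over nonzero `x ∈ S` (zero-based `k : Fin n`),
the map `T(·)` has exactly `n` eigenvalues in `(a,b)` counted with multiplicity: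
every eigenvalue `μ₀ ∈ (a,b)` equals `lam k` for some `k`, and the number of
indices `k` with `lam k = μ₀` equals the dimension of the kernel of `T μ₀`. -/
theorem exactly_n_eigenvalues_positive_type
    (n : ℕ) (hn : 1 ≤ n) (a b : ℝ) (hab : a < b)
    (T T' : ℝ → Matrix (Fin n) (Fin n) ℂ)
    (hTcont : ContinuousOn T (Set.Icc a b))
    (hTherm : ∀ μ ∈ Set.Icc a b, (T μ).IsHermitian)
    (hT'deriv : ∀ μ ∈ Set.Ioo a b, ∀ i j : Fin n,
      HasDerivAt (fun t : ℝ => T t i j) (T' μ i j) μ)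
    (hT'cont : ContinuousOn T' (Set.Ioo a b))
    (ρ : (Fin n → ℂ) → ℝ)
    (hρcont : ContinuousOn ρ {x : Fin n → ℂ | x ≠ 0})
    (hρmem : ∀ x : Fin n → ℂ, x ≠ 0 → ρ x ∈ Set.Ioo a b)
    (hρroot : ∀ x : Fin n → ℂ, x ≠ 0 → star x ⬝ᵥ (T (ρ x)) *ᵥ x = 0)
    (hρuniq : ∀ x : Fin n → ℂ, x ≠ 0 → ∀ μ ∈ Set.Ioo a b,
      star x ⬝ᵥ (T μ) *ᵥ x = 0 → μ = ρ x)
    (hpos : ∀ x : Fin n → ℂ, x ≠ 0 → ∀ μ ∈ Set.Ioo a b, μ ≠ ρ x →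
      0 < (μ - ρ x) * (star x ⬝ᵥ (T μ) *ᵥ x).re)
    (lam : Fin n → ℝ)
    (hlam : ∀ k : Fin n,
      IsLeast {r : ℝ | ∃ S : Submodule ℂ (Fin n → ℂ), Module.finrank ℂ S = (k : ℕ) + 1 ∧
        IsGreatest (ρ '' {x : Fin n → ℂ | x ∈ S ∧ x ≠ 0}) r} (lam k)) :
    ∀ μ₀ ∈ Set.Ioo a b, (∃ v : Fin n → ℂ, v ≠ 0 ∧ (T μ₀) *ᵥ v = 0) →
      (∃ k : Fin n, lam k = μ₀) ∧
      Nat.card {k : Fin n // lam k = μ₀} =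
        Module.finrank ℂ (LinearMap.ker (T μ₀).mulVecLin) := by
  classical
  rintro μ₀ hμ₀ ⟨v, hv0, hv⟩
  set A : Matrix (Fin n) (Fin n) ℂ := T μ₀ with hAdef
  have hA : A.IsHermitian := hTherm μ₀ (Set.Ioo_subset_Icc_self hμ₀)
  set V : Fin n → ℝ := hA.eigenvalues with hV
  set w : Fin n → (Fin n → ℂ) := fun i => ⇑(hA.eigenvectorBasis i) with hw
  have horth : ∀ i j, star (w i) ⬝ᵥ w j = if i = j then (1 : ℂ) else 0 := by
    intro i j
    have h := orthonormal_iff_ite.mp hA.eigenvectorBasis.orthonormal i j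
    rw [EuclideanSpace.inner_eq_star_dotProduct, dotProduct_comm] at h
    exact h
  have heig : ∀ i, A *ᵥ w i = (V i : ℂ) • w i := by
    intro i
    rw [hw]
    rw [hA.mulVec_eigenvectorBasis i]
    funext j
    simp [Pi.smul_apply, Complex.real_smul]
    left; rfl
  set q : (Fin n → ℂ) → ℝ := fun x => (star x ⬝ᵥ A *ᵥ x).re with hq
  -- sign lemmas
  have hroot0 : ∀ x : Fin n → ℂ, x ≠ 0 → ρ x = μ₀ → q x = 0 := by
    intro x hx h
    have h2 := hρroot x hx
    rw [h] at h2
    simp only [hq, ← hAdef, h2, Complex.zero_re]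
    rw [hAdef, h2, Complex.zero_re]
  have hlt : ∀ x : Fin n → ℂ, x ≠ 0 → ρ x < μ₀ → 0 < q x := by
    intro x hx h
    have hp := hpos x hx μ₀ hμ₀ (by linarith)
    nlinarith
  have hgt : ∀ x : Fin n → ℂ, x ≠ 0 → μ₀ < ρ x → q x < 0 := by
    intro x hx h
    have hp := hpos x hx μ₀ hμ₀ (by linarith)
    nlinarith
  have hle_of_nonneg : ∀ x : Fin n → ℂ, x ≠ 0 → 0 ≤ q x → ρ x ≤ μ₀ := by
    intro x hx h
    by_contra hc; push_neg at hc
    have := hgt x hx hc; linarith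
  have hlt_of_pos : ∀ x : Fin n → ℂ, x ≠ 0 → 0 < q x → ρ x < μ₀ := by
    intro x hx h
    rcases lt_trichotomy (ρ x) μ₀ with h' | h' | h'
    · exact h'
    · have := hroot0 x hx h'; linarith
    · have := hgt x hx h'; linarith
  -- scale invariance
  have hscale : ∀ x : Fin n → ℂ, x ≠ 0 → ∀ c : ℂ, c ≠ 0 → ρ (c • x) = ρ x := by
    intro x hx c hc
    have hcx : c • x ≠ 0 := smul_ne_zero hc hx
    have h1 := hρroot (c • x) hcx
    rw [NEP7.qform_smul] at h1
    have h2 : star x ⬝ᵥ (T (ρ (c • x))) *ᵥ x = 0 := by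
      rcases mul_eq_zero.mp h1 with h | h
      · exact absurd h (by simp [hc])
      · exact h
    exact hρuniq x hx (ρ (c • x)) (hρmem _ hcx) h2
  -- basis
  have li : LinearIndependent ℂ w := by
    rw [linearIndependent_iff']
    intro s g hsum i hi
    have h := congrArg (fun y => star (w i) ⬝ᵥ y) hsum
    simp only [dotProduct_zero] at h
    rw [NEP7.dot_sum] at h
    have h2 : ∀ j ∈ s, star (w i) ⬝ᵥ (g j • w j) = if i = j then g j else 0 := by
      intro j _
      rw [dotProduct_smul, horth]
      simp [mul_ite]
    rw [Finset.sum_congr rfl h2, Finset.sum_ite_eq s i g, if_pos hi] at h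
    exact h
  haveI : Nonempty (Fin n) := ⟨⟨0, hn⟩⟩
  have hcard : Fintype.card (Fin n) = Module.finrank ℂ (Fin n → ℂ) := by simp
  set B : Module.Basis (Fin n) ℂ (Fin n → ℂ) := basisOfLinearIndependentOfCardEqFinrank li hcard
    with hBdef
  have hB : ⇑B = w := coe_basisOfLinearIndependentOfCardEqFinrank li hcard
  -- representation of q on spans
  have span_repr : ∀ (I : Finset (Fin n)) (x : Fin n → ℂ),
      x ∈ Submodule.span ℂ (w '' (I : Set (Fin n))) → x ≠ 0 →
      ∃ c : Fin n → ℂ, (∃ i ∈ I, c i ≠ 0) ∧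
        q x = ∑ i ∈ I, V i * Complex.normSq (c i) := by
    intro I x hxS hx0
    set c : Fin n → ℂ := fun i => B.repr x i with hc
    have hsupp : ∀ i, i ∉ I → c i = 0 := by
      intro i hi
      have hm : x ∈ Submodule.span ℂ (⇑B '' (I : Set (Fin n))) := by rw [hB]; exact hxS
      have hss := (B.mem_span_image).mp hm
      by_contra hne
      exact hi (hss (Finsupp.mem_support_iff.mpr hne))
    have hxsum : x = ∑ i, c i • w i := by
      conv_lhs => rw [← B.sum_repr x]
      simp [hB, hc]
    have hq' := NEP7.qform_repr A w V horth heig c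
    rw [← hxsum] at hq'
    have hqx : q x = ∑ i, V i * Complex.normSq (c i) := by
      rw [hq]; simp only [hq']; simp
    have hres : ∑ i ∈ I, V i * Complex.normSq (c i) = ∑ i, V i * Complex.normSq (c i) :=
      Finset.sum_subset (Finset.subset_univ I) (by
        intro i _ hi
        simp [hsupp i hi])
    refine ⟨c, ?_, by rw [hqx, ← hres]⟩
    by_contra hall
    push_neg at hall
    apply hx0
    rw [hxsum]
    apply Finset.sum_eq_zero
    intro i _
    by_cases hi : i ∈ I
    · rw [hall i hi, zero_smul]
    · rw [hsupp i hi, zero_smul]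
  -- sign on spans
  have span_nonnegQ : ∀ (I : Finset (Fin n)), (∀ i ∈ I, 0 ≤ V i) →
      ∀ x ∈ Submodule.span ℂ (w '' (I : Set (Fin n))), x ≠ 0 → 0 ≤ q x := by
    intro I hI x hxS hx0
    obtain ⟨c, -, hqx⟩ := span_repr I x hxS hx0
    rw [hqx]
    exact Finset.sum_nonneg fun i hi => mul_nonneg (hI i hi) (Complex.normSq_nonneg _)
  have span_posQ : ∀ (I : Finset (Fin n)), (∀ i ∈ I, 0 < V i) →
      ∀ x ∈ Submodule.span ℂ (w '' (I : Set (Fin n))), x ≠ 0 → 0 < q x := by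
    intro I hI x hxS hx0
    obtain ⟨c, ⟨i₀, hi₀, hc₀⟩, hqx⟩ := span_repr I x hxS hx0
    rw [hqx]
    have h1 : ∀ i ∈ I, (0 : ℝ) ≤ V i * Complex.normSq (c i) :=
      fun i hi => mul_nonneg (le_of_lt (hI i hi)) (Complex.normSq_nonneg _)
    have h2 : (0 : ℝ) < V i₀ * Complex.normSq (c i₀) :=
      mul_pos (hI i₀ hi₀) (Complex.normSq_pos.mpr hc₀)
    calc (0 : ℝ) = ∑ _i ∈ I, (0 : ℝ) := by simp
    _ < ∑ i ∈ I, V i * Complex.normSq (c i) :=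
      Finset.sum_lt_sum (fun i hi => h1 i hi) ⟨i₀, hi₀, h2⟩
  have span_negQ : ∀ (I : Finset (Fin n)), (∀ i ∈ I, V i < 0) →
      ∀ x ∈ Submodule.span ℂ (w '' (I : Set (Fin n))), x ≠ 0 → q x < 0 := by
    intro I hI x hxS hx0
    obtain ⟨c, ⟨i₀, hi₀, hc₀⟩, hqx⟩ := span_repr I x hxS hx0
    rw [hqx]
    have h1 : ∀ i ∈ I, V i * Complex.normSq (c i) ≤ 0 :=
      fun i hi => mul_nonpos_iff.mpr (Or.inr ⟨le_of_lt (hI i hi), Complex.normSq_nonneg _⟩)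
    have h2 : V i₀ * Complex.normSq (c i₀) < 0 :=
      mul_neg_of_neg_of_pos (hI i₀ hi₀) (Complex.normSq_pos.mpr hc₀)
    calc ∑ i ∈ I, V i * Complex.normSq (c i) < ∑ _i ∈ I, (0 : ℝ) :=
      Finset.sum_lt_sum (fun i hi => h1 i hi) ⟨i₀, hi₀, h2⟩
    _ = 0 := by simp
  have span_nonposQ : ∀ (I : Finset (Fin n)), (∀ i ∈ I, V i ≤ 0) →
      ∀ x ∈ Submodule.span ℂ (w '' (I : Set (Fin n))), x ≠ 0 → q x ≤ 0 := by
    intro I hI x hxS hx0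
    obtain ⟨c, -, hqx⟩ := span_repr I x hxS hx0
    rw [hqx]
    exact Finset.sum_nonpos fun i hi =>
      mul_nonpos_iff.mpr (Or.inr ⟨hI i hi, Complex.normSq_nonneg _⟩)
  -- counting sets
  set Fneg : Finset (Fin n) := Finset.univ.filter (fun i => V i < 0) with hFneg
  set Fpos : Finset (Fin n) := Finset.univ.filter (fun i => 0 < V i) with hFpos
  set Fzero : Finset (Fin n) := Finset.univ.filter (fun i => V i = 0) with hFzero
  set Fnonneg : Finset (Fin n) := Finset.univ.filter (fun i => 0 ≤ V i) with hFnonneg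
  set Fnonpos : Finset (Fin n) := Finset.univ.filter (fun i => V i ≤ 0) with hFnonpos
  have hsplit1 : Fnonneg = Fpos ∪ Fzero := by
    ext i
    simp only [hFnonneg, hFpos, hFzero, Finset.mem_union, Finset.mem_filter, Finset.mem_univ,
      true_and]
    constructor
    · intro h
      rcases h.lt_or_eq with h' | h'
      · exact Or.inl h'
      · exact Or.inr h'.symm
    · rintro (h | h)
      · exact le_of_lt h
      · exact h.ge
  have hsplit2 : Fnonpos = Fneg ∪ Fzero := by
    ext i
    simp only [hFnonpos, hFneg, hFzero, Finset.mem_union, Finset.mem_filter, Finset.mem_univ,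
      true_and]
    constructor
    · intro h
      rcases h.lt_or_eq with h' | h'
      · exact Or.inl h'
      · exact Or.inr h'
    · rintro (h | h)
      · exact le_of_lt h
      · exact h.le
  have hdisj1 : Disjoint Fpos Fzero := by
    rw [Finset.disjoint_left]
    intro i h1 h2
    simp only [hFpos, hFzero, Finset.mem_filter, Finset.mem_univ, true_and] at h1 h2
    linarith
  have hdisj2 : Disjoint Fneg Fzero := by
    rw [Finset.disjoint_left]
    intro i h1 h2
    simp only [hFneg, hFzero, Finset.mem_filter, Finset.mem_univ, true_and] at h1 h2
    linarith
  have hcnn : Fnonneg.card = Fpos.card + Fzero.card := by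
    rw [hsplit1, Finset.card_union_of_disjoint hdisj1]
  have hcnp : Fnonpos.card = Fneg.card + Fzero.card := by
    rw [hsplit2, Finset.card_union_of_disjoint hdisj2]
  have huniv1 : Fneg.card + Fnonneg.card = n := by
    have h := Finset.card_filter_add_card_filter_not
      (s := (Finset.univ : Finset (Fin n))) (p := fun i => V i < 0)
    have h2 : Finset.univ.filter (fun i => ¬ V i < 0) = Fnonneg := by
      rw [hFnonneg]
      apply Finset.filter_congr
      intro i _
      simp [not_lt]
    rw [h2] at h
    simpa using h
  -- kernel dimension
  have hker : Module.finrank ℂ (LinearMap.ker A.mulVecLin) = Fzero.card := by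
    have h1 : A.rank = Fintype.card {i // hA.eigenvalues i ≠ 0} := hA.rank_eq_card_non_zero_eigs
    have h2 : Fintype.card {i // hA.eigenvalues i ≠ 0}
        = (Finset.univ.filter (fun i => V i ≠ 0)).card := by
      rw [Fintype.card_subtype]
    have h3 : (Finset.univ.filter (fun i => V i ≠ 0)).card + Fzero.card = n := by
      have h := Finset.card_filter_add_card_filter_not
        (s := (Finset.univ : Finset (Fin n))) (p := fun i => V i ≠ 0)
      have h4 : Finset.univ.filter (fun i => ¬ V i ≠ 0) = Fzero := by
        rw [hFzero]
        apply Finset.filter_congr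
        intro i _
        simp
      rw [h4] at h
      simpa using h
    have h5 : A.rank = Module.finrank ℂ (LinearMap.range A.mulVecLin) := rfl
    have h6 := LinearMap.finrank_range_add_finrank_ker A.mulVecLin
    have h7 : Module.finrank ℂ (Fin n → ℂ) = n := by simp
    rw [h7] at h6
    omega
  -- m ≥ 1
  have hm1 : 1 ≤ Fzero.card := by
    rw [← hker]
    have hvker : v ∈ LinearMap.ker A.mulVecLin := by
      rw [LinearMap.mem_ker, Matrix.mulVecLin_apply]
      exact hv
    by_contra h
    push_neg at h
    interval_cases h' : Module.finrank ℂ (LinearMap.ker A.mulVecLin)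
    · have : LinearMap.ker A.mulVecLin = ⊥ := Submodule.finrank_eq_zero.mp h'
      rw [this, Submodule.mem_bot] at hvker
      exact hv0 hvker
  -- forward inequalities
  have fwd_le : ∀ k : Fin n, (k : ℕ) + 1 ≤ Fnonneg.card → lam k ≤ μ₀ := by
    intro k hk
    obtain ⟨I, hIsub, hIcard⟩ := Finset.exists_subset_card_eq hk
    set S := Submodule.span ℂ (w '' (I : Set (Fin n))) with hS
    have hrk : Module.finrank ℂ S = (k : ℕ) + 1 := by
      rw [hS, NEP7.finrank_span_image w li I, hIcard]
    have hSne : S ≠ ⊥ := by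
      intro h
      rw [h, finrank_bot] at hrk
      omega
    obtain ⟨x₀, hx₀S, hx₀0, hG⟩ := NEP7.exists_greatest_on_subspace ρ hρcont hscale S hSne
    have hlamle : lam k ≤ ρ x₀ := (hlam k).2 ⟨S, hrk, hG⟩
    have hq0 : 0 ≤ q x₀ := by
      apply span_nonnegQ I _ x₀ hx₀S hx₀0
      intro i hi
      have := hIsub hi
      simp only [hFnonneg, Finset.mem_filter, Finset.mem_univ, true_and] at this
      exact this
    have := hle_of_nonneg x₀ hx₀0 hq0
    linarith
  have fwd_lt : ∀ k : Fin n, (k : ℕ) + 1 ≤ Fpos.card → lam k < μ₀ := by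
    intro k hk
    obtain ⟨I, hIsub, hIcard⟩ := Finset.exists_subset_card_eq hk
    set S := Submodule.span ℂ (w '' (I : Set (Fin n))) with hS
    have hrk : Module.finrank ℂ S = (k : ℕ) + 1 := by
      rw [hS, NEP7.finrank_span_image w li I, hIcard]
    have hSne : S ≠ ⊥ := by
      intro h
      rw [h, finrank_bot] at hrk
      omega
    obtain ⟨x₀, hx₀S, hx₀0, hG⟩ := NEP7.exists_greatest_on_subspace ρ hρcont hscale S hSne
    have hlamle : lam k ≤ ρ x₀ := (hlam k).2 ⟨S, hrk, hG⟩
    have hq0 : 0 < q x₀ := by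
      apply span_posQ I _ x₀ hx₀S hx₀0
      intro i hi
      have := hIsub hi
      simp only [hFpos, Finset.mem_filter, Finset.mem_univ, true_and] at this
      exact this
    have := hlt_of_pos x₀ hx₀0 hq0
    linarith
  -- reverse inequalities
  have rev_le : ∀ k : Fin n, lam k ≤ μ₀ → (k : ℕ) + 1 ≤ Fnonneg.card := by
    intro k hle
    obtain ⟨S, hrk, hG⟩ := (hlam k).1
    have hSq : ∀ x ∈ S, x ≠ 0 → 0 ≤ q x := by
      intro x hxS hx0
      have hρx : ρ x ≤ μ₀ := le_trans (hG.2 ⟨x, ⟨hxS, hx0⟩, rfl⟩) hle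
      rcases lt_trichotomy (ρ x) μ₀ with h' | h' | h'
      · exact le_of_lt (hlt x hx0 h')
      · exact le_of_eq (hroot0 x hx0 h').symm
      · linarith
    set N := Submodule.span ℂ (w '' (Fneg : Set (Fin n))) with hN
    have hNrk : Module.finrank ℂ N = Fneg.card := by
      rw [hN, NEP7.finrank_span_image w li Fneg]
    have hdis : S ⊓ N = ⊥ := by
      rw [Submodule.eq_bot_iff]
      rintro x ⟨hxS, hxN⟩
      by_contra hx0
      have h1 := hSq x hxS hx0
      have h2 := span_negQ Fneg (fun i hi => by
        simp only [hFneg, Finset.mem_filter, Finset.mem_univ, true_and] at hi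
        exact hi) x hxN hx0
      linarith
    have hsum := Submodule.finrank_sup_add_finrank_inf_eq S N
    rw [hdis, finrank_bot, add_zero, hrk, hNrk] at hsum
    have hle2 : Module.finrank ℂ ↥(S ⊔ N) ≤ n := by
      have := Submodule.finrank_le (S ⊔ N)
      simpa using this
    omega
  have rev_lt : ∀ k : Fin n, lam k < μ₀ → (k : ℕ) + 1 ≤ Fpos.card := by
    intro k hle
    obtain ⟨S, hrk, hG⟩ := (hlam k).1
    have hSq : ∀ x ∈ S, x ≠ 0 → 0 < q x := by
      intro x hxS hx0
      have hρx : ρ x < μ₀ := lt_of_le_of_lt (hG.2 ⟨x, ⟨hxS, hx0⟩, rfl⟩) hle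
      exact hlt x hx0 hρx
    set N := Submodule.span ℂ (w '' (Fnonpos : Set (Fin n))) with hN
    have hNrk : Module.finrank ℂ N = Fnonpos.card := by
      rw [hN, NEP7.finrank_span_image w li Fnonpos]
    have hdis : S ⊓ N = ⊥ := by
      rw [Submodule.eq_bot_iff]
      rintro x ⟨hxS, hxN⟩
      by_contra hx0
      have h1 := hSq x hxS hx0
      have h2 := span_nonposQ Fnonpos (fun i hi => by
        simp only [hFnonpos, Finset.mem_filter, Finset.mem_univ, true_and] at hi
        exact hi) x hxN hx0
      linarith
    have hsum := Submodule.finrank_sup_add_finrank_inf_eq S N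
    rw [hdis, finrank_bot, add_zero, hrk, hNrk] at hsum
    have hle2 : Module.finrank ℂ ↥(S ⊔ N) ≤ n := by
      have := Submodule.finrank_le (S ⊔ N)
      simpa using this
    omega
  -- characterization
  have hchar : ∀ k : Fin n, lam k = μ₀ ↔ (Fpos.card ≤ (k : ℕ) ∧ (k : ℕ) < Fnonneg.card) := by
    intro k
    constructor
    · intro h
      constructor
      · by_contra hc
        push_neg at hc
        have := fwd_lt k hc
        linarith
      · have := rev_le k (le_of_eq h)
        omega
    · rintro ⟨h1, h2⟩
      have hle : lam k ≤ μ₀ := fwd_le k (by omega)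
      have hnlt : ¬ lam k < μ₀ := fun hc => by
        have := rev_lt k hc
        omega
      linarith
  have hcnn_le : Fnonneg.card ≤ n := by omega
  constructor
  · refine ⟨⟨Fnonneg.card - 1, by omega⟩, ?_⟩
    rw [hchar]
    refine ⟨?_, ?_⟩
    · show Fpos.card ≤ Fnonneg.card - 1
      omega
    · show Fnonneg.card - 1 < Fnonneg.card
      omega
  · rw [Nat.card_eq_fintype_card, Fintype.card_subtype]
    rw [hker]
    have hfilt : (Finset.univ.filter (fun k : Fin n => lam k = μ₀))
        = (Finset.univ.filter (fun k : Fin n => Fpos.card ≤ (k : ℕ) ∧ (k : ℕ) < Fnonneg.card)) :=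
      Finset.filter_congr (fun k _ => by rw [hchar k])
    rw [hfilt]
    have himg : (Finset.univ.filter
          (fun k : Fin n => Fpos.card ≤ (k : ℕ) ∧ (k : ℕ) < Fnonneg.card)).image Fin.val
        = Finset.Ico Fpos.card Fnonneg.card := by
      ext t
      simp only [Finset.mem_image, Finset.mem_filter, Finset.mem_univ, true_and,
        Finset.mem_Ico]
      constructor
      · rintro ⟨k, ⟨h1, h2⟩, rfl⟩
        exact ⟨h1, h2⟩
      · rintro ⟨h1, h2⟩
        exact ⟨⟨t, by omega⟩, ⟨h1, h2⟩, rfl⟩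
    have hcard2 := congrArg Finset.card himg
    rw [Finset.card_image_of_injective _ Fin.val_injective, Nat.card_Ico] at hcard2
    omega
end

section
/- Assume the interval J = (a,b) is of positive type and T is continuously differentiable on (a,b); for k ∈ {1,…,n} let λ_k ∈ (a,b) be the k-th eigenvalue of T(·) given by the variational principle (λ_k is the minimum over all k-dimensional ℂ-subspaces S ⊆ ℂ^n of the maximum of ρ(x) over nonzero x ∈ S). Then there exist nonzero vectors v_1,…,v_n ∈ ℂ^n with T(λ_k)v_k = 0 for each k, such that v_1,…,v_n form a basis of ℂ^n and such that they are pairwise orthogonal with respect to the generalized scalar product: for all j ≠ k, if λ_j ≠ λ_k then v_k*(T(λ_k) − T(λ_j))v_j = 0, while if λ_j = λ_k then v_k* T'(λ_k) v_j = 0. -/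
open Matrix Set
open scoped ComplexOrder

namespace EigAux

variable {n : ℕ}

lemma sum_dp {ι : Type*} (s : Finset ι) (f : ι → (Fin n → ℂ)) (w : Fin n → ℂ) :
    (∑ i ∈ s, f i) ⬝ᵥ w = ∑ i ∈ s, f i ⬝ᵥ w := by
  simp only [dotProduct, Finset.sum_apply, Finset.sum_mul]
  rw [Finset.sum_comm]

lemma dp_sum {ι : Type*} (s : Finset ι) (f : ι → (Fin n → ℂ)) (w : Fin n → ℂ) :
    w ⬝ᵥ (∑ i ∈ s, f i) = ∑ i ∈ s, w ⬝ᵥ f i := by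
  simp only [dotProduct, Finset.sum_apply, Finset.mul_sum]
  rw [Finset.sum_comm]

lemma mv_sum {ι : Type*} (A : Matrix (Fin n) (Fin n) ℂ) (s : Finset ι) (f : ι → (Fin n → ℂ)) :
    A *ᵥ (∑ i ∈ s, f i) = ∑ i ∈ s, A *ᵥ f i := by
  simp only [← mulVecLin_apply, map_sum]

/-- conjugate-swap identity -/
lemma dp_conj (A : Matrix (Fin n) (Fin n) ℂ) (x y : Fin n → ℂ) :
    star x ⬝ᵥ A *ᵥ y = star (star y ⬝ᵥ Aᴴ *ᵥ x) := by
  rw [star_dotProduct, star_mulVec, ← dotProduct_mulVec]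

lemma dp_conj_herm {A : Matrix (Fin n) (Fin n) ℂ} (hA : A.IsHermitian) (x y : Fin n → ℂ) :
    star x ⬝ᵥ A *ᵥ y = star (star y ⬝ᵥ A *ᵥ x) := by
  rw [dp_conj, hA.eq]

/-- quadratic form of a Hermitian matrix is real -/
lemma herm_re {A : Matrix (Fin n) (Fin n) ℂ} (hA : A.IsHermitian) (x : Fin n → ℂ) :
    (star x ⬝ᵥ A *ᵥ x : ℂ) = ((star x ⬝ᵥ A *ᵥ x).re : ℂ) := by
  have h := dp_conj_herm hA x x
  have h2 : (starRingEnd ℂ) (star x ⬝ᵥ A *ᵥ x) = star x ⬝ᵥ A *ᵥ x := h.symm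
  exact (Complex.conj_eq_iff_re.mp h2).symm

/-- cross terms vanish against a kernel vector -/
lemma cross_vanish {A : Matrix (Fin n) (Fin n) ℂ} (hA : A.IsHermitian)
    (s w : Fin n → ℂ) (hw : A *ᵥ w = 0) :
    star (s + w) ⬝ᵥ A *ᵥ (s + w) = star s ⬝ᵥ A *ᵥ s := by
  rw [mulVec_add, hw, add_zero, star_add, add_dotProduct]
  have : star w ⬝ᵥ A *ᵥ s = 0 := by
    rw [dp_conj_herm hA, hw, dotProduct_zero, star_zero]
  rw [this, add_zero]


section Quad
variable {A : Matrix (Fin n) (Fin n) ℂ} {u : Fin n → (Fin n → ℂ)} {eig : Fin n → ℝ}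

/-- quadratic form on a span of orthonormal eigenvectors -/
lemma quad_form (horth : ∀ i j, star (u i) ⬝ᵥ u j = if i = j then 1 else 0)
    (heig : ∀ i, A *ᵥ u i = (eig i : ℂ) • u i) (P : Finset (Fin n)) (c : P → ℂ) :
    star (∑ i : P, c i • u i) ⬝ᵥ A *ᵥ (∑ i : P, c i • u i)
      = ((∑ i : P, Complex.normSq (c i) * eig i : ℝ) : ℂ) := by
  rw [mv_sum, star_sum, sum_dp]
  rw [Finset.sum_congr rfl
    (g := fun i : P => ((Complex.normSq (c i) * eig i : ℝ) : ℂ)) (fun i _ => ?_)]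
  · push_cast
    ring_nf
  · rw [dp_sum]
    rw [Finset.sum_eq_single i ?h1 ?h2]
    · simp only [mulVec_smul, heig, star_smul, smul_dotProduct, dotProduct_smul, horth]
      rw [if_true]
      simp only [smul_eq_mul, mul_one, Complex.ofReal_mul]
      rw [Complex.normSq_eq_conj_mul_self]
      rw [show (starRingEnd ℂ) (c i) = star (c i) from rfl]
      ring
    · intro j _ hji
      simp only [mulVec_smul, heig, star_smul, smul_dotProduct, dotProduct_smul, horth]
      rw [if_neg (fun h => hji (Subtype.ext h.symm))]
      simp
    · intro h
      exact absurd (Finset.mem_univ i) h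

lemma orth_indep (horth : ∀ i j, star (u i) ⬝ᵥ u j = if i = j then 1 else 0) :
    LinearIndependent ℂ u := by
  rw [Fintype.linearIndependent_iff]
  intro c hc k
  have h : star (u k) ⬝ᵥ (∑ i, c i • u i) = c k := by
    rw [dp_sum]
    rw [Finset.sum_eq_single k (fun j _ hji => ?_) (fun h => absurd (Finset.mem_univ k) h)]
    · rw [dotProduct_smul, horth, if_pos rfl, smul_eq_mul, mul_one]
    · rw [dotProduct_smul, horth, if_neg (Ne.symm hji), smul_eq_mul, mul_zero]
  rw [hc] at h
  rw [← h, dotProduct_zero]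

lemma quad_neg
    (horth : ∀ i j, star (u i) ⬝ᵥ u j = if i = j then 1 else 0)
    (heig : ∀ i, A *ᵥ u i = (eig i : ℂ) • u i) (P : Finset (Fin n))
    (hP : ∀ i ∈ P, eig i < 0) {x : Fin n → ℂ}
    (hx : x ∈ Submodule.span ℂ (Set.range (fun i : P => u i))) (hx0 : x ≠ 0) :
    (star x ⬝ᵥ A *ᵥ x).re < 0 := by
  obtain ⟨c, rfl⟩ := Submodule.mem_span_range_iff_exists_fun ℂ |>.mp hx
  rw [quad_form horth heig P c, Complex.ofReal_re]
  have hex : ∃ i : P, c i ≠ 0 := by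
    by_contra h
    push_neg at h
    exact hx0 (by simp [h])
  obtain ⟨i0, hi0⟩ := hex
  have : ∀ i ∈ Finset.univ (α := P), Complex.normSq (c i) * eig i ≤ 0 :=
    fun i _ => mul_nonpos_of_nonneg_of_nonpos (Complex.normSq_nonneg _) (hP i i.2).le
  calc (∑ i : P, Complex.normSq (c i) * eig i)
      < ∑ _i : P, (0 : ℝ) := by
        apply Finset.sum_lt_sum ?_ ⟨i0, Finset.mem_univ _, ?_⟩
        · intro i _; exact this i (Finset.mem_univ i)
        · exact mul_neg_of_pos_of_neg (Complex.normSq_pos.mpr hi0) (hP i0 i0.2)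
    _ = 0 := by simp

lemma quad_pos
    (horth : ∀ i j, star (u i) ⬝ᵥ u j = if i = j then 1 else 0)
    (heig : ∀ i, A *ᵥ u i = (eig i : ℂ) • u i) (P : Finset (Fin n))
    (hP : ∀ i ∈ P, 0 < eig i) {x : Fin n → ℂ}
    (hx : x ∈ Submodule.span ℂ (Set.range (fun i : P => u i))) (hx0 : x ≠ 0) :
    0 < (star x ⬝ᵥ A *ᵥ x).re := by
  obtain ⟨c, rfl⟩ := Submodule.mem_span_range_iff_exists_fun ℂ |>.mp hx
  rw [quad_form horth heig P c, Complex.ofReal_re]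
  have hex : ∃ i : P, c i ≠ 0 := by
    by_contra h
    push_neg at h
    exact hx0 (by simp [h])
  obtain ⟨i0, hi0⟩ := hex
  calc (0:ℝ) = ∑ _i : P, (0 : ℝ) := by simp
    _ < ∑ i : P, Complex.normSq (c i) * eig i := by
        apply Finset.sum_lt_sum ?_ ⟨i0, Finset.mem_univ _, ?_⟩
        · intro i _
          exact mul_nonneg (Complex.normSq_nonneg _) (hP i i.2).le
        · exact mul_pos (Complex.normSq_pos.mpr hi0) (hP i0 i0.2)

lemma quad_ker (heig : ∀ i, A *ᵥ u i = (eig i : ℂ) • u i) (P : Finset (Fin n))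
    (hP : ∀ i ∈ P, eig i = 0) {x : Fin n → ℂ}
    (hx : x ∈ Submodule.span ℂ (Set.range (fun i : P => u i))) :
    A *ᵥ x = 0 := by
  obtain ⟨c, rfl⟩ := Submodule.mem_span_range_iff_exists_fun ℂ |>.mp hx
  rw [mv_sum]
  refine Finset.sum_eq_zero fun i _ => ?_
  rw [mulVec_smul, heig, hP i i.2]
  simp

lemma span_finrank (horth : ∀ i j, star (u i) ⬝ᵥ u j = if i = j then 1 else 0)
    (P : Finset (Fin n)) :
    Module.finrank ℂ (Submodule.span ℂ (Set.range (fun i : P => u i))) = P.card := by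
  have h : LinearIndependent ℂ (fun i : P => u ↑i) :=
    (orth_indep horth).comp (Subtype.val : P → Fin n) Subtype.val_injective
  rw [finrank_span_eq_card h, Fintype.card_coe]

end Quad

/-- Diagonalize a Hermitian form on the span of an independent family. -/
lemma herm_diagonalize (B : Matrix (Fin n) (Fin n) ℂ) (hB : B.IsHermitian)
    {d : ℕ} (u : Fin d → (Fin n → ℂ)) (hu : LinearIndependent ℂ u) :
    ∃ e : Fin d → (Fin n → ℂ), (∀ j, e j ∈ Submodule.span ℂ (Set.range u)) ∧
      LinearIndependent ℂ e ∧ ∀ j k, j ≠ k → star (e k) ⬝ᵥ B *ᵥ e j = 0 := by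
  classical
  set G : Matrix (Fin d) (Fin d) ℂ := Matrix.of fun i j => star (u i) ⬝ᵥ B *ᵥ u j with hGdef
  have hG : G.IsHermitian := by
    apply Matrix.ext
    intro i j
    show star (G j i) = G i j
    show star (star (u j) ⬝ᵥ B *ᵥ u i) = star (u i) ⬝ᵥ B *ᵥ u j
    rw [← dp_conj_herm hB]
  set w : Fin d → (Fin d → ℂ) := fun j => ⇑(hG.eigenvectorBasis j) with hwdef
  have horthG : ∀ i j, star (w i) ⬝ᵥ w j = if i = j then 1 else 0 := by
    intro i j
    have := hG.eigenvectorBasis.orthonormal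
    rw [orthonormal_iff_ite] at this
    have h := this i j
    rw [EuclideanSpace.inner_eq_star_dotProduct] at h
    rw [dotProduct_comm]
    simpa using h
  have heigG : ∀ j, G *ᵥ w j = ((hG.eigenvalues j : ℝ) : ℂ) • w j := by
    intro j
    rw [hG.mulVec_eigenvectorBasis j]
    funext k
    simp only [Pi.smul_apply, Complex.real_smul, smul_eq_mul]
    rfl
  refine ⟨fun j => ∑ i, w j i • u i, fun j => ?_, ?_, fun j k hjk => ?_⟩
  · exact Submodule.sum_mem _ fun i _ =>
      Submodule.smul_mem _ _ (Submodule.subset_span (Set.mem_range_self i))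
  · rw [Fintype.linearIndependent_iff]
    intro c hc
    have h1 : ∑ i, (∑ j, c j * w j i) • u i = 0 := by
      rw [← hc]
      rw [Finset.sum_congr rfl (g := fun i => ∑ j, (c j * w j i) • u i)
        (fun i _ => Finset.sum_smul)]
      rw [Finset.sum_comm]
      exact Finset.sum_congr rfl fun j _ => by
        rw [Finset.smul_sum]
        exact Finset.sum_congr rfl fun i _ => (smul_smul _ _ _).symm
    have h2 : ∀ i, (∑ j, c j * w j i) = 0 :=
      Fintype.linearIndependent_iff.mp hu _ h1
    have h3 : ∑ j, c j • w j = 0 := by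
      funext i
      simpa using h2 i
    exact fun j => Fintype.linearIndependent_iff.mp (orth_indep horthG) c h3 j
  · have key : star (∑ i, w k i • u i) ⬝ᵥ B *ᵥ (∑ i, w j i • u i)
        = star (w k) ⬝ᵥ G *ᵥ w j := by
      rw [mv_sum, star_sum, sum_dp]
      have : ∀ i : Fin d, star (w k i • u i) ⬝ᵥ (∑ i' : Fin d, B *ᵥ w j i' • u i')
          = star (w k i) * (∑ i', G i i' * w j i') := by
        intro i
        rw [dp_sum]
        rw [star_smul, Finset.mul_sum]
        congr 1
        funext i'
        rw [mulVec_smul, smul_dotProduct, dotProduct_smul]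
        show star (w k i) • w j i' • (star (u i) ⬝ᵥ B *ᵥ u i') = _
        rw [smul_eq_mul, smul_eq_mul]
        show star (w k i) * (w j i' * G i i') = _
        ring
      rw [Finset.sum_congr rfl (fun i _ => this i)]
      rfl
    rw [key, heigG, dotProduct_smul, horthG, if_neg (Ne.symm hjk), smul_eq_mul, mul_zero]

/-- Existence of a maximizer of `ρ` on a nontrivial subspace. -/
lemma exists_max_on_subspace (ρ : (Fin n → ℂ) → ℝ)
    (hρcont : ContinuousOn ρ {x : Fin n → ℂ | x ≠ 0})
    (hscale : ∀ (c : ℂ), c ≠ 0 → ∀ x : Fin n → ℂ, x ≠ 0 → ρ (c • x) = ρ x)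
    (S : Submodule ℂ (Fin n → ℂ)) (y : Fin n → ℂ) (hy : y ∈ S) (hy0 : y ≠ 0) :
    ∃ x0, x0 ∈ S ∧ x0 ≠ 0 ∧ ∀ x ∈ S, x ≠ 0 → ρ x ≤ ρ x0 := by
  classical
  set K : Set (Fin n → ℂ) := (S : Set (Fin n → ℂ)) ∩ Metric.sphere 0 1 with hKdef
  have hKsub : K ⊆ {x : Fin n → ℂ | x ≠ 0} := by
    rintro x ⟨-, hx2⟩
    have : ‖x‖ = 1 := by simpa using hx2
    intro h0
    rw [h0] at this
    simp at this
  have hKcl : IsClosed K :=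
    (Submodule.closed_of_finiteDimensional S).inter Metric.isClosed_sphere
  have hKcp : IsCompact K :=
    Metric.isCompact_of_isClosed_isBounded hKcl (Metric.isBounded_sphere.subset
      Set.inter_subset_right)
  have hnorm : ∀ x : Fin n → ℂ, x ≠ 0 → ((‖x‖ : ℂ))⁻¹ ≠ 0 ∧ ‖((‖x‖ : ℂ))⁻¹ • x‖ = 1 := by
    intro x hx
    have hx' : ‖x‖ ≠ 0 := norm_ne_zero_iff.mpr hx
    constructor
    · simp [hx']
    · rw [norm_smul]
      simp [hx']
  have hKne : K.Nonempty := by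
    refine ⟨((‖y‖ : ℂ))⁻¹ • y, Submodule.smul_mem _ _ hy, ?_⟩
    simpa using (hnorm y hy0).2
  obtain ⟨x0, hx0K, hmax⟩ := hKcp.exists_isMaxOn hKne (hρcont.mono hKsub)
  refine ⟨x0, hx0K.1, hKsub hx0K, fun x hxS hx0 => ?_⟩
  have h1 : ((‖x‖ : ℂ))⁻¹ • x ∈ K :=
    ⟨Submodule.smul_mem _ _ hxS, by simpa using (hnorm x hx0).2⟩
  calc ρ x = ρ (((‖x‖ : ℂ))⁻¹ • x) := (hscale _ (hnorm x hx0).1 x hx0).symm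
    _ ≤ ρ x0 := hmax h1

/-- Chain lemma: a sum of kernel vectors has rho value at most the largest time. -/
lemma chain (T : ℝ → Matrix (Fin n) (Fin n) ℂ) (ρ : (Fin n → ℂ) → ℝ) (a b : ℝ)
    (hherm : ∀ μ ∈ Set.Ioo a b, (T μ).IsHermitian)
    (hlt : ∀ x : Fin n → ℂ, x ≠ 0 → ∀ μ ∈ Set.Ioo a b, μ < ρ x → (star x ⬝ᵥ T μ *ᵥ x).re < 0)
    (hgt : ∀ x : Fin n → ℂ, x ≠ 0 → ∀ μ ∈ Set.Ioo a b, ρ x < μ → 0 < (star x ⬝ᵥ T μ *ᵥ x).re)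
    (hroot : ∀ x : Fin n → ℂ, x ≠ 0 → ρ x ∈ Set.Ioo a b → star x ⬝ᵥ T (ρ x) *ᵥ x = 0)
    (hρmem : ∀ x : Fin n → ℂ, x ≠ 0 → ρ x ∈ Set.Ioo a b)
    (hker : ∀ x : Fin n → ℂ, x ≠ 0 → ∀ μ ∈ Set.Ioo a b, T μ *ᵥ x = 0 → ρ x = μ)
    (w : ℝ → (Fin n → ℂ)) (F : Finset ℝ) :
    (∀ t ∈ F, t ∈ Set.Ioo a b) → (∀ t ∈ F, T t *ᵥ w t = 0) → (∑ t ∈ F, w t) ≠ 0 →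
    ∃ t ∈ F, ρ (∑ t ∈ F, w t) ≤ t := by
  classical
  induction F using Finset.induction_on_max with
  | empty => intro _ _ hs; simp at hs
  | insert tm F' hmax ih =>
    intro hF hw hs
    have htmF : tm ∉ F' := fun h => lt_irrefl tm (hmax tm h)
    rw [Finset.sum_insert htmF] at hs ⊢
    set s' : Fin n → ℂ := ∑ t ∈ F', w t with hs'def
    have htm : tm ∈ Set.Ioo a b := hF tm (Finset.mem_insert_self _ _)
    have hwtm : T tm *ᵥ w tm = 0 := hw tm (Finset.mem_insert_self _ _)
    by_cases hs0 : s' = 0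
    · have : w tm ≠ 0 := by
        intro h
        apply hs
        rw [h, hs0, add_zero]
      refine ⟨tm, Finset.mem_insert_self _ _, ?_⟩
      rw [hs0, add_zero]
      exact (hker (w tm) this tm htm hwtm).le
    · obtain ⟨t0, ht0F, ht0⟩ := ih (fun t ht => hF t (Finset.mem_insert_of_mem ht))
        (fun t ht => hw t (Finset.mem_insert_of_mem ht)) hs0
      have ht0tm : t0 < tm := hmax t0 ht0F
      have hq : 0 < (star s' ⬝ᵥ T tm *ᵥ s').re :=
        hgt s' hs0 tm htm (lt_of_le_of_lt ht0 ht0tm)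
      have hcross : star (w tm + s') ⬝ᵥ T tm *ᵥ (w tm + s') = star s' ⬝ᵥ T tm *ᵥ s' := by
        rw [add_comm]
        exact cross_vanish (hherm tm htm) s' (w tm) hwtm
      refine ⟨tm, Finset.mem_insert_self _ _, ?_⟩
      rcases lt_trichotomy (ρ (w tm + s')) tm with h | h | h
      · exact h.le
      · exact h.le
      · exfalso
        have := hlt (w tm + s') hs tm htm h
        rw [hcross] at this
        linarith

end EigAux


open EigAux

/-- on an interval `(a,b)` of positive type (with `T` continuously
differentiable there, derivative `T'`), letting `lam k ∈ (a,b)` be the `k`-th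
eigenvalue given by the variational principle (the minimum over `(k+1)`-dimensional
subspaces of the maximum of `ρ`, zero-based `k`), there exist corresponding
eigenvectors `v 0, …, v (n-1)` forming a basis of `ℂⁿ` that are pairwise orthogonal
with respect to the generalized scalar product. -/
theorem eigenvector_basis_orthogonality_positive_type
    (n : ℕ) (hn : 1 ≤ n) (a b : ℝ) (hab : a < b)
    (T T' : ℝ → Matrix (Fin n) (Fin n) ℂ)
    (hTcont : ContinuousOn T (Set.Icc a b))
    (hTherm : ∀ μ ∈ Set.Icc a b, (T μ).IsHermitian)
    (hT'deriv : ∀ μ ∈ Set.Ioo a b, ∀ i j : Fin n,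
      HasDerivAt (fun t : ℝ => T t i j) (T' μ i j) μ)
    (hT'cont : ContinuousOn T' (Set.Ioo a b))
    (ρ : (Fin n → ℂ) → ℝ)
    (hρcont : ContinuousOn ρ {x : Fin n → ℂ | x ≠ 0})
    (hρmem : ∀ x : Fin n → ℂ, x ≠ 0 → ρ x ∈ Set.Ioo a b)
    (hρroot : ∀ x : Fin n → ℂ, x ≠ 0 → star x ⬝ᵥ (T (ρ x)) *ᵥ x = 0)
    (hρuniq : ∀ x : Fin n → ℂ, x ≠ 0 → ∀ μ ∈ Set.Ioo a b,
      star x ⬝ᵥ (T μ) *ᵥ x = 0 → μ = ρ x)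
    (hpos : ∀ x : Fin n → ℂ, x ≠ 0 → ∀ μ ∈ Set.Ioo a b, μ ≠ ρ x →
      0 < (μ - ρ x) * (star x ⬝ᵥ (T μ) *ᵥ x).re)
    (lam : Fin n → ℝ)
    (hlam_mem : ∀ k : Fin n, lam k ∈ Set.Ioo a b)
    (hlam : ∀ k : Fin n,
      IsLeast {r : ℝ | ∃ S : Submodule ℂ (Fin n → ℂ), Module.finrank ℂ S = (k : ℕ) + 1 ∧
        IsGreatest (ρ '' {x : Fin n → ℂ | x ∈ S ∧ x ≠ 0}) r} (lam k)) :
    ∃ v : Fin n → (Fin n → ℂ),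
      (∀ k : Fin n, v k ≠ 0 ∧ (T (lam k)) *ᵥ (v k) = 0) ∧
      LinearIndependent ℂ v ∧ Submodule.span ℂ (Set.range v) = ⊤ ∧
      (∀ j k : Fin n, j ≠ k →
        (lam j ≠ lam k → star (v k) ⬝ᵥ (T (lam k) - T (lam j)) *ᵥ (v j) = 0) ∧
        (lam j = lam k → star (v k) ⬝ᵥ (T' (lam k)) *ᵥ (v j) = 0)) := by
  classical
  have hIooIcc : Set.Ioo a b ⊆ Set.Icc a b := Set.Ioo_subset_Icc_self
  have hherm : ∀ μ ∈ Set.Ioo a b, (T μ).IsHermitian := fun μ hμ => hTherm μ (hIooIcc hμ)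
  -- basic sign facts
  have hlt : ∀ x : Fin n → ℂ, x ≠ 0 → ∀ μ ∈ Set.Ioo a b, μ < ρ x →
      (star x ⬝ᵥ T μ *ᵥ x).re < 0 := by
    intro x hx μ hμ h
    have := hpos x hx μ hμ (ne_of_lt h)
    nlinarith
  have hgt : ∀ x : Fin n → ℂ, x ≠ 0 → ∀ μ ∈ Set.Ioo a b, ρ x < μ →
      0 < (star x ⬝ᵥ T μ *ᵥ x).re := by
    intro x hx μ hμ h
    have := hpos x hx μ hμ (ne_of_gt h)
    nlinarith
  have hker : ∀ x : Fin n → ℂ, x ≠ 0 → ∀ μ ∈ Set.Ioo a b, T μ *ᵥ x = 0 → ρ x = μ := by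
    intro x hx μ hμ h
    exact (hρuniq x hx μ hμ (by rw [h, dotProduct_zero])).symm
  have hlt' : ∀ x : Fin n → ℂ, x ≠ 0 → ∀ μ ∈ Set.Ioo a b,
      (star x ⬝ᵥ T μ *ᵥ x).re < 0 → μ < ρ x := by
    intro x hx μ hμ h
    rcases lt_trichotomy μ (ρ x) with h' | h' | h'
    · exact h'
    · exfalso
      have : star x ⬝ᵥ T μ *ᵥ x = 0 := by rw [h']; exact hρroot x hx
      rw [this] at h
      simp at h
    · exact absurd (hgt x hx μ hμ h') (by linarith)
  have hgt' : ∀ x : Fin n → ℂ, x ≠ 0 → ∀ μ ∈ Set.Ioo a b,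
      0 < (star x ⬝ᵥ T μ *ᵥ x).re → ρ x < μ := by
    intro x hx μ hμ h
    rcases lt_trichotomy (ρ x) μ with h' | h' | h'
    · exact h'
    · exfalso
      have : star x ⬝ᵥ T μ *ᵥ x = 0 := by rw [← h']; exact hρroot x hx
      rw [this] at h
      simp at h
    · exact absurd (hlt x hx μ hμ h') (by linarith)
  have hscale : ∀ c : ℂ, c ≠ 0 → ∀ x : Fin n → ℂ, x ≠ 0 → ρ (c • x) = ρ x := by
    intro c hc x hx
    have hcx : c • x ≠ 0 := smul_ne_zero hc hx
    refine (hρuniq (c • x) hcx (ρ x) (hρmem x hx) ?_).symm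
    have hexp : star (c • x) ⬝ᵥ T (ρ x) *ᵥ (c • x)
        = (star c * c) * (star x ⬝ᵥ T (ρ x) *ᵥ x) := by
      rw [mulVec_smul, star_smul, smul_dotProduct, dotProduct_smul, smul_eq_mul, smul_eq_mul]
      ring
    rw [hexp, hρroot x hx, mul_zero]
  -- T' is Hermitian on (a,b)
  have hT'herm : ∀ μ ∈ Set.Ioo a b, (T' μ).IsHermitian := by
    intro μ hμ
    apply Matrix.ext
    intro i j
    rw [conjTranspose_apply]
    have h1 : HasDerivAt (fun t => T t i j) (T' μ i j) μ := hT'deriv μ hμ i j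
    have h2 : HasDerivAt (fun t => star (T t j i)) (star (T' μ j i)) μ :=
      (hT'deriv μ hμ j i).star
    have heq : (fun t => star (T t j i)) =ᶠ[nhds μ] (fun t => T t i j) := by
      filter_upwards [isOpen_Ioo.mem_nhds hμ] with t ht
      have h3 := hTherm t (hIooIcc ht)
      calc star (T t j i) = (T t)ᴴ i j := (conjTranspose_apply _ _ _).symm
        _ = T t i j := by rw [h3.eq]
    exact ((h2.congr_of_eventuallyEq heq.symm).unique h1).symm ▸
      ((h2.congr_of_eventuallyEq heq.symm).unique h1)
  -- the per-eigenvalue construction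
  have key : ∀ t : ℝ, (∃ k, lam k = t) → ∃ e : Fin n → (Fin n → ℂ),
      (∀ k, lam k = t → e k ≠ 0 ∧ T t *ᵥ e k = 0) ∧
      (∀ c : Fin n → ℂ,
        (∑ k ∈ Finset.univ.filter (fun k => lam k = t), c k • e k) = 0 →
        ∀ k, lam k = t → c k = 0) ∧
      (∀ j k, lam j = t → lam k = t → j ≠ k → star (e k) ⬝ᵥ T' t *ᵥ e j = 0) := by
    intro t ⟨k0, hk0⟩
    have htIoo : t ∈ Set.Ioo a b := hk0 ▸ hlam_mem k0
    have hA : (T t).IsHermitian := hherm t htIoo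
    set u : Fin n → (Fin n → ℂ) := fun i => ⇑(hA.eigenvectorBasis i) with hudef
    set eig : Fin n → ℝ := hA.eigenvalues with heigdef
    have horth : ∀ i j, star (u i) ⬝ᵥ u j = if i = j then 1 else 0 := by
      intro i j
      have := hA.eigenvectorBasis.orthonormal
      rw [orthonormal_iff_ite] at this
      have h := this i j
      rw [EuclideanSpace.inner_eq_star_dotProduct] at h
      rw [dotProduct_comm]
      simpa using h
    have heig : ∀ i, T t *ᵥ u i = ((eig i : ℝ) : ℂ) • u i := by
      intro i
      rw [hA.mulVec_eigenvectorBasis i]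
      funext k
      simp only [Pi.smul_apply, Complex.real_smul, smul_eq_mul]
      rfl
    set F : Finset (Fin n) := Finset.univ.filter (fun k => lam k = t) with hFdef
    have hk0F : k0 ∈ F := by simp [hFdef, hk0]
    have hFne : F.Nonempty := ⟨k0, hk0F⟩
    set k1 : Fin n := F.min' hFne with hk1def
    set k2 : Fin n := F.max' hFne with hk2def
    have hk1mem : k1 ∈ F := F.min'_mem hFne
    have hk2mem : k2 ∈ F := F.max'_mem hFne
    have hk1lam : lam k1 = t := by simpa [hFdef] using hk1mem
    have hk2lam : lam k2 = t := by simpa [hFdef] using hk2mem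
    set Pneg : Finset (Fin n) := Finset.univ.filter (fun i => eig i < 0) with hPnegdef
    set Ppos : Finset (Fin n) := Finset.univ.filter (fun i => 0 < eig i) with hPposdef
    set Pzer : Finset (Fin n) := Finset.univ.filter (fun i => eig i = 0) with hPzerdef
    have hrank : Module.finrank ℂ (Fin n → ℂ) = n := by
      rw [Module.finrank_fintype_fun_eq_card, Fintype.card_fin]
    -- Claim 1
    have claim1 : Pneg.card + ((k2 : ℕ) + 1) ≤ n := by
      by_contra hcon
      push_neg at hcon
      obtain ⟨S₀, hS₀rank, hS₀great⟩ := (hlam k2).1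
      set Vneg : Submodule ℂ (Fin n → ℂ) :=
        Submodule.span ℂ (Set.range (fun i : Pneg => u i)) with hVnegdef
      have hVnegrank : Module.finrank ℂ Vneg = Pneg.card := span_finrank horth Pneg
      have hsum := Submodule.finrank_sup_add_finrank_inf_eq S₀ Vneg
      have hsup : Module.finrank ℂ ↥(S₀ ⊔ Vneg) ≤ n := by
        have h := Submodule.finrank_le (S₀ ⊔ Vneg)
        rwa [hrank] at h
      have hinf : 0 < Module.finrank ℂ ↥(S₀ ⊓ Vneg) := by omega
      obtain ⟨x, hx0⟩ := Module.finrank_pos_iff_exists_ne_zero.mp hinf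
      have hx0' : (x : Fin n → ℂ) ≠ 0 := fun h => hx0 (Subtype.ext h)
      have hxV : (x : Fin n → ℂ) ∈ Vneg := x.2.2
      have hxS : (x : Fin n → ℂ) ∈ S₀ := x.2.1
      have hq : (star (x : Fin n → ℂ) ⬝ᵥ T t *ᵥ (x : Fin n → ℂ)).re < 0 :=
        quad_neg horth heig Pneg (fun i hi => by simpa [hPnegdef] using hi) hxV hx0'
      have hρx : t < ρ (x : Fin n → ℂ) := hlt' _ hx0' t htIoo hq
      have hub : ρ (x : Fin n → ℂ) ≤ lam k2 := hS₀great.2 ⟨x, ⟨hxS, hx0'⟩, rfl⟩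
      rw [hk2lam] at hub
      linarith
    -- Claim 2
    have claim2 : Ppos.card ≤ (k1 : ℕ) := by
      by_contra hcon
      push_neg at hcon
      obtain ⟨P', hP'sub, hP'card⟩ := Finset.exists_subset_card_eq (s := Ppos) (n := (k1 : ℕ) + 1) hcon
      set S : Submodule ℂ (Fin n → ℂ) :=
        Submodule.span ℂ (Set.range (fun i : P' => u i)) with hSdef
      have hSrank : Module.finrank ℂ S = (k1 : ℕ) + 1 := by
        rw [span_finrank horth P', hP'card]
      have hSpos : 0 < Module.finrank ℂ S := by omega
      obtain ⟨y, hy0⟩ := Module.finrank_pos_iff_exists_ne_zero.mp hSpos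
      have hy0' : (y : Fin n → ℂ) ≠ 0 := fun h => hy0 (Subtype.ext h)
      obtain ⟨x0, hx0S, hx00, hmax⟩ :=
        exists_max_on_subspace ρ hρcont hscale S y y.2 hy0'
      have hgreat : IsGreatest (ρ '' {x : Fin n → ℂ | x ∈ S ∧ x ≠ 0}) (ρ x0) := by
        constructor
        · exact ⟨x0, ⟨hx0S, hx00⟩, rfl⟩
        · rintro r ⟨x, ⟨hxS, hx0⟩, rfl⟩
          exact hmax x hxS hx0
      have hle : lam k1 ≤ ρ x0 := (hlam k1).2 ⟨S, hSrank, hgreat⟩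
      have hq : 0 < (star x0 ⬝ᵥ T t *ᵥ x0).re :=
        quad_pos horth heig P'
          (fun i hi => by simpa [hPposdef] using hP'sub hi) hx0S hx00
      have : ρ x0 < t := hgt' x0 hx00 t htIoo hq
      rw [hk1lam] at hle
      linarith
    -- trichotomy partition bound
    have hpart : n ≤ Pneg.card + Pzer.card + Ppos.card := by
      have hsub : (Finset.univ : Finset (Fin n)) ⊆ Pneg ∪ Pzer ∪ Ppos := by
        intro i _
        rcases lt_trichotomy (eig i) 0 with h | h | h
        · exact Finset.mem_union_left _ (Finset.mem_union_left _ (by simp [hPnegdef, h]))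
        · exact Finset.mem_union_left _ (Finset.mem_union_right _ (by simp [hPzerdef, h]))
        · exact Finset.mem_union_right _ (by simp [hPposdef, h])
      calc n = (Finset.univ : Finset (Fin n)).card := by simp
        _ ≤ (Pneg ∪ Pzer ∪ Ppos).card := Finset.card_le_card hsub
        _ ≤ (Pneg ∪ Pzer).card + Ppos.card := Finset.card_union_le _ _
        _ ≤ Pneg.card + Pzer.card + Ppos.card := by
            have := Finset.card_union_le Pneg Pzer
            omega
    -- F fits inside kernel dimension
    have hk1k2 : (k1 : ℕ) ≤ (k2 : ℕ) := F.min'_le k2 hk2mem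
    have hFIcc : F ⊆ Finset.Icc k1 k2 := by
      intro k hk
      rw [Finset.mem_Icc]
      exact ⟨F.min'_le k hk, F.le_max' k hk⟩
    have hFcard : F.card ≤ (k2 : ℕ) + 1 - (k1 : ℕ) := by
      have h1 := Finset.card_le_card hFIcc
      have h2 : (Finset.Icc k1 k2).card = (k2 : ℕ) + 1 - (k1 : ℕ) := Fin.card_Icc k1 k2
      omega
    have hFle : F.card ≤ Pzer.card := by omega
    -- kernel family indexed by Fin Pzer.card
    set d0 : ℕ := Pzer.card with hd0def
    set ufam : Fin d0 → (Fin n → ℂ) := fun z => u ((Pzer.equivFin.symm z) : Fin n)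
      with hufamdef
    have hufam_indep : LinearIndependent ℂ ufam := by
      have h1 : LinearIndependent ℂ (fun i : Pzer => u (i : Fin n)) :=
        (orth_indep horth).comp (Subtype.val) Subtype.val_injective
      exact h1.comp Pzer.equivFin.symm Pzer.equivFin.symm.injective
    obtain ⟨e, he_mem, he_indep, he_orth⟩ :=
      herm_diagonalize (T' t) (hT'herm t htIoo) ufam hufam_indep
    have hrange_eq : Set.range ufam = Set.range (fun i : Pzer => u (i : Fin n)) := by
      rw [hufamdef]
      exact Function.Surjective.range_comp Pzer.equivFin.symm.surjective
        (fun i : Pzer => u (i : Fin n))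
    have he_ker : ∀ z, T t *ᵥ e z = 0 := by
      intro z
      apply quad_ker heig Pzer (fun i hi => by simpa [hPzerdef] using hi)
      have := he_mem z
      rwa [hrange_eq] at this
    have he_ne : ∀ z, e z ≠ 0 := fun z => he_indep.ne_zero z
    -- embedding of F into Fin d0
    have hcard : Fintype.card ↥F ≤ Fintype.card (Fin d0) := by
      rw [Fintype.card_coe, Fintype.card_fin]
      exact hFle
    obtain ⟨emb⟩ := Function.Embedding.nonempty_of_card_le hcard
    refine ⟨fun k => if h : k ∈ F then e (emb ⟨k, h⟩) else 0, ?_, ?_, ?_⟩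
    · intro k hk
      have hkF : k ∈ F := by simp [hFdef, hk]
      simp only [dif_pos hkF]
      exact ⟨he_ne _, he_ker _⟩
    · intro c hc k hk
      have hkF : k ∈ F := by simp [hFdef, hk]
      have hsum : ∑ x ∈ F.attach, c (x : Fin n) • e (emb x) = 0 := by
        rw [← hc]
        rw [← Finset.sum_attach F (fun k' => c k' • if h : k' ∈ F then e (emb ⟨k', h⟩) else 0)]
        refine Finset.sum_congr rfl fun x _ => ?_
        rw [dif_pos x.2]
      have hindep2 : LinearIndependent ℂ (fun x : ↥F => e (emb x)) :=
        he_indep.comp emb emb.injective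
      have h0 : ∑ x : ↥F, c (x : Fin n) • e (emb x) = 0 := by
        rw [Finset.univ_eq_attach]
        exact hsum
      exact Fintype.linearIndependent_iff.mp hindep2 (fun x => c (x : Fin n)) h0 ⟨k, hkF⟩
    · intro j k hj hk hjk
      have hjF : j ∈ F := by simp [hFdef, hj]
      have hkF : k ∈ F := by simp [hFdef, hk]
      simp only [dif_pos hjF, dif_pos hkF]
      refine he_orth (emb ⟨j, hjF⟩) (emb ⟨k, hkF⟩) (fun h => hjk ?_)
      have h2 := emb.injective h
      exact congrArg Subtype.val h2
  -- global assembly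
  choose Efun hE1 hE2 hE3 using key
  set Etot : ℝ → Fin n → (Fin n → ℂ) := fun t =>
    if h : ∃ k, lam k = t then Efun t h else 0 with hEdef
  have hEt : ∀ t (h : ∃ k, lam k = t), Etot t = Efun t h := by
    intro t h
    simp only [hEdef]
    rw [dif_pos h]
  haveI : Nonempty (Fin n) := ⟨⟨0, by omega⟩⟩
  have hrank' : Module.finrank ℂ (Fin n → ℂ) = n := by
    rw [Module.finrank_fintype_fun_eq_card, Fintype.card_fin]
  have hv1 : ∀ k, Etot (lam k) k ≠ 0 ∧ T (lam k) *ᵥ Etot (lam k) k = 0 := by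
    intro k
    rw [hEt (lam k) ⟨k, rfl⟩]
    exact hE1 (lam k) ⟨k, rfl⟩ k rfl
  have hindep : LinearIndependent ℂ (fun k => Etot (lam k) k) := by
    rw [Fintype.linearIndependent_iff]
    intro c hc
    set Fval : Finset ℝ := Finset.univ.image lam with hFvaldef
    set w : ℝ → (Fin n → ℂ) :=
      fun t => ∑ k ∈ Finset.univ.filter (fun k => lam k = t), c k • Etot (lam k) k with hwdef
    have hFIoo : ∀ t ∈ Fval, t ∈ Set.Ioo a b := by
      intro t ht
      obtain ⟨k, -, hk⟩ := Finset.mem_image.mp ht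
      exact hk ▸ hlam_mem k
    have hsumfib : ∑ t ∈ Fval, w t = 0 := by
      rw [hwdef]
      rw [Finset.sum_fiberwise_of_maps_to (fun k _ => Finset.mem_image_of_mem lam
        (Finset.mem_univ k)) (fun k => c k • Etot (lam k) k)]
      exact hc
    have hwker : ∀ t ∈ Fval, T t *ᵥ w t = 0 := by
      intro t ht
      rw [hwdef]
      rw [mv_sum]
      refine Finset.sum_eq_zero fun k hk => ?_
      have hkt : lam k = t := (Finset.mem_filter.mp hk).2
      rw [mulVec_smul, hkt, (hkt ▸ (hv1 k).2 : T t *ᵥ Etot t k = 0), smul_zero]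
    have hw0 : ∀ t ∈ Fval, w t = 0 := by
      by_contra hcon
      push_neg at hcon
      obtain ⟨t1, ht1F, ht1⟩ := hcon
      set G : Finset ℝ := Fval.filter (fun t => w t ≠ 0) with hGdef
      have hGne : G.Nonempty := ⟨t1, Finset.mem_filter.mpr ⟨ht1F, ht1⟩⟩
      set tm : ℝ := G.max' hGne with htmdef
      have htmG : tm ∈ G := G.max'_mem hGne
      have htmFval : tm ∈ Fval := (Finset.mem_filter.mp htmG).1
      have hwtm : w tm ≠ 0 := (Finset.mem_filter.mp htmG).2
      have hGsum : ∑ t ∈ G, w t = 0 := by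
        have hsplit := Finset.sum_filter_add_sum_filter_not Fval (fun t => w t ≠ 0) w
        have hzero : ∑ t ∈ Fval.filter (fun t => ¬ w t ≠ 0), w t = 0 :=
          Finset.sum_eq_zero fun t ht => not_not.mp (Finset.mem_filter.mp ht).2
        rw [hzero, add_zero] at hsplit
        rw [hGdef, hsplit, hsumfib]
      have hsplit2 : w tm + ∑ t ∈ G.erase tm, w t = 0 := by
        rw [Finset.add_sum_erase G w htmG, hGsum]
      have hs'eq : ∑ t ∈ G.erase tm, w t = -(w tm) :=
        neg_eq_of_add_eq_zero_right hsplit2 |>.symm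
      have hs'ne : ∑ t ∈ G.erase tm, w t ≠ 0 := by
        rw [hs'eq]
        exact neg_ne_zero.mpr hwtm
      obtain ⟨t0, ht0F', ht0⟩ := chain T ρ a b hherm hlt hgt
        (fun x hx _ => hρroot x hx) hρmem hker w (G.erase tm)
        (fun t ht => hFIoo t (Finset.mem_filter.mp (Finset.mem_of_mem_erase ht)).1)
        (fun t ht => hwker t (Finset.mem_filter.mp (Finset.mem_of_mem_erase ht)).1)
        hs'ne
      have ht0lt : t0 < tm :=
        lt_of_le_of_ne (G.le_max' t0 (Finset.mem_of_mem_erase ht0F'))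
          (Finset.ne_of_mem_erase ht0F')
      have hρs' : ρ (∑ t ∈ G.erase tm, w t) = tm := by
        rw [hs'eq, show -(w tm) = (-1 : ℂ) • w tm by rw [neg_one_smul]]
        rw [hscale (-1) (by norm_num) (w tm) hwtm]
        exact hker (w tm) hwtm tm (hFIoo tm htmFval) (hwker tm htmFval)
      rw [hρs'] at ht0
      linarith
    intro k
    have hky : lam k ∈ Fval := Finset.mem_image_of_mem lam (Finset.mem_univ k)
    have h0 := hw0 (lam k) hky
    rw [hwdef] at h0
    have h0' : ∑ k' ∈ Finset.univ.filter (fun k' => lam k' = lam k),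
        c k' • Efun (lam k) ⟨k, rfl⟩ k' = 0 := by
      rw [← h0]
      refine Finset.sum_congr rfl fun k' hk' => ?_
      have hk't : lam k' = lam k := (Finset.mem_filter.mp hk').2
      rw [hk't, hEt (lam k) ⟨k, rfl⟩]
    exact hE2 (lam k) ⟨k, rfl⟩ c h0' k rfl
  refine ⟨fun k => Etot (lam k) k, hv1, hindep, ?_, ?_⟩
  · exact hindep.span_eq_top_of_card_eq_finrank (by rw [Fintype.card_fin, hrank'])
  · intro j k hjk
    beta_reduce
    constructor
    · intro _
      have h1 : star (Etot (lam k) k) ⬝ᵥ T (lam k) *ᵥ Etot (lam j) j = 0 := by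
        rw [dp_conj_herm (hherm (lam k) (hlam_mem k))]
        rw [(hv1 k).2, dotProduct_zero, star_zero]
      have h2 : star (Etot (lam k) k) ⬝ᵥ T (lam j) *ᵥ Etot (lam j) j = 0 := by
        rw [(hv1 j).2, dotProduct_zero]
      rw [Matrix.sub_mulVec, dotProduct_sub, h1, h2, sub_zero]
    · intro heq
      rw [show Etot (lam j) j = Etot (lam k) j by rw [heq]]
      rw [hEt (lam k) ⟨k, rfl⟩]
      exact hE3 (lam k) ⟨k, rfl⟩ j k heq rfl hjk
end
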